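/- arXiv:2508.06043 — 4 statements merged into one kernel-verified Lean document; each statement's English description precedes it below -/
import Mathlib

section
/- Let t ≥ r ≥ 3 be integers, let a ≥ 2(r-1) and b ≥ (a-1)! + 1. Then for every ε > 0 there exists N such that for all n ≥ N, ex(n, K_r, (t+1)K_{a,b}) ≤ Σ_{s=0}^{r} C(t, r-s)·(1/s! + ε)·(b-1)^{s(s-1)/(2a)}·(n-t)^{s - s(s-1)/(2a)}. -/
open Finset
open scoped Classical

/-- `F.ContainsCopy G` means `G` contains a subgraph isomorphic to `F`,
i.e. there is an injective graph homomorphism from `F` to `G`. -/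
def SimpleGraph.ContainsCopy {α β : Type*} (F : SimpleGraph α) (G : SimpleGraph β) : Prop :=
  ∃ f : F →g G, Function.Injective f

/-- `F.FreeIn G` means `G` is `F`-free. -/
def SimpleGraph.FreeIn {α β : Type*} (F : SimpleGraph α) (G : SimpleGraph β) : Prop :=
  ¬ F.ContainsCopy G

/-- `cliqueCount G r` is the number of `r`-cliques of `G` (copies of `K_r`). -/
noncomputable def cliqueCount {β : Type*} (G : SimpleGraph β) (r : ℕ) : ℕ :=
  Nat.card {s : Finset β // G.IsNClique r s}

/-- `cliqueCountOn G r v` is the number of `r`-cliques of `G` containing the vertex `v`. -/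
noncomputable def cliqueCountOn {β : Type*} (G : SimpleGraph β) (r : ℕ) (v : β) : ℕ :=
  Nat.card {s : Finset β // G.IsNClique r s ∧ v ∈ s}

/-- The generalized Turán number `ex(n, K_r, F)`: the maximum number of `r`-cliques
in an `F`-free graph on `n` vertices. -/
noncomputable def exTuran {α : Type*} (n r : ℕ) (F : SimpleGraph α) : ℕ :=
  sSup {m : ℕ | ∃ G : SimpleGraph (Fin n), F.FreeIn G ∧ m = cliqueCount G r}

/-- `multiCopies m F` is the vertex-disjoint union of `m` copies of `F`. -/
def multiCopies {α : Type*} (m : ℕ) (F : SimpleGraph α) : SimpleGraph (Fin m × α) where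
  Adj x y := x.1 = y.1 ∧ F.Adj x.2 y.2
  symm := ⟨fun _ _ h => ⟨h.1.symm, h.2.symm⟩⟩
  loopless := ⟨fun x h => F.irrefl h.2⟩

/-- The join `G ∨ H` of two vertex-disjoint graphs: their disjoint union together with
all edges between them. -/
def joinG {α β : Type*} (G : SimpleGraph α) (H : SimpleGraph β) : SimpleGraph (α ⊕ β) where
  Adj x y := match x, y with
    | Sum.inl u, Sum.inl v => G.Adj u v
    | Sum.inr u, Sum.inr v => H.Adj u v
    | _, _ => True
  symm := ⟨by rintro (u|u) (v|v) h <;> first | exact h.symm | trivial⟩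
  loopless := ⟨by rintro (u|u) h <;> exact absurd h (by simp)⟩


noncomputable def cnt {n : ℕ} (G : SimpleGraph (Fin n)) (s : ℕ) (X : Finset (Fin n)) : ℕ :=
  ((X.powersetCard s).filter (fun (S : Finset (Fin n)) => G.IsClique (S : Set (Fin n)))).card

def bfr {n : ℕ} (G : SimpleGraph (Fin n)) (a b : ℕ) (X : Finset (Fin n)) : Prop :=
  ∀ A B : Finset (Fin n), A ⊆ X → B ⊆ X → Disjoint A B → A.card = a → B.card = b →
    ¬ (∀ u ∈ A, ∀ v ∈ B, G.Adj u v)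

lemma cnt_le_choose {n : ℕ} (G : SimpleGraph (Fin n)) (s : ℕ) (X : Finset (Fin n)) :
    cnt G s X ≤ (X.card).choose s := by
  classical
  calc cnt G s X ≤ (X.powersetCard s).card := Finset.card_filter_le _ _
  _ = (X.card).choose s := Finset.card_powersetCard s X

lemma cnt_zero {n : ℕ} (G : SimpleGraph (Fin n)) (X : Finset (Fin n)) : cnt G 0 X = 1 := by
  classical
  unfold cnt
  rw [Finset.powersetCard_zero]
  rw [Finset.filter_singleton]
  simp [SimpleGraph.IsClique]

lemma cnt_one {n : ℕ} (G : SimpleGraph (Fin n)) (X : Finset (Fin n)) : cnt G 1 X = X.card := by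
  classical
  unfold cnt
  rw [Finset.filter_true_of_mem, Finset.card_powersetCard, Nat.choose_one_right]
  intro S hS
  rw [Finset.mem_powersetCard] at hS
  obtain ⟨x, hx⟩ := Finset.card_eq_one.mp hS.2
  subst hx
  simp [SimpleGraph.isClique_singleton]

lemma cnt_fiber {n : ℕ} (G : SimpleGraph (Fin n)) (s : ℕ) (X : Finset (Fin n)) {v : Fin n}
    (hv : v ∈ X) :
    (((X.powersetCard (s+1)).filter
        (fun (S : Finset (Fin n)) => G.IsClique (S : Set (Fin n)))).filter
      (fun S => v ∈ S)).card = cnt G s (X.filter (fun u => G.Adj v u)) := by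
  classical
  unfold cnt
  refine Finset.card_bij' (fun S _ => S.erase v) (fun S' _ => insert v S') ?hi ?hj ?left ?right
  case hi =>
    intro S hS
    simp only [Finset.mem_filter, Finset.mem_powersetCard] at hS ⊢
    obtain ⟨⟨⟨hSX, hcard⟩, hclq⟩, hvS⟩ := hS
    refine ⟨⟨?_, ?_⟩, ?_⟩
    · intro u hu
      rw [Finset.mem_erase] at hu
      rw [Finset.mem_filter]
      refine ⟨hSX hu.2, hclq (by simpa using hvS) (by simpa using hu.2) (Ne.symm hu.1)⟩
    · rw [Finset.card_erase_of_mem hvS, hcard]; rfl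
    · exact hclq.subset (Finset.coe_subset.mpr (Finset.erase_subset v S))
  case hj =>
    intro S' hS'
    simp only [Finset.mem_filter, Finset.mem_powersetCard] at hS' ⊢
    obtain ⟨⟨hsub, hcard⟩, hclq⟩ := hS'
    have hvS' : v ∉ S' := fun hmem => G.irrefl (Finset.mem_filter.mp (hsub hmem)).2
    refine ⟨⟨⟨?_, ?_⟩, ?_⟩, Finset.mem_insert_self v S'⟩
    · intro u hu
      rcases Finset.mem_insert.mp hu with rfl | hu
      · exact hv
      · exact (Finset.mem_filter.mp (hsub hu)).1
    · rw [Finset.card_insert_of_notMem hvS', hcard]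
    · rw [Finset.coe_insert]
      exact hclq.insert (fun u hu _ => (Finset.mem_filter.mp (hsub (by simpa using hu))).2)
  case left =>
    intro S hS
    simp only [Finset.mem_filter] at hS
    exact Finset.insert_erase hS.2
  case right =>
    intro S' hS'
    simp only [Finset.mem_filter, Finset.mem_powersetCard] at hS'
    have hvS' : v ∉ S' := fun hmem => G.irrefl (Finset.mem_filter.mp (hS'.1.1 hmem)).2
    exact Finset.erase_insert hvS'

lemma cnt_succ_mul {n : ℕ} (G : SimpleGraph (Fin n)) (s : ℕ) (X : Finset (Fin n)) :
    (s + 1) * cnt G (s+1) X = ∑ v ∈ X, cnt G s (X.filter (fun u => G.Adj v u)) := by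
  classical
  set 𝒮 := (X.powersetCard (s+1)).filter
      (fun (S : Finset (Fin n)) => G.IsClique (S : Set (Fin n))) with h𝒮
  have h1 : ∀ S ∈ 𝒮, S.card = s + 1 := by
    intro S hS
    exact (Finset.mem_powersetCard.mp (Finset.mem_filter.mp hS).1).2
  have hsub : ∀ S ∈ 𝒮, S ⊆ X := by
    intro S hS
    exact (Finset.mem_powersetCard.mp (Finset.mem_filter.mp hS).1).1
  calc (s + 1) * cnt G (s+1) X = ∑ S ∈ 𝒮, S.card := by
        rw [Finset.sum_congr rfl h1, Finset.sum_const, smul_eq_mul, mul_comm]; rfl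
    _ = ∑ S ∈ 𝒮, (X.filter (fun v => v ∈ S)).card := by
        refine Finset.sum_congr rfl fun S hS => ?_
        rw [Finset.filter_mem_eq_inter, Finset.inter_eq_right.mpr (hsub S hS)]
    _ = ∑ v ∈ X, (𝒮.filter (fun S => v ∈ S)).card := by
        simp_rw [Finset.card_filter]
        rw [Finset.sum_comm]
    _ = ∑ v ∈ X, cnt G s (X.filter (fun u => G.Adj v u)) :=
        Finset.sum_congr rfl fun v hv => cnt_fiber G s X hv

lemma bfr_nbhd {n : ℕ} {G : SimpleGraph (Fin n)} {a b : ℕ} {X : Finset (Fin n)}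
    (h : bfr G (a+1) b X) {v : Fin n} (hv : v ∈ X) :
    bfr G a b (X.filter (fun u => G.Adj v u)) := by
  intro A B hA hB hdisj hcA hcB hadj
  have hvA : v ∉ A := fun hvA => G.irrefl (Finset.mem_filter.mp (hA hvA)).2
  have hvB : v ∉ B := fun hvB => G.irrefl (Finset.mem_filter.mp (hB hvB)).2
  refine h (insert v A) B ?_ (hB.trans (Finset.filter_subset _ _))
    (Finset.disjoint_insert_left.mpr ⟨hvB, hdisj⟩) ?_ hcB ?_
  · intro u hu
    rcases Finset.mem_insert.mp hu with rfl | hu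
    · exact hv
    · exact (Finset.mem_filter.mp (hA hu)).1
  · rw [Finset.card_insert_of_notMem hvA, hcA]
  · intro u hu w hw
    rcases Finset.mem_insert.mp hu with rfl | hu
    · exact (Finset.mem_filter.mp (hB hw)).2
    · exact hadj u hu w hw

lemma kst {n : ℕ} {G : SimpleGraph (Fin n)} {a b : ℕ} {X : Finset (Fin n)} (hb : 1 ≤ b)
    (h : bfr G a b X) :
    ∑ v ∈ X, ((X.filter (fun u => G.Adj v u)).card).choose a
      ≤ (b - 1) * (X.card).choose a := by
  classical
  have key : ∀ v, ((X.filter (fun u => G.Adj v u)).card).choose a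
      = ((X.powersetCard a).filter (fun A => ∀ u ∈ A, G.Adj v u)).card := by
    intro v
    rw [← Finset.card_powersetCard]
    congr 1
    ext A
    simp only [Finset.mem_powersetCard, Finset.mem_filter]
    constructor
    · rintro ⟨hsub, hcard⟩
      exact ⟨⟨fun u hu => (Finset.mem_filter.mp (hsub hu)).1, hcard⟩,
        fun u hu => (Finset.mem_filter.mp (hsub hu)).2⟩
    · rintro ⟨⟨hsub, hcard⟩, hadj⟩
      exact ⟨fun u hu => Finset.mem_filter.mpr ⟨hsub hu, hadj u hu⟩, hcard⟩
  simp_rw [key]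
  have swap : ∑ v ∈ X, ((X.powersetCard a).filter (fun A => ∀ u ∈ A, G.Adj v u)).card
      = ∑ A ∈ X.powersetCard a, (X.filter (fun v => ∀ u ∈ A, G.Adj v u)).card := by
    simp_rw [Finset.card_filter]
    rw [Finset.sum_comm]
  rw [swap]
  have hper : ∀ A ∈ X.powersetCard a, (X.filter (fun v => ∀ u ∈ A, G.Adj v u)).card ≤ b - 1 := by
    intro A hA
    by_contra hcon
    push_neg at hcon
    have hbge : b ≤ (X.filter (fun v => ∀ u ∈ A, G.Adj v u)).card := by omega
    obtain ⟨B, hBsub, hBcard⟩ := Finset.exists_subset_card_eq hbge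
    rw [Finset.mem_powersetCard] at hA
    refine h A B hA.1 (hBsub.trans (Finset.filter_subset _ _)) ?_ hA.2 hBcard ?_
    · rw [Finset.disjoint_right]
      intro u huB huA
      exact G.irrefl ((Finset.mem_filter.mp (hBsub huB)).2 u huA)
    · intro u hu w hw
      exact ((Finset.mem_filter.mp (hBsub hw)).2 u hu).symm
  calc ∑ A ∈ X.powersetCard a, (X.filter (fun v => ∀ u ∈ A, G.Adj v u)).card
      ≤ ∑ A ∈ X.powersetCard a, (b-1) := Finset.sum_le_sum hper
    _ = (X.card).choose a * (b-1) := by rw [Finset.sum_const, smul_eq_mul, Finset.card_powersetCard]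
    _ = (b-1) * (X.card).choose a := mul_comm _ _


lemma desc_lb (d a : ℕ) : (d - a)^a ≤ d.descFactorial a := by
  rw [Nat.descFactorial_eq_prod_range]
  calc (d-a)^a = ∏ _i ∈ Finset.range a, (d - a) := by rw [Finset.prod_const, Finset.card_range]
    _ ≤ ∏ i ∈ Finset.range a, (d - i) := by
        apply Finset.prod_le_prod'
        intro i hi
        exact Nat.sub_le_sub_left (le_of_lt (Finset.mem_range.mp hi)) d

lemma pow_sub_pow_le {x y : ℝ} (a : ℕ) (hy : 0 ≤ y) (hxy : y ≤ x) :
    x^a - y^a ≤ (x - y) * a * x^(a-1) := by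
  rcases Nat.eq_zero_or_pos a with rfl | ha
  · simp
  have hx : 0 ≤ x := hy.trans hxy
  have hgeom : (∑ i ∈ Finset.range a, x ^ i * y ^ (a - 1 - i)) * (x - y) = x ^ a - y ^ a :=
    geom_sum₂_mul x y a
  rw [← hgeom]
  have hbound : (∑ i ∈ Finset.range a, x ^ i * y ^ (a - 1 - i)) ≤ (a:ℝ) * x^(a-1) := by
    calc (∑ i ∈ Finset.range a, x ^ i * y ^ (a - 1 - i))
        ≤ ∑ _i ∈ Finset.range a, x^(a-1) := by
          apply Finset.sum_le_sum
          intro i hi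
          have hi' := Finset.mem_range.mp hi
          calc x ^ i * y ^ (a - 1 - i) ≤ x ^ i * x ^ (a - 1 - i) := by
                apply mul_le_mul_of_nonneg_left (pow_le_pow_left₀ hy hxy _) (pow_nonneg hx _)
            _ = x ^ (a-1) := by rw [← pow_add]; congr 1; omega
      _ = (a:ℝ) * x^(a-1) := by rw [Finset.sum_const, Finset.card_range, nsmul_eq_mul]
  calc (∑ i ∈ Finset.range a, x ^ i * y ^ (a - 1 - i)) * (x - y)
      ≤ ((a:ℝ) * x^(a-1)) * (x - y) := by
        apply mul_le_mul_of_nonneg_right hbound (by linarith)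
    _ = (x - y) * a * x^(a-1) := by ring

lemma threshold_exists (a : ℕ) (ha : 1 ≤ a) {η : ℝ} (hη : 0 < η) :
    ∃ T : ℕ, ∀ d : ℕ, T ≤ d → (d:ℝ)^a ≤ (1+η) * (((d-a : ℕ)):ℝ)^a := by
  refine ⟨max (2*a) (⌈(2^a * (a:ℝ)^2)/η⌉₊ + 1), fun d hd => ?_⟩
  have hd2a : 2*a ≤ d := le_trans (le_max_left _ _) hd
  have hdbig : (2^a * (a:ℝ)^2)/η ≤ (d:ℝ) := by
    have h1 : (⌈(2^a * (a:ℝ)^2)/η⌉₊ : ℝ) ≤ (d:ℝ) := by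
      exact_mod_cast Nat.le_of_succ_le (le_trans (le_max_right _ _) hd)
    exact le_trans (Nat.le_ceil _) h1
  have hcast : (((d-a : ℕ)):ℝ) = (d:ℝ) - (a:ℝ) := by
    rw [Nat.cast_sub (by omega)]
  rw [hcast]
  have hax : (a:ℝ) ≤ (d:ℝ) := by exact_mod_cast (by omega : a ≤ d)
  have hy0 : (0:ℝ) ≤ (d:ℝ) - a := by linarith
  have hyx : (d:ℝ) - a ≤ (d:ℝ) := by
    have : (0:ℝ) ≤ (a:ℝ) := Nat.cast_nonneg a
    linarith
  have hx0 : (0:ℝ) < (d:ℝ) := by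
    have : (1:ℕ) ≤ d := by omega
    exact_mod_cast Nat.lt_of_lt_of_le Nat.zero_lt_one this
  have hyhalf : (d:ℝ)/2 ≤ (d:ℝ) - a := by
    have h2 : ((2*a : ℕ):ℝ) ≤ (d:ℝ) := by exact_mod_cast hd2a
    push_cast at h2
    linarith
  have key : (d:ℝ)^a - ((d:ℝ) - a)^a ≤ ((d:ℝ) - ((d:ℝ)-a)) * a * (d:ℝ)^(a-1) :=
    pow_sub_pow_le a hy0 hyx
  have key2 : (d:ℝ)^a - ((d:ℝ) - a)^a ≤ (a:ℝ)^2 * (d:ℝ)^(a-1) := by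
    have h3 : ((d:ℝ) - ((d:ℝ)-a)) * a * (d:ℝ)^(a-1) = (a:ℝ)^2 * (d:ℝ)^(a-1) := by ring
    linarith [key, h3.ge, h3.le]
  have h2a : (0:ℝ) < 2^a := by positivity
  have step1 : (a:ℝ)^2 * (d:ℝ)^(a-1) ≤ η * ((d:ℝ)/2)^a := by
    have hxbig : (a:ℝ)^2 ≤ η * (d:ℝ) / 2^a := by
      rw [div_le_iff₀ hη] at hdbig
      rw [le_div_iff₀ h2a]
      nlinarith
    have hxa : (d:ℝ)^a = (d:ℝ) * (d:ℝ)^(a-1) := by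
      conv_lhs => rw [show a = 1 + (a-1) by omega]
      rw [pow_add, pow_one]
    rw [div_pow, hxa]
    calc (a:ℝ)^2 * (d:ℝ)^(a-1) ≤ (η * (d:ℝ) / 2^a) * (d:ℝ)^(a-1) :=
          mul_le_mul_of_nonneg_right hxbig (pow_nonneg (le_of_lt hx0) _)
      _ = η * ((d:ℝ) * (d:ℝ)^(a-1) / 2^a) := by ring
  have step2 : η * ((d:ℝ)/2)^a ≤ η * ((d:ℝ)-a)^a := by
    apply mul_le_mul_of_nonneg_left (pow_le_pow_left₀ (by positivity) hyhalf a) (le_of_lt hη)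
  nlinarith [key2, step1, step2]

lemma sum_rpow_le {V : Type*} (X : Finset V) (f : V → ℝ) (hf : ∀ v ∈ X, 0 ≤ f v)
    {α A : ℝ} (h0 : 0 < α) (hA : α ≤ A) :
    ∑ v ∈ X, f v ^ α ≤ (X.card:ℝ)^(1-α/A) * (∑ v ∈ X, f v ^ A)^(α/A) := by
  have hA0 : 0 < A := lt_of_lt_of_le h0 hA
  have hq : 0 < α / A := div_pos h0 hA0
  rcases Finset.eq_empty_or_nonempty X with rfl | hne
  · simp [Real.zero_rpow (ne_of_gt hq)]
  have hm : (0:ℝ) < (X.card:ℝ) := by exact_mod_cast Finset.card_pos.mpr hne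
  set m := (X.card:ℝ) with hmdef
  have hp : (1:ℝ) ≤ A / α := (one_le_div h0).mpr hA
  have ham := Real.arith_mean_le_rpow_mean X (fun _ => m⁻¹) (fun v => f v ^ α)
    (fun i _ => by positivity) (by rw [Finset.sum_const, nsmul_eq_mul]; field_simp; rfl)
    (fun i hi => Real.rpow_nonneg (hf i hi) α) hp
  have hzp : ∀ v ∈ X, (f v ^ α) ^ (A/α) = f v ^ A := by
    intro v hv
    rw [← Real.rpow_mul (hf v hv)]
    congr 1
    field_simp
  have ham2 : m⁻¹ * ∑ v ∈ X, f v ^ α ≤ (m⁻¹ * ∑ v ∈ X, f v ^ A) ^ (α/A) := by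
    have h1p : 1 / (A/α) = α / A := one_div_div A α
    calc m⁻¹ * ∑ v ∈ X, f v ^ α = ∑ i ∈ X, m⁻¹ * f i ^ α := by rw [Finset.mul_sum]
      _ ≤ (∑ i ∈ X, m⁻¹ * (f i ^ α) ^ (A/α)) ^ (1/(A/α)) := ham
      _ = (m⁻¹ * ∑ v ∈ X, f v ^ A) ^ (α/A) := by
          rw [h1p]
          congr 1
          rw [Finset.mul_sum]
          exact Finset.sum_congr rfl (fun v hv => by rw [hzp v hv])
  have hsum : 0 ≤ ∑ v ∈ X, f v ^ A :=
    Finset.sum_nonneg fun v hv => Real.rpow_nonneg (hf v hv) A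
  have hmul : (m⁻¹ * ∑ v ∈ X, f v ^ A)^(α/A) = m⁻¹^(α/A) * (∑ v ∈ X, f v ^ A)^(α/A) :=
    Real.mul_rpow (by positivity) hsum
  rw [hmul] at ham2
  have hfin := mul_le_mul_of_nonneg_left ham2 (le_of_lt hm)
  calc ∑ v ∈ X, f v ^ α = m * (m⁻¹ * ∑ v ∈ X, f v ^ α) := by field_simp
    _ ≤ m * (m⁻¹^(α/A) * (∑ v ∈ X, f v ^ A)^(α/A)) := hfin
    _ = (m * m⁻¹^(α/A)) * (∑ v ∈ X, f v ^ A)^(α/A) := by ring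
    _ = m^(1-α/A) * (∑ v ∈ X, f v ^ A)^(α/A) := by
        congr 1
        rw [Real.inv_rpow (le_of_lt hm), Real.rpow_sub hm, Real.rpow_one]
        field_simp

lemma power_sum {n : ℕ} {G : SimpleGraph (Fin n)} {a b : ℕ} {X : Finset (Fin n)}
    (hb : 1 ≤ b) (h : bfr G a b X)
    {η : ℝ} (hη : 0 < η) (T : ℕ)
    (hT : ∀ d : ℕ, T ≤ d → (d:ℝ)^a ≤ (1+η) * (((d-a : ℕ)):ℝ)^a) :
    ∑ v ∈ X, (((X.filter (fun u => G.Adj v u)).card : ℝ))^(a:ℕ)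
      ≤ (1+η) * ((b:ℝ)-1) * (X.card:ℝ)^(a:ℕ) + (T:ℝ)^(a:ℕ) * (X.card:ℝ) := by
  set d : Fin n → ℕ := fun v => (X.filter (fun u => G.Adj v u)).card with hd
  have hsplit := Finset.sum_filter_add_sum_filter_not X (fun v => T ≤ d v)
    (fun v => ((d v : ℝ))^(a:ℕ))
  rw [← hsplit]
  have hsecond : ∑ v ∈ X.filter (fun v => ¬ T ≤ d v), ((d v : ℝ))^(a:ℕ)
      ≤ (T:ℝ)^(a:ℕ) * (X.card:ℝ) := by
    calc ∑ v ∈ X.filter (fun v => ¬ T ≤ d v), ((d v : ℝ))^(a:ℕ)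
        ≤ ∑ _v ∈ X.filter (fun v => ¬ T ≤ d v), (T:ℝ)^(a:ℕ) := by
          apply Finset.sum_le_sum
          intro v hv
          have hlt : d v ≤ T := le_of_lt (by simpa using (Finset.mem_filter.mp hv).2)
          exact pow_le_pow_left₀ (Nat.cast_nonneg _) (by exact_mod_cast hlt) a
      _ = ((X.filter (fun v => ¬ T ≤ d v)).card : ℝ) * (T:ℝ)^(a:ℕ) := by
          rw [Finset.sum_const, nsmul_eq_mul]
      _ ≤ (X.card:ℝ) * (T:ℝ)^(a:ℕ) := by
          apply mul_le_mul_of_nonneg_right _ (by positivity)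
          exact_mod_cast Finset.card_filter_le X _
      _ = (T:ℝ)^(a:ℕ) * (X.card:ℝ) := mul_comm _ _
  have hdesc : ∑ v ∈ X, ((d v).descFactorial a : ℝ) ≤ ((b:ℝ)-1) * (X.card:ℝ)^(a:ℕ) := by
    have hnat : ∑ v ∈ X, (d v).descFactorial a ≤ (b-1) * (X.card)^a := by
      calc ∑ v ∈ X, (d v).descFactorial a = ∑ v ∈ X, a.factorial * (d v).choose a := by
            refine Finset.sum_congr rfl fun v hv => Nat.descFactorial_eq_factorial_mul_choose _ _
        _ = a.factorial * ∑ v ∈ X, (d v).choose a := by rw [Finset.mul_sum]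
        _ ≤ a.factorial * ((b-1) * (X.card).choose a) :=
            Nat.mul_le_mul_left _ (kst hb h)
        _ = (b-1) * (a.factorial * (X.card).choose a) := by ring
        _ = (b-1) * (X.card).descFactorial a := by
            rw [Nat.descFactorial_eq_factorial_mul_choose]
        _ ≤ (b-1) * (X.card)^a := Nat.mul_le_mul_left _ (Nat.descFactorial_le_pow _ _)
    calc ∑ v ∈ X, ((d v).descFactorial a : ℝ) = ((∑ v ∈ X, (d v).descFactorial a : ℕ) : ℝ) := by
          push_cast; ring
      _ ≤ (((b-1) * (X.card)^a : ℕ) : ℝ) := by exact_mod_cast hnat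
      _ = ((b:ℝ)-1) * (X.card:ℝ)^(a:ℕ) := by
          push_cast [Nat.cast_sub hb]
          ring
  have hfirst : ∑ v ∈ X.filter (fun v => T ≤ d v), ((d v : ℝ))^(a:ℕ)
      ≤ (1+η) * ((b:ℝ)-1) * (X.card:ℝ)^(a:ℕ) := by
    calc ∑ v ∈ X.filter (fun v => T ≤ d v), ((d v : ℝ))^(a:ℕ)
        ≤ ∑ v ∈ X.filter (fun v => T ≤ d v), (1+η) * ((d v).descFactorial a : ℝ) := by
          apply Finset.sum_le_sum
          intro v hv
          have hTv : T ≤ d v := (Finset.mem_filter.mp hv).2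
          calc ((d v : ℝ))^(a:ℕ) ≤ (1+η) * (((d v - a : ℕ)):ℝ)^(a:ℕ) := hT _ hTv
            _ ≤ (1+η) * ((d v).descFactorial a : ℝ) := by
                apply mul_le_mul_of_nonneg_left _ (by linarith)
                have := desc_lb (d v) a
                calc (((d v - a : ℕ)):ℝ)^(a:ℕ) = (((d v - a)^a : ℕ) : ℝ) := by push_cast; ring
                  _ ≤ ((d v).descFactorial a : ℝ) := by exact_mod_cast this
      _ = (1+η) * ∑ v ∈ X.filter (fun v => T ≤ d v), ((d v).descFactorial a : ℝ) := by
          rw [Finset.mul_sum]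
      _ ≤ (1+η) * ∑ v ∈ X, ((d v).descFactorial a : ℝ) := by
          apply mul_le_mul_of_nonneg_left _ (by linarith)
          apply Finset.sum_le_sum_of_subset_of_nonneg (Finset.filter_subset _ _)
          intro v _ _
          positivity
      _ ≤ (1+η) * (((b:ℝ)-1) * (X.card:ℝ)^(a:ℕ)) := by
          apply mul_le_mul_of_nonneg_left hdesc (by linarith)
      _ = (1+η) * ((b:ℝ)-1) * (X.card:ℝ)^(a:ℕ) := by ring
  linarith


lemma exists_nat_rpow_ge (q K : ℝ) (hq : 0 < q) : ∃ M : ℕ, ∀ m : ℕ, M ≤ m → K ≤ (m:ℝ)^q := by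
  have h : Filter.Tendsto (fun m : ℕ => ((m:ℝ))^q) Filter.atTop Filter.atTop :=
    (tendsto_rpow_atTop hq).comp tendsto_natCast_atTop_atTop
  exact Filter.eventually_atTop.mp (h.eventually_ge_atTop K)

noncomputable def gam (s a : ℕ) : ℝ := (s:ℝ) * ((s:ℝ)-1) / (2*(a:ℝ))

set_option maxHeartbeats 2000000 in
theorem REF (s : ℕ) : ∀ a b : ℕ, 1 ≤ a → 2*(s-1) ≤ a → 2 ≤ b → ∀ ε : ℝ, 0 < ε →
    ∃ C : ℝ, 0 ≤ C ∧ ∀ (n : ℕ) (G : SimpleGraph (Fin n)) (X : Finset (Fin n)), bfr G a b X →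
      (cnt G s X : ℝ) ≤ (1/(s.factorial : ℝ) + ε) * ((b:ℝ)-1) ^ (gam s a) *
        (X.card : ℝ) ^ ((s:ℝ) - gam s a) + C := by
  induction s with
  | zero =>
      intro a b ha1 ha hb ε hε
      refine ⟨1, by norm_num, fun n G X hX => ?_⟩
      rw [cnt_zero]
      have h1 : gam 0 a = 0 := by simp [gam]
      rw [h1]
      simp only [Real.rpow_zero, Nat.cast_zero]
      have : ((0:ℝ) - 0) = 0 := by ring
      rw [this, Real.rpow_zero]
      simp [Nat.factorial]
      positivity
  | succ s ih =>
      rcases Nat.eq_zero_or_pos s with rfl | hs1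
      · -- s + 1 = 1
        intro a b ha1 ha hb ε hε
        refine ⟨0, le_refl 0, fun n G X hX => ?_⟩
        rw [cnt_one]
        have h1 : gam (0+1) a = 0 := by simp [gam]
        rw [h1, sub_zero, Real.rpow_zero]
        have hone : ((0:ℕ)+1 : ℝ) = 1 := by norm_num
        have hcast : (((0:ℕ)+1 : ℕ) : ℝ) = 1 := by norm_num
        rw [show ((((0:ℕ)+1 : ℕ)) : ℝ) = (1:ℝ) from hcast, Real.rpow_one]
        have hcard : (0:ℝ) ≤ (X.card : ℝ) := Nat.cast_nonneg _
        have hf : ((Nat.factorial (0+1) : ℕ) : ℝ) = 1 := by norm_num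
        rw [hf]
        nlinarith
      · intro a b ha1 ha hb ε hε
        have hsa : 2*s ≤ a := by omega
        have ha2 : 2 ≤ a := by omega
        have hεQ0 : 0 < ε/4 := by positivity
        set η : ℝ := min (1/2) (ε/8) with hηdef
        have hη0 : 0 < η := lt_min (by norm_num) (by positivity)
        have hη12 : η ≤ 1/2 := min_le_left _ _
        have hηε : η ≤ ε/8 := min_le_right _ _
        obtain ⟨C', hC'0, hC'⟩ := ih (a-1) b (by omega) (by omega) hb (ε/4) hεQ0
        obtain ⟨T, hT⟩ := threshold_exists a (by omega) hη0
        have hcs : (1:ℝ) ≤ (s:ℝ) := by exact_mod_cast hs1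
        have hca : (2:ℝ)*(s:ℝ) ≤ (a:ℝ) := by exact_mod_cast hsa
        have hca2 : (2:ℝ) ≤ (a:ℝ) := by exact_mod_cast ha2
        have hca0 : (0:ℝ) < (a:ℝ) := by linarith
        have hca1 : ((a-1:ℕ):ℝ) = (a:ℝ) - 1 := by
          rw [Nat.cast_sub (by omega)]
          norm_num
        set α : ℝ := (s:ℝ) - gam s (a-1) with hαdef
        have hgam' : gam s (a-1) = (s:ℝ)*((s:ℝ)-1)/(2*((a:ℝ)-1)) := by
          rw [gam, hca1]
        have hα0 : 0 < α := by
          rw [hαdef, hgam', sub_pos, div_lt_iff₀ (by nlinarith)]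
          nlinarith
        have hαs : α ≤ (s:ℝ) := by
          rw [hαdef, hgam']
          have h0 : 0 ≤ (s:ℝ)*((s:ℝ)-1)/(2*((a:ℝ)-1)) := by
            apply div_nonneg (by nlinarith) (by nlinarith)
          linarith
        have hαA : α ≤ (a:ℝ) := by linarith
        have hb1 : (1:ℝ) ≤ (b:ℝ) - 1 := by
          have h2 : (2:ℝ) ≤ (b:ℝ) := by exact_mod_cast hb
          linarith
        have hgid : gam s (a-1) + α/(a:ℝ) = gam (s+1) a := by
          rw [hαdef, hgam', gam]
          push_cast
          have h1 : (a:ℝ) ≠ 0 := by linarith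
          have h2 : (a:ℝ) - 1 ≠ 0 := by nlinarith
          field_simp
          ring
        set c : ℝ := ((s:ℝ)+1) - gam (s+1) a with hcdef
        have hcid : (1 - α/(a:ℝ)) + α = c := by
          rw [hαdef, hgam', hcdef, gam]
          push_cast
          have h1 : (a:ℝ) ≠ 0 := by linarith
          have h2 : (a:ℝ) - 1 ≠ 0 := by nlinarith
          field_simp
          ring
        set β : ℝ := ((b:ℝ)-1) ^ (gam (s+1) a) with hβdef
        have hβ0 : 0 < β := Real.rpow_pos_of_pos (by linarith) _
        have hq0 : 0 < c - 1 := by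
          rw [← hcid]
          have h1 : α/(a:ℝ) < α := div_lt_self hα0 (by linarith)
          linarith only [h1]
        obtain ⟨M₂, hM₂⟩ := exists_nat_rpow_ge (c-1) (4*C'/(ε*β)) hq0
        set M₁ : ℕ := ⌈(T:ℝ)^(a:ℕ)/η⌉₊ with hM₁def
        set M : ℕ := max (max M₁ M₂) 1 with hMdef
        refine ⟨((M:ℝ))^(s+1), by positivity, fun n G X hX => ?_⟩
        set m : ℕ := X.card with hmdef
        have hc0 : 0 < c := by linarith only [hq0]
        by_cases hmM : m < M
        · -- small case
          have h1 : cnt G (s+1) X ≤ M^(s+1) := by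
            calc cnt G (s+1) X ≤ m.choose (s+1) := cnt_le_choose G (s+1) X
              _ ≤ m.descFactorial (s+1) := by
                  rw [Nat.descFactorial_eq_factorial_mul_choose]
                  exact Nat.le_mul_of_pos_left _ (Nat.factorial_pos _)
              _ ≤ m^(s+1) := Nat.descFactorial_le_pow _ _
              _ ≤ M^(s+1) := Nat.pow_le_pow_left (by omega) _
          have h2 : (cnt G (s+1) X : ℝ) ≤ ((M:ℝ))^(s+1) := by exact_mod_cast h1
          have h3 : 0 ≤ (1/(((s+1).factorial : ℕ) : ℝ) + ε) * β * (m:ℝ) ^ (((s+1:ℕ):ℝ) - gam (s+1) a) := by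
            apply mul_nonneg (mul_nonneg _ (le_of_lt hβ0)) (Real.rpow_nonneg (Nat.cast_nonneg _) _)
            have h4 : (0:ℝ) < ((s+1).factorial : ℝ) := by exact_mod_cast Nat.factorial_pos _
            positivity
          have h5 : (m:ℝ) ^ (((s+1:ℕ):ℝ) - gam (s+1) a) = (m:ℝ)^c := by
            rw [hcdef]
            congr 1
            push_cast
            ring
          rw [h5] at h3
          calc (cnt G (s+1) X : ℝ) ≤ ((M:ℝ))^(s+1) := h2
            _ ≤ (1/(((s+1).factorial : ℕ) : ℝ) + ε) * ((b:ℝ)-1) ^ (gam (s+1) a) *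
                (X.card : ℝ) ^ (((s+1:ℕ):ℝ) - gam (s+1) a) + ((M:ℝ))^(s+1) := by
                rw [← hmdef, ← hβdef, h5]
                linarith only [h3]
        · -- main case
          push_neg at hmM
          have hm1 : 1 ≤ m := le_trans (le_max_right _ _) hmM
          have hmM₁ : M₁ ≤ m := le_trans (le_trans (le_max_left _ _) (le_max_left _ _)) hmM
          have hmM₂ : M₂ ≤ m := le_trans (le_trans (le_max_right _ _) (le_max_left _ _)) hmM
          have hm0 : (0:ℝ) < (m:ℝ) := by exact_mod_cast hm1
          have hm1R : (1:ℝ) ≤ (m:ℝ) := by exact_mod_cast hm1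
          set dd : Fin n → ℕ := fun v => (X.filter (fun u => G.Adj v u)).card with hdd
          have hsum1 : ((s:ℝ)+1) * (cnt G (s+1) X : ℝ)
              = ∑ v ∈ X, (cnt G s (X.filter (fun u => G.Adj v u)) : ℝ) := by
            have h := cnt_succ_mul G s X
            have h2 : (((s+1) * cnt G (s+1) X : ℕ) : ℝ)
                = ((∑ v ∈ X, cnt G s (X.filter (fun u => G.Adj v u)) : ℕ) : ℝ) := by
              exact_mod_cast h
            push_cast at h2
            exact h2
          have hstep3 : ∀ v ∈ X, (cnt G s (X.filter (fun u => G.Adj v u)) : ℝ)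
              ≤ (1/((s.factorial : ℕ) : ℝ) + ε/4) * ((b:ℝ)-1) ^ (gam s (a-1)) * ((dd v : ℝ)) ^ α + C' := by
            intro v hv
            have hfree : bfr G (a-1) b (X.filter (fun u => G.Adj v u)) := by
              have hcast : (a-1)+1 = a := by omega
              apply bfr_nbhd _ hv
              rw [hcast]
              exact hX
            exact hC' n G _ hfree
          have hsum2 : ((s:ℝ)+1) * (cnt G (s+1) X : ℝ)
              ≤ (1/((s.factorial : ℕ) : ℝ) + ε/4) * ((b:ℝ)-1) ^ (gam s (a-1)) *
                  (∑ v ∈ X, ((dd v : ℝ)) ^ α) + C' * (m:ℝ) := by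
            rw [hsum1]
            calc ∑ v ∈ X, (cnt G s (X.filter (fun u => G.Adj v u)) : ℝ)
                ≤ ∑ v ∈ X, ((1/((s.factorial : ℕ) : ℝ) + ε/4) * ((b:ℝ)-1) ^ (gam s (a-1)) * ((dd v : ℝ)) ^ α + C') :=
                  Finset.sum_le_sum hstep3
              _ = (1/((s.factorial : ℕ) : ℝ) + ε/4) * ((b:ℝ)-1) ^ (gam s (a-1)) *
                  (∑ v ∈ X, ((dd v : ℝ)) ^ α) + C' * (m:ℝ) := by
                  rw [Finset.sum_add_distrib, Finset.sum_const, ← Finset.mul_sum, nsmul_eq_mul, hmdef]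
                  ring
          have hhold : ∑ v ∈ X, ((dd v : ℝ)) ^ α
              ≤ (m:ℝ)^(1-α/(a:ℝ)) * (∑ v ∈ X, ((dd v : ℝ)) ^ ((a:ℕ):ℝ))^(α/(a:ℝ)) :=
            sum_rpow_le X (fun v => (dd v : ℝ)) (fun v _ => Nat.cast_nonneg _) hα0 hαA
          have hps : ∑ v ∈ X, ((dd v : ℝ)) ^ ((a:ℕ):ℝ)
              ≤ (1+2*η) * ((b:ℝ)-1) * ((m:ℝ))^(a:ℕ) := by
            have hconv : ∑ v ∈ X, ((dd v : ℝ)) ^ ((a:ℕ):ℝ) = ∑ v ∈ X, ((dd v : ℝ))^(a:ℕ) :=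
              Finset.sum_congr rfl fun v _ => Real.rpow_natCast _ _
            rw [hconv]
            have hps0 := power_sum (by omega : 1 ≤ b) hX hη0 T hT
            have hmp : (0:ℝ) ≤ ((m:ℝ))^(a:ℕ) := by positivity
            have hTm : (T:ℝ)^(a:ℕ) * (m:ℝ) ≤ η * ((b:ℝ)-1) * ((m:ℝ))^(a:ℕ) := by
              have h1 : (T:ℝ)^(a:ℕ)/η ≤ (m:ℝ) := by
                apply le_trans (Nat.le_ceil _)
                exact Nat.cast_le.mpr hmM₁
              have h2 : (T:ℝ)^(a:ℕ) ≤ η * (m:ℝ) := by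
                rw [div_le_iff₀ hη0] at h1
                linarith only [h1]
              have h5 : η*(1:ℝ) ≤ η*((b:ℝ)-1) := mul_le_mul_of_nonneg_left hb1 hη0.le
              calc (T:ℝ)^(a:ℕ) * (m:ℝ) ≤ (η * (m:ℝ)) * (m:ℝ) :=
                    mul_le_mul_of_nonneg_right h2 (le_of_lt hm0)
                _ = η * ((m:ℝ))^2 := by ring
                _ ≤ η * ((m:ℝ))^(a:ℕ) :=
                    mul_le_mul_of_nonneg_left (pow_le_pow_right₀ hm1R ha2) (le_of_lt hη0)
                _ = (η*1) * ((m:ℝ))^(a:ℕ) := by ring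
                _ ≤ (η * ((b:ℝ)-1)) * ((m:ℝ))^(a:ℕ) := mul_le_mul_of_nonneg_right h5 hmp
                _ = η * ((b:ℝ)-1) * ((m:ℝ))^(a:ℕ) := by ring
            calc ∑ v ∈ X, ((dd v : ℝ))^(a:ℕ)
                ≤ (1+η) * ((b:ℝ)-1) * ((m:ℝ))^(a:ℕ) + (T:ℝ)^(a:ℕ) * (m:ℝ) := hps0
              _ ≤ (1+η) * ((b:ℝ)-1) * ((m:ℝ))^(a:ℕ) + η * ((b:ℝ)-1) * ((m:ℝ))^(a:ℕ) := by
                  linarith only [hTm]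
              _ = (1+2*η) * ((b:ℝ)-1) * ((m:ℝ))^(a:ℕ) := by ring
          have hq1 : (0:ℝ) ≤ α/(a:ℝ) := le_of_lt (div_pos hα0 hca0)
          have hq2 : α/(a:ℝ) ≤ 1 := by
            rw [div_le_one hca0]
            exact hαA
          have hcomb : ∑ v ∈ X, ((dd v : ℝ)) ^ α
              ≤ (1+2*η) * ((b:ℝ)-1)^(α/(a:ℝ)) * (m:ℝ)^((1-α/(a:ℝ)) + α) := by
            have hsumnn : (0:ℝ) ≤ ∑ v ∈ X, ((dd v : ℝ)) ^ ((a:ℕ):ℝ) :=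
              Finset.sum_nonneg fun v _ => Real.rpow_nonneg (Nat.cast_nonneg _) _
            have h1 : (∑ v ∈ X, ((dd v : ℝ)) ^ ((a:ℕ):ℝ))^(α/(a:ℝ))
                ≤ ((1+2*η) * ((b:ℝ)-1) * ((m:ℝ))^(a:ℕ))^(α/(a:ℝ)) :=
              Real.rpow_le_rpow hsumnn hps hq1
            have h2 : ((1+2*η) * ((b:ℝ)-1) * ((m:ℝ))^(a:ℕ))^(α/(a:ℝ))
                = (1+2*η)^(α/(a:ℝ)) * ((b:ℝ)-1)^(α/(a:ℝ)) * (m:ℝ)^α := by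
              rw [Real.mul_rpow (by nlinarith) (by positivity),
                  Real.mul_rpow (by linarith) (by linarith)]
              congr 1
              rw [← Real.rpow_natCast (m:ℝ) a, ← Real.rpow_mul (le_of_lt hm0)]
              congr 1
              field_simp
            have h3 : (1+2*η)^(α/(a:ℝ)) ≤ 1+2*η := by
              calc (1+2*η)^(α/(a:ℝ)) ≤ (1+2*η)^(1:ℝ) :=
                    Real.rpow_le_rpow_of_exponent_le (by linarith) hq2
                _ = 1+2*η := Real.rpow_one _
            have hbnn : (0:ℝ) ≤ ((b:ℝ)-1)^(α/(a:ℝ)) := Real.rpow_nonneg (by linarith) _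
            have hmnn : (0:ℝ) ≤ (m:ℝ)^α := Real.rpow_nonneg (le_of_lt hm0) _
            have hmnn2 : (0:ℝ) ≤ (m:ℝ)^(1-α/(a:ℝ)) := Real.rpow_nonneg (le_of_lt hm0) _
            calc ∑ v ∈ X, ((dd v : ℝ)) ^ α
                ≤ (m:ℝ)^(1-α/(a:ℝ)) * (∑ v ∈ X, ((dd v : ℝ)) ^ ((a:ℕ):ℝ))^(α/(a:ℝ)) := hhold
              _ ≤ (m:ℝ)^(1-α/(a:ℝ)) * ((1+2*η)^(α/(a:ℝ)) * ((b:ℝ)-1)^(α/(a:ℝ)) * (m:ℝ)^α) := by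
                  rw [← h2]
                  exact mul_le_mul_of_nonneg_left h1 hmnn2
              _ ≤ (m:ℝ)^(1-α/(a:ℝ)) * ((1+2*η) * ((b:ℝ)-1)^(α/(a:ℝ)) * (m:ℝ)^α) := by
                  apply mul_le_mul_of_nonneg_left _ hmnn2
                  apply mul_le_mul_of_nonneg_right _ hmnn
                  exact mul_le_mul_of_nonneg_right h3 hbnn
              _ = (1+2*η) * ((b:ℝ)-1)^(α/(a:ℝ)) * ((m:ℝ)^(1-α/(a:ℝ)) * (m:ℝ)^α) := by ring
              _ = (1+2*η) * ((b:ℝ)-1)^(α/(a:ℝ)) * (m:ℝ)^((1-α/(a:ℝ)) + α) := by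
                  rw [← Real.rpow_add hm0]
          have hFs : (0:ℝ) < ((s.factorial : ℕ) : ℝ) := by exact_mod_cast Nat.factorial_pos s
          have hF1 : (1:ℝ) ≤ ((s.factorial : ℕ) : ℝ) := by
            exact_mod_cast Nat.one_le_iff_ne_zero.mpr (Nat.factorial_ne_zero s)
          have hc1pos : (0:ℝ) < 1/((s.factorial : ℕ) : ℝ) + ε/4 := by positivity
          have hbg : ((b:ℝ)-1) ^ (gam s (a-1)) * ((b:ℝ)-1)^(α/(a:ℝ)) = β := by
            rw [hβdef, ← Real.rpow_add (by linarith), hgid]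
          have hmc : (m:ℝ)^((1-α/(a:ℝ)) + α) = (m:ℝ)^c := by rw [hcid]
          have htot : ((s:ℝ)+1) * (cnt G (s+1) X : ℝ)
              ≤ (1/((s.factorial : ℕ) : ℝ) + ε/4) * (1+2*η) * β * (m:ℝ)^c + C' * (m:ℝ) := by
            calc ((s:ℝ)+1) * (cnt G (s+1) X : ℝ)
                ≤ (1/((s.factorial : ℕ) : ℝ) + ε/4) * ((b:ℝ)-1) ^ (gam s (a-1)) *
                    (∑ v ∈ X, ((dd v : ℝ)) ^ α) + C' * (m:ℝ) := hsum2
              _ ≤ (1/((s.factorial : ℕ) : ℝ) + ε/4) * ((b:ℝ)-1) ^ (gam s (a-1)) *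
                    ((1+2*η) * ((b:ℝ)-1)^(α/(a:ℝ)) * (m:ℝ)^((1-α/(a:ℝ)) + α)) + C' * (m:ℝ) := by
                  have hnn : (0:ℝ) ≤ (1/((s.factorial : ℕ) : ℝ) + ε/4) * ((b:ℝ)-1) ^ (gam s (a-1)) :=
                    mul_nonneg (le_of_lt hc1pos) (Real.rpow_nonneg (by linarith) _)
                  have h6 := mul_le_mul_of_nonneg_left hcomb hnn
                  rw [mul_assoc, mul_assoc] at h6 ⊢
                  linarith only [h6]
              _ = (1/((s.factorial : ℕ) : ℝ) + ε/4) * (1+2*η) *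
                    (((b:ℝ)-1) ^ (gam s (a-1)) * ((b:ℝ)-1)^(α/(a:ℝ))) * (m:ℝ)^((1-α/(a:ℝ)) + α) + C' * (m:ℝ) := by
                  ring
              _ = (1/((s.factorial : ℕ) : ℝ) + ε/4) * (1+2*η) * β * (m:ℝ)^c + C' * (m:ℝ) := by
                  rw [hbg, hmc]
          have herr : C' * (m:ℝ) ≤ (ε/4) * β * (m:ℝ)^c := by
            have h1 : 4*C'/(ε*β) ≤ (m:ℝ)^(c-1) := hM₂ m hmM₂
            have h3 : 4*C' ≤ (ε*β) * (m:ℝ)^(c-1) := by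
              rw [div_le_iff₀ (by positivity)] at h1
              linarith only [h1]
            have h4 := mul_le_mul_of_nonneg_right h3 (by positivity : (0:ℝ) ≤ (m:ℝ)/4)
            have h2 : (m:ℝ)^c = (m:ℝ)^(c-1) * (m:ℝ) := by
              rw [← Real.rpow_add_one (ne_of_gt hm0)]
              congr 1
              ring
            calc C' * (m:ℝ) = 4*C'*((m:ℝ)/4) := by ring
              _ ≤ (ε*β)*(m:ℝ)^(c-1)*((m:ℝ)/4) := h4
              _ = (ε/4)*β*((m:ℝ)^(c-1) * (m:ℝ)) := by ring
              _ = (ε/4)*β*(m:ℝ)^c := by rw [← h2]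
          have hmcnn : (0:ℝ) ≤ β * (m:ℝ)^c :=
            mul_nonneg (le_of_lt hβ0) (Real.rpow_nonneg (le_of_lt hm0) _)
          have hF1' : 1/((s.factorial : ℕ) : ℝ) ≤ 1 := by
            rw [div_le_one hFs]
            exact hF1
          have e1 : 2*η*(1/((s.factorial : ℕ) : ℝ)) ≤ ε/4 := by
            have h01 : (0:ℝ) ≤ 2*η := by linarith only [hη0]
            have h02 := mul_le_mul_of_nonneg_left hF1' h01
            have h03 : 2*η ≤ ε/4 := by linarith only [hηε]
            calc 2*η*(1/((s.factorial : ℕ) : ℝ)) ≤ 2*η*1 := h02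
              _ ≤ ε/4 := by linarith only [h03]
          have e2 : (ε/4)*(2*η) ≤ ε/4 := by
            have h01 := mul_le_mul_of_nonneg_left hη12 (by positivity : (0:ℝ) ≤ ε/2)
            calc (ε/4)*(2*η) = (ε/2)*η := by ring
              _ ≤ (ε/2)*(1/2) := h01
              _ ≤ ε/4 := by linarith only [hε]
          have e3 : 2*ε ≤ ((s:ℝ)+1)*ε := by
            have h01 : (2:ℝ) ≤ (s:ℝ)+1 := by linarith only [hcs]
            exact mul_le_mul_of_nonneg_right h01 hε.le
          have hconst : (1/((s.factorial : ℕ) : ℝ) + ε/4) * (1+2*η) + ε/4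
              ≤ 1/((s.factorial : ℕ) : ℝ) + ((s:ℝ)+1)*ε := by
            linarith only [e1, e2, e3, hε.le]
          have hfacc : (((s+1).factorial : ℕ) : ℝ) = ((s:ℝ)+1) * ((s.factorial : ℕ) : ℝ) := by
            rw [Nat.factorial_succ]
            push_cast
            ring
          have hstepf : (1/((s.factorial : ℕ) : ℝ) + ε/4) * (1+2*η) * β * (m:ℝ)^c + C' * (m:ℝ)
              ≤ (1/((s.factorial : ℕ) : ℝ) + ((s:ℝ)+1)*ε) * (β * (m:ℝ)^c) := by
            have h7 := mul_le_mul_of_nonneg_right hconst hmcnn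
            calc (1/((s.factorial : ℕ) : ℝ) + ε/4) * (1+2*η) * β * (m:ℝ)^c + C' * (m:ℝ)
                ≤ (1/((s.factorial : ℕ) : ℝ) + ε/4) * (1+2*η) * β * (m:ℝ)^c + (ε/4) * β * (m:ℝ)^c := by
                  linarith only [herr]
              _ = ((1/((s.factorial : ℕ) : ℝ) + ε/4) * (1+2*η) + ε/4) * (β * (m:ℝ)^c) := by ring
              _ ≤ (1/((s.factorial : ℕ) : ℝ) + ((s:ℝ)+1)*ε) * (β * (m:ℝ)^c) := h7
          have hid2 : (1/((s.factorial : ℕ) : ℝ) + ((s:ℝ)+1)*ε) * (β * (m:ℝ)^c)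
              = ((s:ℝ)+1) * ((1/(((s+1).factorial : ℕ) : ℝ) + ε) * β * (m:ℝ)^c) := by
            rw [hfacc]
            have hs0 : ((s:ℝ)+1) ≠ 0 := by positivity
            field_simp
          have hbig : ((s:ℝ)+1) * (cnt G (s+1) X : ℝ)
              ≤ ((s:ℝ)+1) * ((1/(((s+1).factorial : ℕ) : ℝ) + ε) * β * (m:ℝ)^c + ((M:ℝ))^(s+1)) := by
            have hM0 : (0:ℝ) ≤ ((M:ℝ))^(s+1) := by positivity
            have h8 : (1/(((s+1).factorial : ℕ) : ℝ) + ε) * β * (m:ℝ)^c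
                ≤ (1/(((s+1).factorial : ℕ) : ℝ) + ε) * β * (m:ℝ)^c + ((M:ℝ))^(s+1) := by
              linarith only [hM0]
            have h9 := mul_le_mul_of_nonneg_left h8 (by positivity : (0:ℝ) ≤ (s:ℝ)+1)
            calc ((s:ℝ)+1) * (cnt G (s+1) X : ℝ)
                ≤ (1/((s.factorial : ℕ) : ℝ) + ε/4) * (1+2*η) * β * (m:ℝ)^c + C' * (m:ℝ) := htot
              _ ≤ (1/((s.factorial : ℕ) : ℝ) + ((s:ℝ)+1)*ε) * (β * (m:ℝ)^c) := hstepf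
              _ = ((s:ℝ)+1) * ((1/(((s+1).factorial : ℕ) : ℝ) + ε) * β * (m:ℝ)^c) := hid2
              _ ≤ ((s:ℝ)+1) * ((1/(((s+1).factorial : ℕ) : ℝ) + ε) * β * (m:ℝ)^c + ((M:ℝ))^(s+1)) := h9
          have hcancel := le_of_mul_le_mul_left hbig (by positivity : (0:ℝ) < (s:ℝ)+1)
          have hcc : ((s+1:ℕ):ℝ) - gam (s+1) a = c := by
            rw [hcdef]
            congr 1
            push_cast
            ring
          calc (cnt G (s+1) X : ℝ)
              ≤ (1/(((s+1).factorial : ℕ) : ℝ) + ε) * β * (m:ℝ)^c + ((M:ℝ))^(s+1) := hcancel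
            _ = (1/(((s+1).factorial : ℕ) : ℝ) + ε) * ((b:ℝ)-1) ^ (gam (s+1) a) *
                (X.card : ℝ) ^ (((s+1:ℕ):ℝ) - gam (s+1) a) + ((M:ℝ))^(s+1) := by
                rw [hβdef, hmdef, hcc]

lemma cliqueCount_eq_cnt {n : ℕ} (G : SimpleGraph (Fin n)) (r : ℕ) :
    cliqueCount G r = cnt G r univ := by
  rw [cliqueCount, Nat.card_eq_fintype_card, Fintype.card_subtype]
  unfold cnt
  congr 1
  ext S
  simp only [Finset.mem_filter, Finset.mem_univ, Finset.mem_powersetCard, Finset.subset_univ,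
    SimpleGraph.isNClique_iff, true_and]
  tauto

lemma cnt_split {n : ℕ} (G : SimpleGraph (Fin n)) (r : ℕ) (W : Finset (Fin n)) :
    cnt G r univ ≤ ∑ j ∈ Finset.range (r+1), (W.card).choose j * cnt G (r-j) Wᶜ := by
  have hsplit : cnt G r univ = ∑ j ∈ Finset.range (r+1),
      (((univ.powersetCard r).filter (fun (S : Finset (Fin n)) => G.IsClique (S : Set (Fin n)))).filter
        (fun S => (S ∩ W).card = j)).card := by
    unfold cnt
    apply Finset.card_eq_sum_card_fiberwise
    intro S hS
    simp only [Finset.mem_coe, Finset.mem_filter, Finset.mem_powersetCard] at hS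
    rw [Finset.mem_coe, Finset.mem_range]; dsimp only
    have h1 : (S ∩ W).card ≤ S.card := Finset.card_le_card Finset.inter_subset_left
    omega
  rw [hsplit]
  apply Finset.sum_le_sum
  intro j hj
  have hinj : (((univ.powersetCard r).filter (fun (S : Finset (Fin n)) => G.IsClique (S : Set (Fin n)))).filter
        (fun S => (S ∩ W).card = j)).card
      ≤ ((W.powersetCard j) ×ˢ ((Wᶜ.powersetCard (r-j)).filter
          (fun (S : Finset (Fin n)) => G.IsClique (S : Set (Fin n))))).card := by
    apply Finset.card_le_card_of_injOn (fun S => (S ∩ W, S \ W))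
    · intro S hS
      simp only [Finset.mem_coe, Finset.mem_filter, Finset.mem_powersetCard] at hS
      obtain ⟨⟨⟨hsub, hcard⟩, hclq⟩, hji⟩ := hS
      simp only [Finset.mem_coe, Finset.mem_product, Finset.mem_filter, Finset.mem_powersetCard]
      refine ⟨⟨Finset.inter_subset_right, hji⟩, ⟨?_, ?_⟩, ?_⟩
      · intro x hx
        simp only [Finset.mem_sdiff] at hx
        simp only [Finset.mem_compl]
        exact hx.2
      · have h2 := Finset.card_inter_add_card_sdiff S W
        omega
      · exact hclq.subset (Finset.coe_subset.mpr (Finset.sdiff_subset))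
    · intro S1 h1 S2 h2 heq
      simp only [Prod.mk.injEq] at heq
      have e1 : (S1 ∩ W) ∪ (S1 \ W) = S1 := by
        rw [Finset.union_comm]; exact Finset.sdiff_union_inter S1 W
      have e2 : (S2 ∩ W) ∪ (S2 \ W) = S2 := by
        rw [Finset.union_comm]; exact Finset.sdiff_union_inter S2 W
      rw [← e1, ← e2, heq.1, heq.2]
  calc (((univ.powersetCard r).filter (fun (S : Finset (Fin n)) => G.IsClique (S : Set (Fin n)))).filter
        (fun S => (S ∩ W).card = j)).card
      ≤ ((W.powersetCard j) ×ˢ ((Wᶜ.powersetCard (r-j)).filter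
          (fun (S : Finset (Fin n)) => G.IsClique (S : Set (Fin n))))).card := hinj
    _ = (W.card).choose j * cnt G (r-j) Wᶜ := by
        rw [Finset.card_product, Finset.card_powersetCard]
        rfl

lemma exTuran_le_of_forall {α : Type*} {n r : ℕ} {F : SimpleGraph α} (R : ℝ)
    (hbot : F.FreeIn (⊥ : SimpleGraph (Fin n)))
    (h : ∀ G : SimpleGraph (Fin n), F.FreeIn G → (cliqueCount G r : ℝ) ≤ R) :
    (exTuran n r F : ℝ) ≤ R := by
  have hne : {m : ℕ | ∃ G : SimpleGraph (Fin n), F.FreeIn G ∧ m = cliqueCount G r}.Nonempty :=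
    ⟨cliqueCount (⊥ : SimpleGraph (Fin n)) r, ⊥, hbot, rfl⟩
  have hbdd : BddAbove {m : ℕ | ∃ G : SimpleGraph (Fin n), F.FreeIn G ∧ m = cliqueCount G r} := by
    refine ⟨n.choose r, fun m hm => ?_⟩
    obtain ⟨G, _, rfl⟩ := hm
    rw [cliqueCount_eq_cnt]
    calc cnt G r univ ≤ ((univ : Finset (Fin n)).card).choose r := by
          unfold cnt
          calc _ ≤ (Finset.powersetCard r (univ : Finset (Fin n))).card := Finset.card_filter_le _ _
            _ = _ := Finset.card_powersetCard r univ
      _ = n.choose r := by rw [Finset.card_univ, Fintype.card_fin]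
  obtain ⟨G, hG, hEq⟩ := Nat.sSup_mem hne hbdd
  rw [exTuran, hEq]
  exact h G hG

lemma exists_W {n t a b : ℕ} (ha : 1 ≤ a) (hb : 1 ≤ b) (G : SimpleGraph (Fin n))
    (hfree : (multiCopies (t+1) (completeBipartiteGraph (Fin a) (Fin b))).FreeIn G) :
    ∃ W : Finset (Fin n), W.card ≤ t*(a+b) ∧ bfr G a b Wᶜ := by
  classical
  set good : Finset (Fin n) × Finset (Fin n) → Prop := fun p =>
    p.1.card = a ∧ p.2.card = b ∧ Disjoint p.1 p.2 ∧ ∀ u ∈ p.1, ∀ v ∈ p.2, G.Adj u v with hgood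
  set cand : Finset (Finset (Finset (Fin n) × Finset (Fin n))) :=
    univ.filter (fun F => (∀ p ∈ F, good p) ∧
      (F : Set (Finset (Fin n) × Finset (Fin n))).Pairwise
        (fun p q => Disjoint (p.1 ∪ p.2) (q.1 ∪ q.2))) with hcand
  have hne : cand.Nonempty := by
    refine ⟨∅, ?_⟩
    rw [hcand, Finset.mem_filter]
    simp
  obtain ⟨F₀, hF₀, hmax⟩ := Finset.exists_max_image cand Finset.card hne
  rw [hcand, Finset.mem_filter] at hF₀
  obtain ⟨-, hF₀good, hF₀pair⟩ := hF₀
  have hcardF : F₀.card ≤ t := by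
    by_contra hcon
    push_neg at hcon
    obtain ⟨F₁, hF₁sub, hF₁card⟩ := Finset.exists_subset_card_eq (show t+1 ≤ F₀.card from hcon)
    apply hfree
    set e : Fin (t+1) ≃ {x // x ∈ F₁} := (F₁.equivFinOfCardEq hF₁card).symm with he
    have hgood₁ : ∀ i : Fin (t+1), good ((e i : Finset (Fin n) × Finset (Fin n))) :=
      fun i => hF₀good _ (hF₁sub (e i).2)
    set φ : Fin (t+1) × (Fin a ⊕ Fin b) → Fin n := fun x =>
      Sum.elim
        (fun u => (((((e x.1 : Finset (Fin n) × Finset (Fin n))).1.equivFinOfCardEq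
            (hgood₁ x.1).1).symm u : Fin n)))
        (fun w => (((((e x.1 : Finset (Fin n) × Finset (Fin n))).2.equivFinOfCardEq
            (hgood₁ x.1).2.1).symm w : Fin n))) x.2 with hφ
    have hmemA : ∀ (i : Fin (t+1)) (u : Fin a),
        φ (i, Sum.inl u) ∈ ((e i : Finset (Fin n) × Finset (Fin n))).1 := by
      intro i u
      exact ((((e i : Finset (Fin n) × Finset (Fin n))).1.equivFinOfCardEq
        (hgood₁ i).1).symm u).2
    have hmemB : ∀ (i : Fin (t+1)) (w : Fin b),
        φ (i, Sum.inr w) ∈ ((e i : Finset (Fin n) × Finset (Fin n))).2 := by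
      intro i w
      exact ((((e i : Finset (Fin n) × Finset (Fin n))).2.equivFinOfCardEq
        (hgood₁ i).2.1).symm w).2
    have hmemU : ∀ (x : Fin (t+1) × (Fin a ⊕ Fin b)),
        φ x ∈ ((e x.1 : Finset (Fin n) × Finset (Fin n))).1 ∪
          ((e x.1 : Finset (Fin n) × Finset (Fin n))).2 := by
      rintro ⟨i, u | w⟩
      · exact Finset.mem_union_left _ (hmemA i u)
      · exact Finset.mem_union_right _ (hmemB i w)
    refine ⟨⟨φ, ?_⟩, ?_⟩
    · -- hom
      rintro ⟨i, x⟩ ⟨j, y⟩ (⟨hij, hadj⟩ : (i, x).1 = (j, y).1 ∧ (completeBipartiteGraph (Fin a) (Fin b)).Adj (i, x).2 (j, y).2)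
      dsimp only at hij
      subst hij
      rcases x with u | w <;> rcases y with u' | w'
      · simp [completeBipartiteGraph] at hadj
      · exact (hgood₁ i).2.2.2 _ (hmemA i u) _ (hmemB i w')
      · exact ((hgood₁ i).2.2.2 _ (hmemA i u') _ (hmemB i w)).symm
      · simp [completeBipartiteGraph] at hadj
    · -- injective
      rintro ⟨i, x⟩ ⟨j, y⟩ hxy0
      have hxy : φ (i, x) = φ (j, y) := hxy0
      clear hxy0
      have hij : i = j := by
        by_contra hne'
        have hpairne : (e i : Finset (Fin n) × Finset (Fin n)) ≠ (e j : Finset (Fin n) × Finset (Fin n)) := by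
          intro hcontra
          exact hne' (e.injective (Subtype.coe_injective hcontra))
        have hdisj := hF₀pair (Finset.mem_coe.mpr (hF₁sub (e i).2))
          (Finset.mem_coe.mpr (hF₁sub (e j).2)) hpairne
        have h1 := hmemU (i, x)
        have h2 := hmemU (j, y)
        rw [hxy] at h1
        exact Finset.disjoint_left.mp hdisj h1 h2
      subst hij
      have hd := (hgood₁ i).2.2.1
      rcases x with u | w <;> rcases y with u' | w'
      · have := Subtype.coe_injective (a₁ := (((e i : Finset (Fin n) × Finset (Fin n))).1.equivFinOfCardEq (hgood₁ i).1).symm u) (a₂ := (((e i : Finset (Fin n) × Finset (Fin n))).1.equivFinOfCardEq (hgood₁ i).1).symm u') hxy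
        have hu := ((((e i : Finset (Fin n) × Finset (Fin n))).1.equivFinOfCardEq (hgood₁ i).1).symm.injective this)
        rw [hu]
      · exfalso
        have h1 := hmemA i u
        have h2 := hmemB i w'
        rw [hxy] at h1
        exact Finset.disjoint_left.mp hd h1 h2
      · exfalso
        have h1 := hmemB i w
        have h2 := hmemA i u'
        rw [hxy] at h1
        exact Finset.disjoint_left.mp hd h2 h1
      · have := Subtype.coe_injective (a₁ := (((e i : Finset (Fin n) × Finset (Fin n))).2.equivFinOfCardEq (hgood₁ i).2.1).symm w) (a₂ := (((e i : Finset (Fin n) × Finset (Fin n))).2.equivFinOfCardEq (hgood₁ i).2.1).symm w') hxy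
        have hw := ((((e i : Finset (Fin n) × Finset (Fin n))).2.equivFinOfCardEq (hgood₁ i).2.1).symm.injective this)
        rw [hw]
  -- define W
  refine ⟨F₀.biUnion (fun p => p.1 ∪ p.2), ?_, ?_⟩
  · calc (F₀.biUnion (fun p => p.1 ∪ p.2)).card ≤ ∑ p ∈ F₀, (p.1 ∪ p.2).card :=
        Finset.card_biUnion_le
      _ ≤ ∑ p ∈ F₀, (a+b) := by
          apply Finset.sum_le_sum
          intro p hp
          calc (p.1 ∪ p.2).card ≤ p.1.card + p.2.card := Finset.card_union_le _ _
            _ = a + b := by rw [(hF₀good p hp).1, (hF₀good p hp).2.1]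
      _ = F₀.card * (a+b) := by rw [Finset.sum_const, smul_eq_mul]
      _ ≤ t * (a+b) := Nat.mul_le_mul_right _ hcardF
  · intro A B hA hB hdisj hcA hcB hadj
    set W := F₀.biUnion (fun p => p.1 ∪ p.2) with hW
    have hgoodAB : good (A, B) := ⟨hcA, hcB, hdisj, hadj⟩
    have hnotmem : (A, B) ∉ F₀ := by
      intro hmem
      have hAW : A ⊆ W := by
        intro x hx
        exact Finset.mem_biUnion.mpr ⟨(A, B), hmem, Finset.mem_union_left _ hx⟩
      obtain ⟨x, hx⟩ := Finset.card_pos.mp (by omega : 0 < A.card)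
      exact (Finset.mem_compl.mp (hA hx)) (hAW hx)
    have hins : insert (A, B) F₀ ∈ cand := by
      rw [hcand, Finset.mem_filter]
      refine ⟨Finset.mem_univ _, fun p hp => ?_, ?_⟩
      · rcases Finset.mem_insert.mp hp with rfl | hp
        · exact hgoodAB
        · exact hF₀good p hp
      · rw [Finset.coe_insert]
        haveI : Std.Symm (fun p q : Finset (Fin n) × Finset (Fin n) => Disjoint (p.1 ∪ p.2) (q.1 ∪ q.2)) := ⟨fun p q h => h.symm⟩; rw [Set.pairwise_insert_of_symm]
        refine ⟨hF₀pair, fun q hq _ => ?_⟩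
        rw [Finset.disjoint_left]
        intro x hx hxq
        have hxW : x ∈ W :=
          Finset.mem_biUnion.mpr ⟨q, Finset.mem_coe.mp hq, hxq⟩
        have hxWc : x ∈ Wᶜ := by
          rcases Finset.mem_union.mp hx with h | h
          · exact hA h
          · exact hB h
        exact (Finset.mem_compl.mp hxWc) hxW
    have := hmax _ hins
    rw [Finset.card_insert_of_notMem hnotmem] at this
    omega

lemma gam_nonneg (s a : ℕ) : 0 ≤ gam s a := by
  rcases Nat.eq_zero_or_pos s with rfl | hs
  · simp [gam]
  · apply div_nonneg
    · have h1 : (1:ℝ) ≤ (s:ℝ) := by exact_mod_cast hs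
      nlinarith
    · positivity

lemma cexp_nonneg {s a : ℕ} (ha : 1 ≤ a) (h : s ≤ a + 1) : 0 ≤ (s:ℝ) - gam s a := by
  have ha0 : (0:ℝ) < 2*(a:ℝ) := by
    have : (1:ℝ) ≤ (a:ℝ) := by exact_mod_cast ha
    linarith
  have hs : (s:ℝ) ≤ (a:ℝ) + 1 := by exact_mod_cast h
  rw [sub_nonneg, gam, div_le_iff₀ ha0]
  have hs0 : (0:ℝ) ≤ (s:ℝ) := Nat.cast_nonneg s
  nlinarith

lemma cexp_mono {a : ℕ} (ha : 1 ≤ a) {x y : ℕ} (hxy : x ≤ y) (hsum : x + y ≤ 2*a + 1) :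
    (x:ℝ) - gam x a ≤ (y:ℝ) - gam y a := by
  have ha0 : (0:ℝ) < 2*(a:ℝ) := by
    have : (1:ℝ) ≤ (a:ℝ) := by exact_mod_cast ha
    linarith
  have hxyR : (x:ℝ) ≤ (y:ℝ) := by exact_mod_cast hxy
  have hsumR : (x:ℝ) + (y:ℝ) ≤ 2*(a:ℝ) + 1 := by exact_mod_cast hsum
  have key : ((y:ℝ) - gam y a) - ((x:ℝ) - gam x a)
      = ((y:ℝ)-(x:ℝ))*(2*(a:ℝ) - ((x:ℝ)+(y:ℝ)-1))/(2*(a:ℝ)) := by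
    rw [gam, gam]
    field_simp
    ring
  have h0 : 0 ≤ ((y:ℝ)-(x:ℝ))*(2*(a:ℝ) - ((x:ℝ)+(y:ℝ)-1))/(2*(a:ℝ)) :=
    div_nonneg (mul_nonneg (by linarith) (by linarith)) (by linarith)
  linarith


set_option maxHeartbeats 2000000 in
/-- upper bound for `ex(n, K_r, (t+1)K_{a,b})`. -/
theorem stmt0 (t r a b : ℕ) (htr : r ≤ t) (hr : 3 ≤ r) (ha : 2 * (r - 1) ≤ a)
    (hb : Nat.factorial (a - 1) + 1 ≤ b) (ε : ℝ) (hε : 0 < ε) :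
    ∃ N : ℕ, ∀ n : ℕ, N ≤ n →
      (exTuran n r (multiCopies (t + 1) (completeBipartiteGraph (Fin a) (Fin b))) : ℝ) ≤
        ∑ s ∈ Finset.range (r + 1),
          (Nat.choose t (r - s) : ℝ) * (1 / (Nat.factorial s : ℝ) + ε) *
            ((b : ℝ) - 1) ^ ((s : ℝ) * ((s : ℝ) - 1) / (2 * (a : ℝ))) *
            ((n : ℝ) - (t : ℝ)) ^ ((s : ℝ) - (s : ℝ) * ((s : ℝ) - 1) / (2 * (a : ℝ))) := by
  classical
  have hfact1 : 1 ≤ (a-1).factorial := Nat.one_le_iff_ne_zero.mpr (Nat.factorial_ne_zero _)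
  have hb2 : 2 ≤ b := by omega
  have ha1 : 1 ≤ a := by omega
  have hr1 : 1 ≤ r := by omega
  have hrb1 : (1:ℝ) ≤ (b:ℝ) - 1 := by
    have : (2:ℝ) ≤ (b:ℝ) := by exact_mod_cast hb2
    linarith
  obtain ⟨Cr, hCr0, hCr⟩ := REF r a b ha1 ha hb2 (ε/2) (by positivity)
  have hREFs : ∀ s : ℕ, ∃ C : ℝ, 0 ≤ C ∧ (s ≤ r →
      ∀ (n : ℕ) (G : SimpleGraph (Fin n)) (X : Finset (Fin n)), bfr G a b X →
        (cnt G s X : ℝ) ≤ (1/((s.factorial : ℕ) : ℝ) + 1) * ((b:ℝ)-1)^(gam s a) *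
          (X.card : ℝ)^((s:ℝ) - gam s a) + C) := by
    intro s
    by_cases hs : s ≤ r
    · obtain ⟨C, h0, h⟩ := REF s a b ha1 (by omega) hb2 1 one_pos
      exact ⟨C, h0, fun _ => h⟩
    · exact ⟨0, le_refl 0, fun h => absurd h hs⟩
  choose CC hCC0 hCC using hREFs
  set βr : ℝ := ((b:ℝ)-1)^(gam r a) with hβr
  have hβr0 : 0 < βr := Real.rpow_pos_of_pos (by linarith) _
  set cr : ℝ := (r:ℝ) - gam r a with hcr
  set cp : ℝ := ((r-1:ℕ):ℝ) - gam (r-1) a with hcp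
  have hr1c : ((r-1:ℕ):ℝ) = (r:ℝ) - 1 := by
    rw [Nat.cast_sub hr1]
    norm_num
  have hcrR : (1:ℝ) ≤ (r:ℝ) := by exact_mod_cast hr1
  have haR : 2*((r:ℝ)-1) ≤ (a:ℝ) := by
    have h := ha
    have h2 : ((2*(r-1) : ℕ) : ℝ) ≤ (a:ℝ) := by exact_mod_cast h
    push_cast [Nat.cast_sub hr1] at h2
    linarith
  have hrR3 : (3:ℝ) ≤ (r:ℝ) := by exact_mod_cast hr
  have haR4 : (4:ℝ) ≤ (a:ℝ) := by linarith
  have hcr0 : 0 ≤ cr := cexp_nonneg ha1 (by omega)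
  have hcp0 : 0 ≤ cp := by
    rw [hcp]
    exact cexp_nonneg ha1 (by omega)
  have hΔ : cr - cp = 1 - ((r:ℝ)-1)/(a:ℝ) := by
    rw [hcr, hcp, hr1c, gam, gam, hr1c]
    have h1 : (a:ℝ) ≠ 0 := by linarith
    field_simp
    ring
  have hΔ0 : 0 < cr - cp := by
    rw [hΔ]
    have h1 : ((r:ℝ)-1)/(a:ℝ) ≤ 1/2 := by
      rw [div_le_iff₀ (by linarith)]
      linarith
    linarith
  set w : ℕ := t*(a+b) with hw
  set K1 : ℝ := ∑ j ∈ Finset.range r, (w.choose (j+1) : ℝ) *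
      ((1/((((r-(j+1)).factorial : ℕ)) : ℝ)+1) * ((b:ℝ)-1)^(gam (r-(j+1)) a)) with hK1
  set K2 : ℝ := ∑ j ∈ Finset.range r, (w.choose (j+1) : ℝ) * CC (r-(j+1)) with hK2
  have hK10 : 0 ≤ K1 := by
    apply Finset.sum_nonneg
    intro j _
    have h1 : (0:ℝ) < (((r-(j+1)).factorial : ℕ) : ℝ) := by
      exact_mod_cast Nat.factorial_pos _
    have h2 : (0:ℝ) ≤ ((b:ℝ)-1)^(gam (r-(j+1)) a) := Real.rpow_nonneg (by linarith) _
    positivity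
  have hK20 : 0 ≤ K2 := by
    apply Finset.sum_nonneg
    intro j _
    exact mul_nonneg (Nat.cast_nonneg _) (hCC0 _)
  -- per-graph bound
  have hper : ∀ (n : ℕ) (G : SimpleGraph (Fin n)), 1 ≤ n →
      (multiCopies (t + 1) (completeBipartiteGraph (Fin a) (Fin b))).FreeIn G →
      (cliqueCount G r : ℝ) ≤ (1/((r.factorial : ℕ) : ℝ) + ε/2)*βr*((n:ℝ))^cr
        + K1*((n:ℝ))^cp + (Cr + K2) := by
    intro n G hn hfree
    obtain ⟨W, hWcard, hWfree⟩ := exists_W ha1 (by omega) G hfree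
    have hn1R : (1:ℝ) ≤ (n:ℝ) := by exact_mod_cast hn
    have hcompl : ((Wᶜ : Finset (Fin n)).card : ℝ) ≤ (n:ℝ) := by
      have := Finset.card_le_univ (Wᶜ : Finset (Fin n))
      calc ((Wᶜ : Finset (Fin n)).card : ℝ) ≤ ((univ : Finset (Fin n)).card : ℝ) := by
            exact_mod_cast this
        _ = (n:ℝ) := by rw [Finset.card_univ, Fintype.card_fin]
    have hsplit := cnt_split G r W
    have hsplitR : (cliqueCount G r : ℝ)
        ≤ ∑ j ∈ Finset.range (r+1), ((W.card).choose j : ℝ) * (cnt G (r-j) Wᶜ : ℝ) := by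
      rw [cliqueCount_eq_cnt]
      calc (cnt G r univ : ℝ)
          ≤ ((∑ j ∈ Finset.range (r+1), (W.card).choose j * cnt G (r-j) Wᶜ : ℕ) : ℝ) := by
            exact_mod_cast hsplit
        _ = ∑ j ∈ Finset.range (r+1), ((W.card).choose j : ℝ) * (cnt G (r-j) Wᶜ : ℝ) := by
            push_cast
            ring
    rw [Finset.sum_range_succ'] at hsplitR
    -- j = 0 term
    have hterm0 : ((W.card).choose 0 : ℝ) * (cnt G (r-0) Wᶜ : ℝ)
        ≤ (1/((r.factorial : ℕ) : ℝ) + ε/2)*βr*((n:ℝ))^cr + Cr := by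
      rw [Nat.choose_zero_right, Nat.sub_zero, Nat.cast_one, one_mul]
      calc (cnt G r Wᶜ : ℝ)
          ≤ (1/((r.factorial : ℕ) : ℝ) + ε/2) * ((b:ℝ)-1)^(gam r a) *
              ((Wᶜ : Finset (Fin n)).card : ℝ)^((r:ℝ) - gam r a) + Cr := hCr n G Wᶜ hWfree
        _ ≤ (1/((r.factorial : ℕ) : ℝ) + ε/2)*βr*((n:ℝ))^cr + Cr := by
            have h1 : ((Wᶜ : Finset (Fin n)).card : ℝ)^((r:ℝ) - gam r a) ≤ ((n:ℝ))^cr := by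
              rw [hcr]
              exact Real.rpow_le_rpow (Nat.cast_nonneg _) hcompl hcr0
            have h2 : (0:ℝ) < ((r.factorial : ℕ) : ℝ) := by exact_mod_cast Nat.factorial_pos r
            have h3 : (0:ℝ) ≤ (1/((r.factorial : ℕ) : ℝ) + ε/2)*βr := by positivity
            have h4 := mul_le_mul_of_nonneg_left h1 h3
            rw [hβr]
            linarith only [h4]
    -- j ≥ 1 terms
    have hterm : ∀ j ∈ Finset.range r, ((W.card).choose (j+1) : ℝ) * (cnt G (r-(j+1)) Wᶜ : ℝ)
        ≤ (w.choose (j+1) : ℝ) * ((1/((((r-(j+1)).factorial : ℕ)) : ℝ)+1) *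
            ((b:ℝ)-1)^(gam (r-(j+1)) a)) * ((n:ℝ))^cp
          + (w.choose (j+1) : ℝ) * CC (r-(j+1)) := by
      intro j hj
      rw [Finset.mem_range] at hj
      set s' : ℕ := r-(j+1) with hs'
      have hs'le : s' ≤ r := by omega
      have hchle : ((W.card).choose (j+1) : ℝ) ≤ (w.choose (j+1) : ℝ) := by
        exact_mod_cast Nat.choose_le_choose (j+1) hWcard
      have hcnt : (cnt G s' Wᶜ : ℝ)
          ≤ (1/(((s'.factorial : ℕ)) : ℝ)+1) * ((b:ℝ)-1)^(gam s' a) * ((n:ℝ))^cp + CC s' := by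
        calc (cnt G s' Wᶜ : ℝ)
            ≤ (1/(((s'.factorial : ℕ)) : ℝ)+1) * ((b:ℝ)-1)^(gam s' a) *
                ((Wᶜ : Finset (Fin n)).card : ℝ)^((s':ℝ) - gam s' a) + CC s' :=
              hCC s' hs'le n G Wᶜ hWfree
          _ ≤ (1/(((s'.factorial : ℕ)) : ℝ)+1) * ((b:ℝ)-1)^(gam s' a) * ((n:ℝ))^cp + CC s' := by
              have h1 : ((Wᶜ : Finset (Fin n)).card : ℝ)^((s':ℝ) - gam s' a)
                  ≤ ((n:ℝ))^((s':ℝ) - gam s' a) := by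
                apply Real.rpow_le_rpow (Nat.cast_nonneg _) hcompl
                exact cexp_nonneg ha1 (by omega)
              have h2 : ((n:ℝ))^((s':ℝ) - gam s' a) ≤ ((n:ℝ))^cp := by
                apply Real.rpow_le_rpow_of_exponent_le hn1R
                rw [hcp]
                apply cexp_mono ha1 (by omega) (by omega)
              have h3 : (0:ℝ) < (((s'.factorial : ℕ)) : ℝ) := by
                exact_mod_cast Nat.factorial_pos s'
              have h4 : (0:ℝ) ≤ (1/(((s'.factorial : ℕ)) : ℝ)+1) * ((b:ℝ)-1)^(gam s' a) := by
                have h5 : (0:ℝ) ≤ ((b:ℝ)-1)^(gam s' a) := Real.rpow_nonneg (by linarith) _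
                positivity
              have h6 := mul_le_mul_of_nonneg_left (le_trans h1 h2) h4
              linarith only [h6]
      have hch0 : (0:ℝ) ≤ ((W.card).choose (j+1) : ℝ) := Nat.cast_nonneg _
      have hcnt0 : (0:ℝ) ≤ (cnt G s' Wᶜ : ℝ) := Nat.cast_nonneg _
      have hrhs0 : (0:ℝ) ≤ (1/(((s'.factorial : ℕ)) : ℝ)+1) * ((b:ℝ)-1)^(gam s' a) * ((n:ℝ))^cp + CC s' := by
        have h3 : (0:ℝ) < (((s'.factorial : ℕ)) : ℝ) := by exact_mod_cast Nat.factorial_pos s'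
        have h5 : (0:ℝ) ≤ ((b:ℝ)-1)^(gam s' a) := Real.rpow_nonneg (by linarith) _
        have h7 : (0:ℝ) ≤ ((n:ℝ))^cp := Real.rpow_nonneg (by linarith) _
        have h8 := hCC0 s'
        positivity
      calc ((W.card).choose (j+1) : ℝ) * (cnt G s' Wᶜ : ℝ)
          ≤ (w.choose (j+1) : ℝ) * ((1/(((s'.factorial : ℕ)) : ℝ)+1) * ((b:ℝ)-1)^(gam s' a) * ((n:ℝ))^cp + CC s') :=
            mul_le_mul hchle hcnt hcnt0 (Nat.cast_nonneg _)
        _ = (w.choose (j+1) : ℝ) * ((1/(((s'.factorial : ℕ)) : ℝ)+1) * ((b:ℝ)-1)^(gam s' a)) * ((n:ℝ))^cp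
            + (w.choose (j+1) : ℝ) * CC s' := by ring
    have hsumJ : ∑ j ∈ Finset.range r, ((W.card).choose (j+1) : ℝ) * (cnt G (r-(j+1)) Wᶜ : ℝ)
        ≤ K1*((n:ℝ))^cp + K2 := by
      calc ∑ j ∈ Finset.range r, ((W.card).choose (j+1) : ℝ) * (cnt G (r-(j+1)) Wᶜ : ℝ)
          ≤ ∑ j ∈ Finset.range r, ((w.choose (j+1) : ℝ) * ((1/((((r-(j+1)).factorial : ℕ)) : ℝ)+1) *
              ((b:ℝ)-1)^(gam (r-(j+1)) a)) * ((n:ℝ))^cp + (w.choose (j+1) : ℝ) * CC (r-(j+1))) :=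
            Finset.sum_le_sum hterm
        _ = K1*((n:ℝ))^cp + K2 := by
            rw [Finset.sum_add_distrib, hK1, hK2, Finset.sum_mul]
    linarith only [hsplitR, hterm0, hsumJ]
  -- eventual thresholds
  set θden : ℝ := 1/((r.factorial : ℕ) : ℝ) + ε with hθden
  set θnum : ℝ := 1/((r.factorial : ℕ) : ℝ) + 3*ε/4 with hθnum
  have hfr0 : (0:ℝ) < ((r.factorial : ℕ) : ℝ) := by exact_mod_cast Nat.factorial_pos r
  have hθd0 : 0 < θden := by rw [hθden]; positivity
  have hθn0 : 0 < θnum := by rw [hθnum]; positivity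
  have hθ : θnum/θden < 1 := by
    rw [div_lt_one hθd0, hθnum, hθden]
    linarith
  have ht0 : Filter.Tendsto (fun n : ℕ => (t:ℝ)/(n:ℝ)) Filter.atTop (nhds 0) :=
    tendsto_const_div_atTop_nhds_zero_nat (t:ℝ)
  have ht1 : Filter.Tendsto (fun n : ℕ => ((n:ℝ)-(t:ℝ))/(n:ℝ)) Filter.atTop (nhds 1) := by
    have h2 : Filter.Tendsto (fun n : ℕ => 1 - (t:ℝ)/(n:ℝ)) Filter.atTop (nhds 1) := by
      have h3 := (tendsto_const_nhds (x := (1:ℝ)) (f := (Filter.atTop : Filter ℕ))).sub ht0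
      simpa using h3
    apply h2.congr'
    filter_upwards [Filter.eventually_gt_atTop 0] with n hn
    have hn0 : (n:ℝ) ≠ 0 := by
      have : (0:ℝ) < (n:ℝ) := by exact_mod_cast hn
      linarith
    field_simp
  have f1 : Filter.Tendsto (fun n : ℕ => (((n:ℝ)-(t:ℝ))/(n:ℝ))^cr) Filter.atTop (nhds 1) := by
    have h4 := ht1.rpow_const (p := cr) (Or.inr hcr0)
    simpa using h4
  obtain ⟨N₁, hN₁⟩ := Filter.eventually_atTop.mp (f1.eventually (eventually_gt_nhds hθ))
  obtain ⟨N₂, hN₂⟩ := exists_nat_rpow_ge (cr - cp) ((K1 + Cr + K2)*4/(ε*βr) + 1) hΔ0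
  refine ⟨max (max N₁ N₂) (t+1), fun n hn => ?_⟩
  have hnN₁ : N₁ ≤ n := le_trans (le_trans (le_max_left _ _) (le_max_left _ _)) hn
  have hnN₂ : N₂ ≤ n := le_trans (le_trans (le_max_right _ _) (le_max_left _ _)) hn
  have hnt : t+1 ≤ n := le_trans (le_max_right _ _) hn
  have hn1 : 1 ≤ n := by omega
  have hn0R : (0:ℝ) < (n:ℝ) := by exact_mod_cast (by omega : 0 < n)
  have hn1R : (1:ℝ) ≤ (n:ℝ) := by exact_mod_cast hn1
  have hntR : (t:ℝ) + 1 ≤ (n:ℝ) := by exact_mod_cast hnt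
  have hnt0 : (0:ℝ) ≤ (n:ℝ) - (t:ℝ) := by linarith
  apply exTuran_le_of_forall
  · rintro ⟨f, -⟩
    have hadj : (multiCopies (t+1) (completeBipartiteGraph (Fin a) (Fin b))).Adj
        (⟨0, by omega⟩, Sum.inl ⟨0, by omega⟩) (⟨0, by omega⟩, Sum.inr ⟨0, by omega⟩) := by
      refine ⟨rfl, ?_⟩
      simp [completeBipartiteGraph]
    exact absurd (f.map_adj hadj) (by simp)
  · intro G hG
    have hbound := hper n G hn1 hG
    set S : ℝ := K1 + Cr + K2 with hS
    have hS0 : 0 ≤ S := by rw [hS]; linarith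
    have h2 : S*4/(ε*βr) + 1 ≤ ((n:ℝ))^(cr-cp) := hN₂ n hnN₂
    have h3 : S ≤ (ε/4)*βr*((n:ℝ))^(cr-cp) := by
      have hεβ : (0:ℝ) < ε*βr/4 := by positivity
      have h4 := mul_le_mul_of_nonneg_right h2 (le_of_lt hεβ)
      have h5 : (S*4/(ε*βr) + 1)*(ε*βr/4) = S + ε*βr/4 := by
        field_simp
      rw [h5] at h4
      calc S ≤ S + ε*βr/4 := by linarith
        _ ≤ ((n:ℝ))^(cr-cp) * (ε*βr/4) := h4
        _ = (ε/4)*βr*((n:ℝ))^(cr-cp) := by ring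
    have hncp1 : (1:ℝ) ≤ ((n:ℝ))^cp := by
      calc (1:ℝ) = (1:ℝ)^cp := (Real.one_rpow cp).symm
        _ ≤ ((n:ℝ))^cp := Real.rpow_le_rpow (by norm_num) hn1R hcp0
    have hncp0 : (0:ℝ) ≤ ((n:ℝ))^cp := by linarith
    have e1 : K1*((n:ℝ))^cp + (Cr + K2) ≤ (ε/4)*βr*((n:ℝ))^cr := by
      have h6 : K1*((n:ℝ))^cp + (Cr + K2) ≤ S * ((n:ℝ))^cp := by
        rw [hS]
        have h7 : (Cr + K2) * 1 ≤ (Cr + K2) * ((n:ℝ))^cp :=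
          mul_le_mul_of_nonneg_left hncp1 (by linarith)
        nlinarith [h7]
      have h8 := mul_le_mul_of_nonneg_right h3 hncp0
      have h9 : (ε/4)*βr*((n:ℝ))^(cr-cp) * ((n:ℝ))^cp = (ε/4)*βr*((n:ℝ))^cr := by
        rw [mul_assoc ((ε/4)*βr), ← Real.rpow_add hn0R]
        congr 2
        ring
      calc K1*((n:ℝ))^cp + (Cr + K2) ≤ S * ((n:ℝ))^cp := h6
        _ ≤ (ε/4)*βr*((n:ℝ))^(cr-cp) * ((n:ℝ))^cp := h8
        _ = (ε/4)*βr*((n:ℝ))^cr := h9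
    have e2 : (cliqueCount G r : ℝ) ≤ θnum * (βr * ((n:ℝ))^cr) := by
      rw [hθnum]
      have h10 : (1/((r.factorial : ℕ) : ℝ) + ε/2)*βr*((n:ℝ))^cr + (ε/4)*βr*((n:ℝ))^cr
          = (1/((r.factorial : ℕ) : ℝ) + 3*ε/4) * (βr * ((n:ℝ))^cr) := by
        ring
      linarith only [hbound, e1, h10]
    have hveq : (((n:ℝ)-(t:ℝ))/(n:ℝ))^cr * ((n:ℝ))^cr = ((n:ℝ)-(t:ℝ))^cr := by
      rw [Real.div_rpow hnt0 (le_of_lt hn0R)]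
      have h11 : ((n:ℝ))^cr ≠ 0 := ne_of_gt (Real.rpow_pos_of_pos hn0R cr)
      field_simp
    have e3 : θnum * (βr * ((n:ℝ))^cr) ≤ θden * (βr * (((n:ℝ)-(t:ℝ))^cr)) := by
      have h12 : θnum/θden < (((n:ℝ)-(t:ℝ))/(n:ℝ))^cr := hN₁ n hnN₁
      have h13 : θnum ≤ θden * ((((n:ℝ)-(t:ℝ))/(n:ℝ))^cr) := by
        rw [div_lt_iff₀ hθd0] at h12
        linarith only [h12]
      have h14 : (0:ℝ) ≤ βr * ((n:ℝ))^cr :=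
        mul_nonneg (le_of_lt hβr0) (Real.rpow_nonneg (le_of_lt hn0R) _)
      calc θnum * (βr * ((n:ℝ))^cr) ≤ (θden * ((((n:ℝ)-(t:ℝ))/(n:ℝ))^cr)) * (βr * ((n:ℝ))^cr) :=
            mul_le_mul_of_nonneg_right h13 h14
        _ = θden * (βr * ((((n:ℝ)-(t:ℝ))/(n:ℝ))^cr * ((n:ℝ))^cr)) := by ring
        _ = θden * (βr * (((n:ℝ)-(t:ℝ))^cr)) := by rw [hveq]
    have e4 : θden * (βr * (((n:ℝ)-(t:ℝ))^cr))
        ≤ ∑ s ∈ Finset.range (r + 1),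
          (Nat.choose t (r - s) : ℝ) * (1 / (Nat.factorial s : ℝ) + ε) *
            ((b : ℝ) - 1) ^ ((s : ℝ) * ((s : ℝ) - 1) / (2 * (a : ℝ))) *
            ((n : ℝ) - (t : ℝ)) ^ ((s : ℝ) - (s : ℝ) * ((s : ℝ) - 1) / (2 * (a : ℝ))) := by
      have hr_mem : r ∈ Finset.range (r+1) := Finset.self_mem_range_succ r
      have hterm_eq : (Nat.choose t (r - r) : ℝ) * (1 / (Nat.factorial r : ℝ) + ε) *
            ((b : ℝ) - 1) ^ ((r : ℝ) * ((r : ℝ) - 1) / (2 * (a : ℝ))) *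
            ((n : ℝ) - (t : ℝ)) ^ ((r : ℝ) - (r : ℝ) * ((r : ℝ) - 1) / (2 * (a : ℝ)))
          = θden * (βr * (((n:ℝ)-(t:ℝ))^cr)) := by
        rw [Nat.sub_self, Nat.choose_zero_right, Nat.cast_one, hθden, hβr, hcr, gam]
        ring
      rw [← hterm_eq]
      apply Finset.single_le_sum (f := fun s => (Nat.choose t (r - s) : ℝ) * (1 / (Nat.factorial s : ℝ) + ε) *
            ((b : ℝ) - 1) ^ ((s : ℝ) * ((s : ℝ) - 1) / (2 * (a : ℝ))) *
            ((n : ℝ) - (t : ℝ)) ^ ((s : ℝ) - (s : ℝ) * ((s : ℝ) - 1) / (2 * (a : ℝ)))) ?_ hr_mem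
      intro s _
      have hf0 : (0:ℝ) < (Nat.factorial s : ℝ) := by exact_mod_cast Nat.factorial_pos s
      have hb0 : (0:ℝ) ≤ ((b:ℝ)-1) ^ ((s : ℝ) * ((s : ℝ) - 1) / (2 * (a : ℝ))) :=
        Real.rpow_nonneg (by linarith) _
      have hn0 : (0:ℝ) ≤ ((n : ℝ) - (t : ℝ)) ^ ((s : ℝ) - (s : ℝ) * ((s : ℝ) - 1) / (2 * (a : ℝ))) :=
        Real.rpow_nonneg hnt0 _
      have hc0' : (0:ℝ) ≤ (Nat.choose t (r - s) : ℝ) := Nat.cast_nonneg _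
      have he0 : (0:ℝ) ≤ 1 / (Nat.factorial s : ℝ) + ε := by positivity
      positivity
    calc (cliqueCount G r : ℝ) ≤ θnum * (βr * ((n:ℝ))^cr) := e2
      _ ≤ θden * (βr * (((n:ℝ)-(t:ℝ))^cr)) := e3
      _ ≤ _ := e4
end

section
/- Let t ≥ r ≥ 3 and k ≥ 2 be integers. Then for all n ≥ t + 2k, ex(n, K_r, (t+1)C_{2k}) ≥ C(t, r) + C(t, r-1)·(n-t) + max_{2 ≤ s ≤ r} C(t, r-s)·ex(n-t, K_s, C_{2k}). -/
open Finset

lemma cliqueCount_le_pow {β : Type*} [Fintype β] (G : SimpleGraph β) (r : ℕ) :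
    cliqueCount G r ≤ 2 ^ Fintype.card β := by
  have h1 : Nat.card {s : Finset β // G.IsNClique r s} ≤ Nat.card (Finset β) :=
    Nat.card_le_card_of_injective Subtype.val Subtype.val_injective
  simpa [cliqueCount, Nat.card_eq_fintype_card, Fintype.card_finset] using h1

lemma exTuran_bddAbove {α : Type*} (n r : ℕ) (F : SimpleGraph α) :
    BddAbove {m : ℕ | ∃ G : SimpleGraph (Fin n), F.FreeIn G ∧ m = cliqueCount G r} := by
  refine ⟨2 ^ n, ?_⟩
  rintro m ⟨G, -, rfl⟩
  simpa using cliqueCount_le_pow G r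

lemma le_exTuran {α : Type*} {n r : ℕ} {F : SimpleGraph α} {G : SimpleGraph (Fin n)}
    (h : F.FreeIn G) : cliqueCount G r ≤ exTuran n r F :=
  le_csSup (exTuran_bddAbove n r F) ⟨G, h, rfl⟩

lemma free_bot {α β : Type*} {F : SimpleGraph α} (h : ∃ a b, F.Adj a b) :
    F.FreeIn (⊥ : SimpleGraph β) := by
  rintro ⟨f, -⟩
  obtain ⟨a, b, hab⟩ := h
  exact f.map_adj hab

lemma exTuran_spec {α : Type*} (n r : ℕ) (F : SimpleGraph α) (h : ∃ a b, F.Adj a b) :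
    ∃ G : SimpleGraph (Fin n), F.FreeIn G ∧ cliqueCount G r = exTuran n r F := by
  have hmem := Nat.sSup_mem (s := {m : ℕ | ∃ G : SimpleGraph (Fin n), F.FreeIn G ∧ m = cliqueCount G r})
    ⟨_, ⊥, free_bot h, rfl⟩ (exTuran_bddAbove n r F)
  obtain ⟨G, hG, hc⟩ := hmem
  exact ⟨G, hG, hc.symm⟩

lemma cycle_has_edge {k : ℕ} (hk : 1 ≤ k) :
    ∃ a b, (SimpleGraph.cycleGraph (2 * k)).Adj a b := by
  have h2 : 1 < 2 * k := by omega
  refine ⟨⟨0, by omega⟩, ⟨1, h2⟩, ?_⟩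
  rw [SimpleGraph.cycleGraph_adj']
  right
  simp only [Fin.sub_def, Fin.val_mk]
  rw [Nat.sub_zero, Nat.add_mod_left, Nat.mod_eq_of_lt h2]

lemma join_clique {t m r j : ℕ} (H : SimpleGraph (Fin m)) (T : Finset (Fin t))
    (U : Finset (Fin m)) (hT : T.card = r - j) (hj : j ≤ r) (hU : H.IsNClique j U) :
    (joinG (⊤ : SimpleGraph (Fin t)) H).IsNClique r
      (T.map Function.Embedding.inl ∪ U.map Function.Embedding.inr) := by
  constructor
  · intro x hx y hy hxy
    simp only [coe_union, coe_map, Set.mem_union, Set.mem_image, mem_coe,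
      Function.Embedding.inl_apply, Function.Embedding.inr_apply] at hx hy
    obtain (⟨a, ha, rfl⟩ | ⟨a, ha, rfl⟩) := hx <;> obtain (⟨b, hb, rfl⟩ | ⟨b, hb, rfl⟩) := hy
    · have hab : a ≠ b := fun h => hxy (by rw [h])
      exact hab
    · trivial
    · trivial
    · exact hU.1 ha hb (fun h => hxy (by rw [h]))
  · rw [card_union_of_disjoint, card_map, card_map, hT, hU.2]
    · omega
    · simp [Finset.disjoint_left]

lemma comap_clique {α β : Type*} (e : α ≃ β) (J : SimpleGraph β) {r : ℕ} {S : Finset β}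
    (h : J.IsNClique r S) : (J.comap e).IsNClique r (S.map e.symm.toEmbedding) := by
  constructor
  · intro x hx y hy hxy
    simp only [coe_map, Set.mem_image, mem_coe, Equiv.coe_toEmbedding] at hx hy
    obtain ⟨a, ha, rfl⟩ := hx
    obtain ⟨b, hb, rfl⟩ := hy
    have hab : J.Adj a b := h.1 ha hb (fun hh => hxy (by rw [hh]))
    show J.Adj (e (e.symm a)) (e (e.symm b))
    simpa using hab
  · rw [card_map, h.2]

lemma union_map_inj {t m : ℕ} {T T' : Finset (Fin t)} {U U' : Finset (Fin m)}
    (h : T.map Function.Embedding.inl ∪ U.map Function.Embedding.inr =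
         T'.map Function.Embedding.inl ∪ U'.map Function.Embedding.inr) :
    T = T' ∧ U = U' := by
  constructor
  · ext a
    have := Finset.ext_iff.mp h (Sum.inl a)
    simpa using this
  · ext a
    have := Finset.ext_iff.mp h (Sum.inr a)
    simpa using this

lemma union_card_right {t m : ℕ} (T : Finset (Fin t)) (U U' : Finset (Fin m))
    (T' : Finset (Fin t))
    (h : T.map Function.Embedding.inl ∪ U.map Function.Embedding.inr =
         T'.map Function.Embedding.inl ∪ U'.map Function.Embedding.inr) : U = U' :=
  (union_map_inj h).2

lemma join_free {t m k : ℕ} (H : SimpleGraph (Fin m))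
    (hH : (SimpleGraph.cycleGraph (2 * k)).FreeIn H) :
    (multiCopies (t + 1) (SimpleGraph.cycleGraph (2 * k))).FreeIn
      (joinG (⊤ : SimpleGraph (Fin t)) H) := by
  rintro ⟨f, hf⟩
  have key : ∀ i : Fin (t + 1), ∃ x v, f (i, x) = Sum.inl v := by
    intro i
    by_contra hcon
    push_neg at hcon
    have hall : ∀ x, ∃ u, f (i, x) = Sum.inr u := by
      intro x
      cases hfx : f (i, x) with
      | inl v => exact absurd hfx (hcon x v)
      | inr u => exact ⟨u, rfl⟩
    choose g hg using hall
    refine hH ⟨⟨g, fun {a b} hab => ?_⟩, fun a b hab => ?_⟩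
    · have h2 : (joinG (⊤ : SimpleGraph (Fin t)) H).Adj (f (i, a)) (f (i, b)) :=
        f.map_adj ⟨rfl, hab⟩
      rw [hg a, hg b] at h2
      exact h2
    · have hab' : g a = g b := hab
      have he : f (i, a) = f (i, b) := by rw [hg a, hg b, hab']
      have := hf he
      exact (Prod.ext_iff.mp this).2
  choose xf vf hfv using key
  have hinj : Function.Injective vf := by
    intro i j hij
    have he : f (i, xf i) = f (j, xf j) := by rw [hfv i, hfv j, hij]
    exact (Prod.ext_iff.mp (hf he)).1
  have := Fintype.card_le_of_injective vf hinj
  simp only [Fintype.card_fin] at this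
  omega

/-- lower bound for `ex(n, K_r, (t+1)C_{2k})`. -/
theorem stmt4 (t r k : ℕ) (htr : r ≤ t) (hr : 3 ≤ r) (hk : 2 ≤ k) :
    ∀ n : ℕ, t + 2 * k ≤ n →
      Nat.choose t r + Nat.choose t (r - 1) * (n - t) +
          (Finset.Icc 2 r).sup (fun s => Nat.choose t (r - s) * exTuran (n - t) s (SimpleGraph.cycleGraph (2 * k)))
        ≤ exTuran n r (multiCopies (t + 1) (SimpleGraph.cycleGraph (2 * k))) := by
  intro n hn
  set m := n - t with hm
  have hedge := cycle_has_edge (k := k) (by omega)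
  -- choose s achieving the sup
  obtain ⟨s, hsmem, hs_eq⟩ := Finset.exists_mem_eq_sup (Finset.Icc 2 r)
    ⟨2, by simp [Finset.mem_Icc]; omega⟩
    (fun s => Nat.choose t (r - s) * exTuran m s (SimpleGraph.cycleGraph (2 * k)))
  rw [Finset.mem_Icc] at hsmem
  obtain ⟨hs2, hsr⟩ := hsmem
  -- extremal graph H
  obtain ⟨H, hHfree, hHcount⟩ := exTuran_spec m s (SimpleGraph.cycleGraph (2 * k)) hedge
  -- the construction
  have hnm : n = t + m := by omega
  let e : Fin n ≃ (Fin t ⊕ Fin m) := (finCongr hnm).trans finSumFinEquiv.symm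
  let J : SimpleGraph (Fin t ⊕ Fin m) := joinG (⊤ : SimpleGraph (Fin t)) H
  let G : SimpleGraph (Fin n) := J.comap e
  -- G is free
  have hGfree : (multiCopies (t + 1) (SimpleGraph.cycleGraph (2 * k))).FreeIn G := by
    rintro ⟨f, hf⟩
    refine join_free H hHfree ⟨⟨fun x => e (f x), fun {a b} hab => ?_⟩, ?_⟩
    · exact f.map_adj hab
    · exact fun a b hab => hf (e.injective hab)
  -- counting: injection into cliques of G
  have hcount : Nat.choose t r + Nat.choose t (r - 1) * m + Nat.choose t (r - s) * cliqueCount H s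
      ≤ cliqueCount G r := by
    classical
    let D := ({T : Finset (Fin t) // T.card = r} ⊕
      ({T : Finset (Fin t) // T.card = r - 1} × Fin m) ⊕
      ({T : Finset (Fin t) // T.card = r - s} × {U : Finset (Fin m) // H.IsNClique s U}))
    let patch : Finset (Fin t) → Finset (Fin m) → Finset (Fin n) := fun T U =>
      (T.map Function.Embedding.inl ∪ U.map Function.Embedding.inr).map e.symm.toEmbedding
    have hpatch : ∀ (T : Finset (Fin t)) (U : Finset (Fin m)) (j : ℕ), T.card = r - j → j ≤ r →
        H.IsNClique j U → G.IsNClique r (patch T U) := by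
      intro T U j hT hj hU
      exact comap_clique e J (join_clique H T U hT hj hU)
    have hpinj : ∀ {T T' : Finset (Fin t)} {U U' : Finset (Fin m)},
        patch T U = patch T' U' → T = T' ∧ U = U' := by
      intro T T' U U' h
      exact union_map_inj (Finset.map_injective _ h)
    let F : D → {S : Finset (Fin n) // G.IsNClique r S} := fun d =>
      match d with
      | Sum.inl ⟨T, hT⟩ => ⟨patch T ∅, hpatch T ∅ 0 (by omega) (by omega)
          (by constructor <;> simp [SimpleGraph.IsClique])⟩
      | Sum.inr (Sum.inl (⟨T, hT⟩, v)) => ⟨patch T {v}, hpatch T {v} 1 (by omega) (by omega)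
          (by constructor <;> simp [SimpleGraph.IsClique])⟩
      | Sum.inr (Sum.inr (⟨T, hT⟩, ⟨U, hU⟩)) => ⟨patch T U, hpatch T U s (by omega) hsr hU⟩
    have hFinj : Function.Injective F := by
      rintro (⟨T, hT⟩ | ⟨⟨T, hT⟩, v⟩ | ⟨⟨T, hT⟩, U, hU⟩)
        (⟨T', hT'⟩ | ⟨⟨T', hT'⟩, v'⟩ | ⟨⟨T', hT'⟩, U', hU'⟩) h <;>
        simp only [F, Subtype.mk.injEq] at h <;>
        obtain ⟨h1, h2⟩ := hpinj h
      · simp [h1]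
      · exact absurd (congrArg Finset.card h2) (by simp)
      · exact absurd (congrArg Finset.card h2) (by simp [hU'.2]; omega)
      · exact absurd (congrArg Finset.card h2) (by simp)
      · have : v = v' := by simpa using h2
        simp [h1, this]
      · exact absurd (congrArg Finset.card h2) (by simp [hU'.2]; omega)
      · exact absurd (congrArg Finset.card h2) (by simp [hU.2]; omega)
      · exact absurd (congrArg Finset.card h2) (by simp [hU.2]; omega)
      · simp [h1, h2]
    have hle : Nat.card D ≤ cliqueCount G r := by
      have := Nat.card_le_card_of_injective F hFinj
      exact this
    have hD : Nat.card D = Nat.choose t r + (Nat.choose t (r - 1) * m +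
        Nat.choose t (r - s) * cliqueCount H s) := by
      rw [Nat.card_sum, Nat.card_sum, Nat.card_prod, Nat.card_prod]
      have h1 : Nat.card {T : Finset (Fin t) // T.card = r} = Nat.choose t r := by
        rw [Nat.card_eq_fintype_card, Fintype.card_finset_len, Fintype.card_fin]
      have h2 : Nat.card {T : Finset (Fin t) // T.card = r - 1} = Nat.choose t (r - 1) := by
        rw [Nat.card_eq_fintype_card, Fintype.card_finset_len, Fintype.card_fin]
      have h3 : Nat.card {T : Finset (Fin t) // T.card = r - s} = Nat.choose t (r - s) := by
        rw [Nat.card_eq_fintype_card, Fintype.card_finset_len, Fintype.card_fin]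
      rw [h1, h2, h3, Nat.card_eq_fintype_card (α := Fin m), Fintype.card_fin]
      rfl
    omega
  rw [hs_eq, ← hHcount]
  exact le_trans hcount (le_exTuran hGfree)
end

section
/- Let t ≥ r ≥ 3 be integers, a ≥ 2(r-1), b ≥ (a-1)! + 1, and let β be a real number with r - 1 - (r-1)(r-2)/(2(a-1)) < β < r - 1 - (r-1)(r-2)/(2a). Then there exists N such that for all n ≥ N the following holds: if G is a graph on n vertices containing t+1 distinct vertices each of which lies in at least n^β/(2(a+b)t) copies of K_r, then G contains t+1 pairwise vertex-disjoint copies of K_{a,b}. -/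
open Finset

namespace Stmt10Aux

open Finset

/-- The exponent `s - s(s-1)/(2a')`. -/
noncomputable def expE (s a' : ℕ) : ℝ := (s : ℝ) - (s : ℝ) * ((s : ℝ) - 1) / (2 * (a' : ℝ))

lemma expE_zero (a' : ℕ) : expE 0 a' = 0 := by simp [expE]

lemma expE_one (a' : ℕ) : expE 1 a' = 1 := by simp [expE]

lemma expE_nonneg {s a' : ℕ} (h : s ≤ a' + 1) : 0 ≤ expE s a' := by
  rcases Nat.eq_zero_or_pos a' with rfl | ha
  · interval_cases s <;> simp [expE]
  have h1 : (s : ℝ) ≤ (a' : ℝ) + 1 := by exact_mod_cast h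
  have h2 : (1 : ℝ) ≤ (a' : ℝ) := by exact_mod_cast ha
  have hs0 : (0:ℝ) ≤ (s:ℝ) := by positivity
  unfold expE
  rw [sub_nonneg, div_le_iff₀ (by positivity)]
  nlinarith

lemma expE_le_self (s a' : ℕ) (hs : 1 ≤ s) : expE s a' ≤ (s : ℝ) := by
  have h1 : (1:ℝ) ≤ (s:ℝ) := by exact_mod_cast hs
  have : (0:ℝ) ≤ (s : ℝ) * ((s : ℝ) - 1) / (2 * (a' : ℝ)) := by
    apply div_nonneg (by nlinarith) (by positivity)
  unfold expE; linarith

lemma expE_pos {s a' : ℕ} (hs : 1 ≤ s) (h : s ≤ a') : 0 < expE s a' := by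
  have h1 : (1:ℝ) ≤ (s:ℝ) := by exact_mod_cast hs
  have h2 : (s : ℝ) ≤ (a' : ℝ) := by exact_mod_cast h
  have ha : (1:ℝ) ≤ (a' : ℝ) := by linarith
  unfold expE
  rw [sub_pos, div_lt_iff₀ (by positivity)]
  nlinarith

lemma expE_mono {s₁ s₂ a' : ℕ} (h : s₁ ≤ s₂) (h2 : (s₂ : ℝ) + (s₁ : ℝ) - 1 ≤ 2 * (a' : ℝ))
    (ha : 1 ≤ a') : expE s₁ a' ≤ expE s₂ a' := by
  have hc : (1:ℝ) ≤ (a' : ℝ) := by exact_mod_cast ha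
  have hs : (s₁ : ℝ) ≤ (s₂ : ℝ) := by exact_mod_cast h
  have hden : (0:ℝ) < 2*(a':ℝ) := by positivity
  have key : ((s₂:ℝ)*((s₂:ℝ)-1) - (s₁:ℝ)*((s₁:ℝ)-1))/(2*(a':ℝ)) ≤ (s₂:ℝ) - (s₁:ℝ) := by
    rw [div_le_iff₀ hden]; nlinarith
  rw [← div_sub_div_same] at key
  unfold expE; linarith

/-- The key identity: `1 + expE s (a'-1) * (1 - 1/a') = expE (s+1) a'`. -/
lemma expE_identity {s a' : ℕ} (ha : 2 ≤ a') :
    expE s (a' - 1) + 1 - expE s (a' - 1) / (a' : ℝ) = expE (s + 1) a' := by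
  have h1 : ((a' - 1 : ℕ) : ℝ) = (a' : ℝ) - 1 := by
    have : 1 ≤ a' := by omega
    push_cast [Nat.cast_sub this]; ring
  have ha2 : (2:ℝ) ≤ (a' : ℝ) := by exact_mod_cast ha
  have hne : (a' : ℝ) ≠ 0 := by linarith
  have hne1 : (a' : ℝ) - 1 ≠ 0 := by linarith
  unfold expE
  rw [h1]
  push_cast
  field_simp
  ring

end Stmt10Aux
namespace Stmt10Aux

open Finset SimpleGraph

section Graph

variable {V : Type} [Fintype V] [DecidableEq V] (G : SimpleGraph V) [DecidableRel G.Adj]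

/-- The finset of `s`-cliques of `G` contained in `W`. -/
def csF (s : ℕ) (W : Finset V) : Finset (Finset V) :=
  univ.filter (fun S => G.IsNClique s S ∧ S ⊆ W)

/-- "Relatively `K_{a',b}`-free on `W`": there is no complete bipartite `(a', b)`-pattern
inside `W`. -/
def RelFree (a' b : ℕ) (W : Finset V) : Prop :=
  ¬ ∃ A B : Finset V, A ⊆ W ∧ B ⊆ W ∧ A.card = a' ∧ B.card = b ∧
      ∀ u ∈ A, ∀ w ∈ B, G.Adj u w

variable {G}

lemma mem_csF {s : ℕ} {W S : Finset V} :
    S ∈ csF G s W ↔ G.IsNClique s S ∧ S ⊆ W := by simp [csF]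

lemma csF_zero_card_le (W : Finset V) : (csF G 0 W).card ≤ 1 := by
  apply card_le_one.2
  intro S hS T hT
  rw [mem_csF] at hS hT
  have h1 := hS.1.2; have h2 := hT.1.2
  rw [Finset.card_eq_zero] at h1 h2
  rw [h1, h2]

lemma csF_one_card_le (W : Finset V) : (csF G 1 W).card ≤ W.card := by
  classical
  have : csF G 1 W ⊆ W.image (fun v => {v}) := by
    intro S hS
    rw [mem_csF] at hS
    obtain ⟨v, hv⟩ := Finset.card_eq_one.1 hS.1.2
    subst hv
    exact mem_image.2 ⟨v, hS.2 (mem_singleton_self v), rfl⟩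
  exact (card_le_card this).trans (card_image_le)

/-- Counting step: every `s`-clique in `W` decomposes as a vertex plus an
`(s-1)`-clique in its neighborhood. -/
lemma csF_card_le_sum [Nonempty V] {s : ℕ} (hs : 1 ≤ s) (W : Finset V) :
    (csF G s W).card ≤ ∑ v ∈ W, (csF G (s - 1) ((G.neighborFinset v) ∩ W)).card := by
  classical
  rw [← Finset.card_sigma]
  apply Finset.card_le_card_of_injOn
    (fun S => if h : S.Nonempty then ⟨h.choose, S.erase h.choose⟩
      else ⟨Classical.arbitrary V, ∅⟩)
  · intro S hS
    rw [Finset.mem_coe, mem_csF] at hS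
    have hne : S.Nonempty := by
      rw [← Finset.card_pos, hS.1.2]; omega
    simp only [dif_pos hne]
    have hv : hne.choose ∈ S := hne.choose_spec
    rw [Finset.mem_coe, Finset.mem_sigma]
    constructor
    · exact hS.2 hv
    · rw [mem_csF]
      refine ⟨⟨hS.1.1.subset (erase_subset _ _), ?_⟩, ?_⟩
      · rw [card_erase_of_mem hv, hS.1.2]
      · intro u hu
        rw [Finset.mem_erase] at hu
        rw [Finset.mem_inter, SimpleGraph.mem_neighborFinset]
        exact ⟨hS.1.1 (Finset.mem_coe.2 hv) (Finset.mem_coe.2 hu.2) (Ne.symm hu.1), hS.2 hu.2⟩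
  · intro S hS T hT heq
    rw [mem_coe, mem_csF] at hS hT
    have hneS : S.Nonempty := by rw [← Finset.card_pos, hS.1.2]; omega
    have hneT : T.Nonempty := by rw [← Finset.card_pos, hT.1.2]; omega
    simp only [dif_pos hneS, dif_pos hneT, Sigma.mk.inj_iff] at heq
    have h1 : S = insert hneS.choose (S.erase hneS.choose) :=
      (insert_erase hneS.choose_spec).symm
    have h2 : T = insert hneT.choose (T.erase hneT.choose) :=
      (insert_erase hneT.choose_spec).symm
    rw [h1, h2, eq_of_heq heq.2, heq.1]

/-- Freeness is inherited by neighborhoods (with `a'` dropping by one). -/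
lemma relFree_nbhd {a' b : ℕ} {W : Finset V} (hfree : RelFree G a' b W) (ha : 1 ≤ a')
    {v : V} (hv : v ∈ W) : RelFree G (a' - 1) b ((G.neighborFinset v) ∩ W) := by
  rintro ⟨A, B, hAW, hBW, hA, hB, hadj⟩
  apply hfree
  have hvA : v ∉ A := by
    intro h
    have := (Finset.mem_inter.1 (hAW h)).1
    rw [SimpleGraph.mem_neighborFinset] at this
    exact G.irrefl this
  refine ⟨insert v A, B, ?_, fun u hu => (Finset.mem_inter.1 (hBW hu)).2, ?_, hB, ?_⟩
  · intro u hu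
    rcases Finset.mem_insert.1 hu with rfl | hu
    · exact hv
    · exact (Finset.mem_inter.1 (hAW hu)).2
  · rw [card_insert_of_notMem hvA, hA]; omega
  · intro u hu w hw
    rcases Finset.mem_insert.1 hu with rfl | hu
    · have := (Finset.mem_inter.1 (hBW hw)).1
      rw [SimpleGraph.mem_neighborFinset] at this
      exact this
    · exact hadj u hu w hw

/-- Codegree bound: an `a'`-set inside `W` has at most `b-1` common neighbors in `W`. -/
lemma codeg_le {a' b : ℕ} {W : Finset V} (hfree : RelFree G a' b W) {A : Finset V}
    (hA : A.card = a') (hAW : A ⊆ W) :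
    (W.filter (fun v => A ⊆ G.neighborFinset v)).card ≤ b - 1 := by
  by_contra h
  push_neg at h
  have hb : b ≤ (W.filter (fun v => A ⊆ G.neighborFinset v)).card := by omega
  obtain ⟨B, hBsub, hBcard⟩ := Finset.exists_subset_card_eq hb
  apply hfree
  refine ⟨A, B, hAW, fun u hu => (Finset.mem_filter.1 (hBsub hu)).1, hA, hBcard, ?_⟩
  intro u hu w hw
  have := (Finset.mem_filter.1 (hBsub hw)).2 hu
  rw [SimpleGraph.mem_neighborFinset] at this
  exact this.symm

end Graph

end Stmt10Aux
namespace Stmt10Aux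

open Finset SimpleGraph

lemma pow_le_descFactorial_aux {d k : ℕ} (hk : 1 ≤ k) (hd : 2 * k ≤ d) :
    d ^ k ≤ 2 ^ k * d.descFactorial k := by
  have h2 : (2:ℕ) ^ k = ∏ _i ∈ Finset.range k, 2 := by
    rw [Finset.prod_const, Finset.card_range]
  have hd' : d ^ k = ∏ _i ∈ Finset.range k, d := by
    rw [Finset.prod_const, Finset.card_range]
  rw [Nat.descFactorial_eq_prod_range, h2, ← Finset.prod_mul_distrib, hd']
  apply Finset.prod_le_prod'
  intro i hi
  rw [Finset.mem_range] at hi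
  omega

lemma pow_le_choose_aux {d k : ℕ} (hk : 1 ≤ k) :
    d ^ k ≤ (2 * k) ^ k * (d.choose k + 1) := by
  rcases le_or_gt d (2 * k) with h | h
  · calc d ^ k ≤ (2 * k) ^ k := Nat.pow_le_pow_left h k
      _ ≤ (2 * k) ^ k * (d.choose k + 1) := Nat.le_mul_of_pos_right _ (by omega)
  · have h1 : d ^ k ≤ 2 ^ k * d.descFactorial k :=
      pow_le_descFactorial_aux hk (le_of_lt h)
    have h2 : d.descFactorial k = k.factorial * d.choose k :=
      Nat.descFactorial_eq_factorial_mul_choose d k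
    have h3 : k.factorial ≤ k ^ k := Nat.factorial_le_pow k
    calc d ^ k ≤ 2 ^ k * (k.factorial * d.choose k) := by rw [← h2]; exact h1
      _ ≤ 2 ^ k * (k ^ k * d.choose k) :=
          Nat.mul_le_mul_left _ (Nat.mul_le_mul_right _ h3)
      _ = (2 * k) ^ k * d.choose k := by rw [mul_pow]; ring
      _ ≤ (2 * k) ^ k * (d.choose k + 1) := Nat.mul_le_mul_left _ (by omega)

section Graph

variable {V : Type} [Fintype V] [DecidableEq V] {G : SimpleGraph V} [DecidableRel G.Adj]

lemma sum_choose_le {a' b : ℕ} {W : Finset V} (hfree : RelFree G a' b W) :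
    ∑ v ∈ W, ((G.neighborFinset v ∩ W).card).choose a' ≤ (b - 1) * (W.card).choose a' := by
  classical
  have lhs_eq : ∑ v ∈ W, ((G.neighborFinset v ∩ W).card).choose a'
      = (W.sigma (fun v => (G.neighborFinset v ∩ W).powersetCard a')).card := by
    rw [Finset.card_sigma]
    exact Finset.sum_congr rfl (fun v _ => (Finset.card_powersetCard _ _).symm)
  rw [lhs_eq]
  have hle : (W.sigma (fun v => (G.neighborFinset v ∩ W).powersetCard a')).card ≤
      ((W.powersetCard a').sigma
        (fun A => W.filter (fun v => A ⊆ G.neighborFinset v))).card := by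
    apply Finset.card_le_card_of_injOn (fun p => ⟨p.2, p.1⟩)
    · rintro ⟨v, A⟩ hp
      rw [Finset.mem_coe, Finset.mem_sigma] at hp
      obtain ⟨hv, hA⟩ := hp
      rw [Finset.mem_powersetCard] at hA
      rw [Finset.mem_coe, Finset.mem_sigma, Finset.mem_powersetCard]
      refine ⟨⟨hA.1.trans (inter_subset_right), hA.2⟩, ?_⟩
      rw [Finset.mem_filter]
      exact ⟨hv, hA.1.trans (inter_subset_left)⟩
    · rintro ⟨v, A⟩ _ ⟨v', A'⟩ _ h
      simp only [Sigma.mk.inj_iff] at h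
      obtain ⟨h1, h2⟩ := h
      subst h1
      simp [eq_of_heq h2]
  refine hle.trans ?_
  rw [Finset.card_sigma]
  calc ∑ A ∈ W.powersetCard a', (W.filter (fun v => A ⊆ G.neighborFinset v)).card
      ≤ ∑ _A ∈ W.powersetCard a', (b - 1) := by
        apply Finset.sum_le_sum
        intro A hA
        rw [Finset.mem_powersetCard] at hA
        exact codeg_le hfree hA.2 hA.1
    _ = (W.powersetCard a').card * (b - 1) := by rw [Finset.sum_const, smul_eq_mul]
    _ = (b - 1) * (W.card).choose a' := by rw [Finset.card_powersetCard, mul_comm]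

lemma sum_pow_le {a' b : ℕ} (ha : 1 ≤ a') {W : Finset V} (hfree : RelFree G a' b W) :
    ∑ v ∈ W, ((G.neighborFinset v ∩ W).card) ^ a'
      ≤ (2 * a') ^ a' * (b + 1) * W.card ^ a' := by
  calc ∑ v ∈ W, ((G.neighborFinset v ∩ W).card) ^ a'
      ≤ ∑ v ∈ W, (2 * a') ^ a' * (((G.neighborFinset v ∩ W).card).choose a' + 1) :=
        Finset.sum_le_sum (fun v _ => pow_le_choose_aux ha)
    _ = (2 * a') ^ a' * ((∑ v ∈ W, ((G.neighborFinset v ∩ W).card).choose a') + W.card) := by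
        rw [← Finset.mul_sum, Finset.sum_add_distrib, Finset.sum_const, smul_eq_mul, mul_one]
    _ ≤ (2 * a') ^ a' * ((b - 1) * (W.card).choose a' + W.card) := by
        apply Nat.mul_le_mul_left
        exact Nat.add_le_add_right (sum_choose_le hfree) _
    _ ≤ (2 * a') ^ a' * ((b - 1) * W.card ^ a' + W.card ^ a') := by
        apply Nat.mul_le_mul_left
        apply Nat.add_le_add
        · exact Nat.mul_le_mul_left _ (Nat.choose_le_pow _ _)
        · exact Nat.le_self_pow (by omega) _
    _ ≤ (2 * a') ^ a' * (b + 1) * W.card ^ a' := by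
        rw [mul_assoc]
        apply Nat.mul_le_mul_left
        have : (b - 1) * W.card ^ a' + W.card ^ a' ≤ (b + 1) * W.card ^ a' := by
          have : b - 1 + 1 ≤ b + 1 := by omega
          calc (b - 1) * W.card ^ a' + W.card ^ a' = (b - 1 + 1) * W.card ^ a' := by ring
            _ ≤ (b + 1) * W.card ^ a' := Nat.mul_le_mul_right _ this
        exact this

end Graph

end Stmt10Aux
namespace Stmt10Aux

open Finset SimpleGraph

/-- Power mean inequality in the form we need. -/
lemma holder_sum {ι : Type*} (W : Finset ι) (f : ι → ℝ) (hf : ∀ v ∈ W, 0 ≤ f v)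
    {q p : ℝ} (hq : 0 < q) (hqp : q ≤ p) :
    ∑ v ∈ W, f v ^ q ≤ (∑ v ∈ W, f v ^ p) ^ (q / p) * (W.card : ℝ) ^ (1 - q / p) := by
  rcases W.eq_empty_or_nonempty with rfl | hW
  · simp only [Finset.sum_empty, Finset.card_empty, Nat.cast_zero]
    positivity
  have hm : (0 : ℝ) < (W.card : ℝ) := by
    exact_mod_cast Finset.card_pos.2 hW
  have hp : 0 < p := lt_of_lt_of_le hq hqp
  have key : ∑ v ∈ W, (1 / (W.card : ℝ)) * f v ^ q
      ≤ (∑ v ∈ W, (1 / (W.card : ℝ)) * (f v ^ q) ^ (p / q)) ^ (1 / (p / q)) :=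
    Real.arith_mean_le_rpow_mean W (fun _ => 1 / (W.card : ℝ))
      (fun v => f v ^ q) (fun _ _ => by positivity)
      (by rw [Finset.sum_const, nsmul_eq_mul]; field_simp)
      (fun v hv => Real.rpow_nonneg (hf v hv) q)
      (p := p / q) ((one_le_div hq).2 hqp)
  have hzp : ∀ v ∈ W, (f v ^ q) ^ (p / q) = f v ^ p := by
    intro v hv
    rw [← Real.rpow_mul (hf v hv)]
    congr 1
    field_simp
  have e1 : ∑ v ∈ W, (1 / (W.card : ℝ)) * (f v ^ q) ^ (p / q)
      = ∑ v ∈ W, (1 / (W.card : ℝ)) * f v ^ p :=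
    Finset.sum_congr rfl (fun v hv => by rw [hzp v hv])
  rw [e1] at key
  have h1 : (1 : ℝ) / (p / q) = q / p := by field_simp
  rw [h1] at key
  have lhs_eq : ∑ v ∈ W, (1 / (W.card : ℝ)) * f v ^ q
      = (1 / (W.card : ℝ)) * ∑ v ∈ W, f v ^ q := by rw [Finset.mul_sum]
  have rhs_eq : ∑ v ∈ W, (1 / (W.card : ℝ)) * f v ^ p
      = (1 / (W.card : ℝ)) * ∑ v ∈ W, f v ^ p := by rw [Finset.mul_sum]
  rw [lhs_eq, rhs_eq] at key
  have hsum : (0:ℝ) ≤ ∑ v ∈ W, f v ^ p :=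
    Finset.sum_nonneg (fun v hv => Real.rpow_nonneg (hf v hv) p)
  have key2 : ∑ v ∈ W, f v ^ q ≤
      (W.card : ℝ) * (((1 / (W.card : ℝ)) * ∑ v ∈ W, f v ^ p) ^ (q / p)) := by
    calc ∑ v ∈ W, f v ^ q
        = (W.card : ℝ) * ((1 / (W.card : ℝ)) * ∑ v ∈ W, f v ^ q) := by field_simp
      _ ≤ (W.card : ℝ) * (((1 / (W.card : ℝ)) * ∑ v ∈ W, f v ^ p) ^ (q / p)) := by
          apply mul_le_mul_of_nonneg_left key (le_of_lt hm)
  refine key2.trans (le_of_eq ?_)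
  rw [Real.mul_rpow (by positivity) hsum]
  rw [show (1 / (W.card : ℝ)) = ((W.card : ℝ))⁻¹ by field_simp,
    Real.inv_rpow (le_of_lt hm)]
  rw [show (1 : ℝ) - q / p = 1 + (-(q / p)) by ring, Real.rpow_add hm,
    Real.rpow_one, Real.rpow_neg (le_of_lt hm)]
  ring

/-- The Alon–Shikhelman-type bound: in a relatively `K_{a',b}`-free set `W`,
the number of `s`-cliques is at most `C * |W| ^ (s - s(s-1)/(2a'))`. -/
lemma AS_bound (b : ℕ) : ∀ s : ℕ, ∀ a' : ℕ, s ≤ a' →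
    ∃ C : ℝ, 1 ≤ C ∧ ∀ (V : Type) [Fintype V] [DecidableEq V] (G : SimpleGraph V)
      [DecidableRel G.Adj] (W : Finset V), RelFree G a' b W →
      ((csF G s W).card : ℝ) ≤ C * (W.card : ℝ) ^ (expE s a') := by
  intro s
  induction s with
  | zero =>
    intro a' _
    refine ⟨1, le_refl 1, ?_⟩
    intro V _ _ G _ W _
    rw [expE_zero, Real.rpow_zero, one_mul]
    exact_mod_cast csF_zero_card_le W
  | succ s ih =>
    intro a' hsa
    rcases Nat.eq_zero_or_pos s with rfl | hs
    · refine ⟨1, le_refl 1, ?_⟩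
      intro V _ _ G _ W _
      rw [expE_one, Real.rpow_one, one_mul]
      exact_mod_cast csF_one_card_le W
    · have ha2 : 2 ≤ a' := by omega
      obtain ⟨C₀, hC₀, hC⟩ := ih (a' - 1) (by omega)
      set K : ℝ := (((2 * a') ^ a' * (b + 1) : ℕ) : ℝ) with hK
      have hK1 : (1:ℝ) ≤ K := by
        rw [hK]
        have : 0 < (2 * a') ^ a' * (b + 1) :=
          Nat.mul_pos (pow_pos (by omega : 0 < 2 * a') a') (by omega)
        exact_mod_cast this
      refine ⟨C₀ * (K + 1), by nlinarith, ?_⟩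
      intro V _ _ G _ W hfree
      rcases W.eq_empty_or_nonempty with rfl | hW
      · have : (csF G (s+1) ∅).card = 0 := by
          rw [Finset.card_eq_zero]
          rw [Finset.eq_empty_iff_forall_notMem]
          intro S hS
          rw [mem_csF] at hS
          have := Finset.subset_empty.1 hS.2
          subst this
          have := hS.1.2
          simp at this
        rw [this]
        have : (0:ℝ) ≤ C₀ * (K + 1) * ((∅ : Finset V).card : ℝ) ^ expE (s+1) a' := by
          apply mul_nonneg (by nlinarith)
          apply Real.rpow_nonneg; positivity
        exact_mod_cast this
      have : Nonempty V := ⟨hW.choose⟩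
      have hm : (0:ℝ) < (W.card : ℝ) := by exact_mod_cast Finset.card_pos.2 hW
      set q : ℝ := expE s (a' - 1) with hq
      have hq0 : 0 < q := expE_pos hs (by omega)
      have hqs : q ≤ (s : ℝ) := expE_le_self s (a'-1) hs
      have hqa : q ≤ (a' : ℝ) := by
        have : (s:ℝ) ≤ (a':ℝ) := by exact_mod_cast (by omega : s ≤ a')
        linarith
      have ha'pos : (0:ℝ) < (a' : ℝ) := by positivity
      -- step 1: decompose cliques
      have step1 : ((csF G (s+1) W).card : ℝ) ≤
          ∑ v ∈ W, ((csF G s ((G.neighborFinset v) ∩ W)).card : ℝ) := by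
        have := csF_card_le_sum (G := G) (s := s + 1) (by omega) W
        simp only [Nat.add_sub_cancel] at this
        exact_mod_cast this
      -- step 2: apply IH on each neighborhood
      have step2 : ∑ v ∈ W, ((csF G s ((G.neighborFinset v) ∩ W)).card : ℝ)
          ≤ C₀ * ∑ v ∈ W, (((G.neighborFinset v ∩ W).card : ℝ)) ^ q := by
        rw [Finset.mul_sum]
        apply Finset.sum_le_sum
        intro v hv
        exact hC V G (G.neighborFinset v ∩ W) (relFree_nbhd hfree (by omega) hv)
      -- step 3: Hölder
      have step3 : ∑ v ∈ W, (((G.neighborFinset v ∩ W).card : ℝ)) ^ q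
          ≤ (∑ v ∈ W, (((G.neighborFinset v ∩ W).card : ℝ)) ^ ((a' : ℕ) : ℝ)) ^ (q / (a':ℝ))
            * (W.card : ℝ) ^ (1 - q / (a':ℝ)) :=
        holder_sum W _ (fun v _ => by positivity) hq0 hqa
      -- step 4: moment bound
      have step4 : ∑ v ∈ W, (((G.neighborFinset v ∩ W).card : ℝ)) ^ ((a' : ℕ) : ℝ)
          ≤ K * (W.card : ℝ) ^ ((a' : ℕ) : ℝ) := by
        have hnat := sum_pow_le (G := G) (by omega : 1 ≤ a') hfree
        have : ∑ v ∈ W, (((G.neighborFinset v ∩ W).card : ℝ)) ^ ((a' : ℕ) : ℝ)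
            = ((∑ v ∈ W, ((G.neighborFinset v ∩ W).card) ^ a' : ℕ) : ℝ) := by
          push_cast
          apply Finset.sum_congr rfl
          intro v _
          rw [Real.rpow_natCast]
        rw [this, Real.rpow_natCast]
        calc ((∑ v ∈ W, ((G.neighborFinset v ∩ W).card) ^ a' : ℕ) : ℝ)
            ≤ (((2 * a') ^ a' * (b + 1) * W.card ^ a' : ℕ) : ℝ) := by exact_mod_cast hnat
          _ = K * (W.card : ℝ) ^ a' := by rw [hK]; push_cast; ring
      -- combine
      have hqa' : 0 ≤ q / (a':ℝ) := by positivity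
      have hqa'1 : q / (a':ℝ) ≤ 1 := by
        rw [div_le_one ha'pos]; exact hqa
      have step5 : (∑ v ∈ W, (((G.neighborFinset v ∩ W).card : ℝ)) ^ ((a' : ℕ) : ℝ)) ^ (q / (a':ℝ))
          ≤ K * (W.card : ℝ) ^ q := by
        calc (∑ v ∈ W, (((G.neighborFinset v ∩ W).card : ℝ)) ^ ((a' : ℕ) : ℝ)) ^ (q / (a':ℝ))
            ≤ (K * (W.card : ℝ) ^ ((a' : ℕ) : ℝ)) ^ (q / (a':ℝ)) := by
              apply Real.rpow_le_rpow _ step4 hqa'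
              apply Finset.sum_nonneg
              intro v _
              apply Real.rpow_nonneg; positivity
          _ = K ^ (q / (a':ℝ)) * ((W.card : ℝ) ^ ((a' : ℕ) : ℝ)) ^ (q / (a':ℝ)) := by
              apply Real.mul_rpow (by linarith) (Real.rpow_nonneg (le_of_lt hm) _)
          _ ≤ K * (W.card : ℝ) ^ q := by
              apply mul_le_mul
              · calc K ^ (q / (a':ℝ)) ≤ K ^ (1:ℝ) :=
                    Real.rpow_le_rpow_of_exponent_le hK1 hqa'1
                  _ = K := Real.rpow_one K
              · rw [← Real.rpow_mul (le_of_lt hm)]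
                apply le_of_eq
                congr 1
                field_simp
              · apply Real.rpow_nonneg (Real.rpow_nonneg (le_of_lt hm) _)
              · linarith
      calc ((csF G (s+1) W).card : ℝ)
          ≤ C₀ * ∑ v ∈ W, (((G.neighborFinset v ∩ W).card : ℝ)) ^ q := step1.trans step2
        _ ≤ C₀ * ((K * (W.card : ℝ) ^ q) * (W.card : ℝ) ^ (1 - q / (a':ℝ))) := by
            apply mul_le_mul_of_nonneg_left _ (by linarith)
            refine step3.trans ?_
            apply mul_le_mul_of_nonneg_right step5
            apply Real.rpow_nonneg (le_of_lt hm)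
        _ = C₀ * K * (W.card : ℝ) ^ (q + (1 - q / (a':ℝ))) := by
            rw [Real.rpow_add hm]; ring
        _ ≤ C₀ * (K + 1) * (W.card : ℝ) ^ (expE (s+1) a') := by
            rw [show q + (1 - q / (a':ℝ)) = expE s (a'-1) + 1 - expE s (a'-1) / (a':ℝ) by
              rw [← hq]; ring]
            rw [expE_identity ha2]
            apply mul_le_mul_of_nonneg_right (by nlinarith)
            apply Real.rpow_nonneg (le_of_lt hm)

end Stmt10Aux
namespace Stmt10Aux

open Finset SimpleGraph

section Graph

variable {V : Type} [Fintype V] [DecidableEq V] (G : SimpleGraph V) [DecidableRel G.Adj]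

/-- The finset of `s`-cliques of `G` containing `x₀`. -/
def atF (s : ℕ) (x₀ : V) : Finset (Finset V) :=
  univ.filter (fun S => G.IsNClique s S ∧ x₀ ∈ S)

variable {G}

lemma mem_atF {s : ℕ} {x₀ : V} {S : Finset V} :
    S ∈ atF G s x₀ ↔ G.IsNClique s S ∧ x₀ ∈ S := by simp [atF]

lemma atF_one_card_le (x₀ : V) : (atF G 1 x₀).card ≤ 1 := by
  apply card_le_one.2
  intro S hS T hT
  rw [mem_atF] at hS hT
  obtain ⟨v, hv⟩ := Finset.card_eq_one.1 hS.1.2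
  obtain ⟨w, hw⟩ := Finset.card_eq_one.1 hT.1.2
  subst hv; subst hw
  rw [Finset.mem_singleton] at *
  rw [← hS.2, ← hT.2]

/-- Recursion: cliques through `x₀` either avoid `U` (giving a clique in
`N(x₀) \ U`) or pass through a vertex of `U`. -/
lemma atF_card_rec {s : ℕ} (x₀ : V) (U : Finset V) (hx₀U : x₀ ∉ U) :
    (atF G (s+1) x₀).card ≤ (csF G s (G.neighborFinset x₀ \ U)).card
      + U.card * (atF G s x₀).card := by
  classical
  have htarget : ((csF G s (G.neighborFinset x₀ \ U)).disjSum
      (U.sigma (fun _ => atF G s x₀))).card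
      = (csF G s (G.neighborFinset x₀ \ U)).card + U.card * (atF G s x₀).card := by
    rw [Finset.card_disjSum, Finset.card_sigma, Finset.sum_const, smul_eq_mul]
  rw [← htarget]
  apply Finset.card_le_card_of_injOn
    (fun S => if h : (S ∩ U).Nonempty then Sum.inr ⟨h.choose, S.erase h.choose⟩
      else Sum.inl (S.erase x₀))
  · intro S hS
    rw [Finset.mem_coe, mem_atF] at hS
    obtain ⟨⟨hclique, hcard⟩, hxS⟩ := hS
    by_cases h : (S ∩ U).Nonempty
    · simp only [dif_pos h]
      have hu : h.choose ∈ S ∩ U := h.choose_spec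
      rw [Finset.mem_inter] at hu
      have hne : x₀ ≠ h.choose := fun e => hx₀U (e ▸ hu.2)
      rw [Finset.mem_coe, Finset.mem_disjSum]
      right
      refine ⟨⟨h.choose, S.erase h.choose⟩, ?_, rfl⟩
      rw [Finset.mem_sigma]
      refine ⟨hu.2, ?_⟩
      rw [mem_atF]
      refine ⟨⟨hclique.subset (erase_subset _ _), ?_⟩, ?_⟩
      · rw [card_erase_of_mem hu.1, hcard]; omega
      · exact Finset.mem_erase.2 ⟨hne, hxS⟩
    · simp only [dif_neg h]
      rw [Finset.mem_coe, Finset.mem_disjSum]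
      left
      refine ⟨S.erase x₀, ?_, rfl⟩
      rw [mem_csF]
      refine ⟨⟨hclique.subset (erase_subset _ _), ?_⟩, ?_⟩
      · rw [card_erase_of_mem hxS, hcard]; omega
      · intro u hu
        rw [Finset.mem_erase] at hu
        rw [Finset.mem_sdiff, SimpleGraph.mem_neighborFinset]
        constructor
        · exact hclique (Finset.mem_coe.2 hxS) (Finset.mem_coe.2 hu.2) hu.1.symm
        · intro huU
          exact h ⟨u, Finset.mem_inter.2 ⟨hu.2, huU⟩⟩
  · intro S hS T hT heq
    rw [Finset.mem_coe, mem_atF] at hS hT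
    beta_reduce at heq
    by_cases h1 : (S ∩ U).Nonempty
    · by_cases h2 : (T ∩ U).Nonempty
      · rw [dif_pos h1, dif_pos h2, Sum.inr.injEq, Sigma.mk.inj_iff] at heq
        have hu1 : h1.choose ∈ S ∩ U := h1.choose_spec
        have hu2 : h2.choose ∈ T ∩ U := h2.choose_spec
        rw [Finset.mem_inter] at hu1 hu2
        have e1 : S = insert h1.choose (S.erase h1.choose) := (insert_erase hu1.1).symm
        have e2 : T = insert h2.choose (T.erase h2.choose) := (insert_erase hu2.1).symm
        rw [e1, e2, eq_of_heq heq.2, heq.1]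
      · rw [dif_pos h1, dif_neg h2] at heq
        exact absurd heq (by simp)
    · by_cases h2 : (T ∩ U).Nonempty
      · rw [dif_neg h1, dif_pos h2] at heq
        exact absurd heq (by simp)
      · rw [dif_neg h1, dif_neg h2, Sum.inl.injEq] at heq
        have e1 : S = insert x₀ (S.erase x₀) := (insert_erase hS.2).symm
        have e2 : T = insert x₀ (T.erase x₀) := (insert_erase hT.2).symm
        rw [e1, e2, heq]

end Graph

end Stmt10Aux
namespace Stmt10Aux

open Finset SimpleGraph

/-- If `N(x₀) \ U` is relatively `K_{a-1,b}`-free, then the number of `(s+1)`-cliques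
through `x₀` is `O(n ^ expE s (a-1))`. -/
lemma at_bound (a b c₀ : ℕ) (ha : 2 ≤ a) :
    ∀ s : ℕ, s ≤ a - 1 →
    ∃ C : ℝ, 1 ≤ C ∧ ∀ (V : Type) [Fintype V] [DecidableEq V] (G : SimpleGraph V)
      [DecidableRel G.Adj] (x₀ : V) (U : Finset V), U.card ≤ c₀ → x₀ ∉ U →
      RelFree G (a-1) b (G.neighborFinset x₀ \ U) →
      ((atF G (s+1) x₀).card : ℝ) ≤ C * (Fintype.card V : ℝ) ^ (expE s (a-1)) := by
  intro s
  induction s with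
  | zero =>
    intro _
    refine ⟨1, le_refl 1, ?_⟩
    intro V _ _ G _ x₀ U _ _ _
    rw [expE_zero, Real.rpow_zero, mul_one]
    exact_mod_cast atF_one_card_le x₀
  | succ s ih =>
    intro hsa
    obtain ⟨C₁, hC₁, hrec⟩ := ih (by omega)
    obtain ⟨C₂, hC₂, hAS⟩ := AS_bound b (s+1) (a-1) hsa
    refine ⟨C₂ + (c₀:ℝ) * C₁, hC₂.trans (le_add_of_nonneg_right (mul_nonneg (Nat.cast_nonneg c₀) (zero_le_one.trans hC₁))), ?_⟩
    intro V _ _ G _ x₀ U hU hx₀U hfree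
    set W₀ := G.neighborFinset x₀ \ U with hW₀
    have hn1 : (1:ℝ) ≤ (Fintype.card V : ℝ) := by
      have : 0 < Fintype.card V := Fintype.card_pos_iff.2 ⟨x₀⟩
      exact_mod_cast this
    have hn0 : (0:ℝ) ≤ (Fintype.card V : ℝ) := by linarith
    have hWn : (W₀.card : ℝ) ≤ (Fintype.card V : ℝ) := by
      exact_mod_cast Finset.card_le_univ W₀
    have hE1 : 0 ≤ expE (s+1) (a-1) := expE_nonneg (by omega)
    have hEmono : expE s (a-1) ≤ expE (s+1) (a-1) := by
      apply expE_mono (Nat.le_succ s) _ (by omega)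
      have h1 : ((s:ℝ)+1) + (s:ℝ) - 1 ≤ 2 * ((a:ℝ) - 1) := by
        have hs1 : (s:ℝ) + 1 ≤ ((a:ℝ) - 1) := by
          have : ((s+1 : ℕ):ℝ) ≤ ((a - 1 : ℕ):ℝ) := by exact_mod_cast hsa
          push_cast [Nat.cast_sub (by omega : 1 ≤ a)] at this
          linarith
        linarith
      have hc : ((a - 1 : ℕ):ℝ) = (a:ℝ) - 1 := by
        push_cast [Nat.cast_sub (by omega : 1 ≤ a)]; ring
      push_cast [hc]
      linarith
    calc ((atF G (s+1+1) x₀).card : ℝ)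
        ≤ ((csF G (s+1) W₀).card : ℝ) + (U.card : ℝ) * ((atF G (s+1) x₀).card : ℝ) := by
          exact_mod_cast atF_card_rec x₀ U hx₀U
      _ ≤ C₂ * (W₀.card : ℝ) ^ (expE (s+1) (a-1))
          + (c₀:ℝ) * (C₁ * (Fintype.card V : ℝ) ^ (expE s (a-1))) := by
          apply add_le_add
          · exact hAS V G W₀ hfree
          · apply mul_le_mul (by exact_mod_cast hU) (hrec V G x₀ U hU hx₀U hfree)
              (by positivity) (by positivity)
      _ ≤ C₂ * (Fintype.card V : ℝ) ^ (expE (s+1) (a-1))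
          + (c₀:ℝ) * C₁ * (Fintype.card V : ℝ) ^ (expE (s+1) (a-1)) := by
          apply add_le_add
          · apply mul_le_mul_of_nonneg_left _ (by linarith)
            exact Real.rpow_le_rpow (by positivity) hWn hE1
          · rw [mul_assoc]
            apply mul_le_mul_of_nonneg_left _ (by positivity)
            apply mul_le_mul_of_nonneg_left _ (by linarith)
            exact Real.rpow_le_rpow_of_exponent_le hn1 hEmono
      _ = (C₂ + (c₀:ℝ) * C₁) * (Fintype.card V : ℝ) ^ (expE (s+1) (a-1)) := by ring

end Stmt10Aux
namespace Stmt10Aux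

open Finset SimpleGraph

section Lists

variable {V : Type} [DecidableEq V]

/-- Union of all vertices used by a list of copies. -/
def bigU (l : List (Finset V × Finset V)) : Finset V :=
  l.foldr (fun p s => (p.1 ∪ p.2) ∪ s) ∅

lemma subset_bigU {l : List (Finset V × Finset V)} {p : Finset V × Finset V}
    (hp : p ∈ l) : p.1 ∪ p.2 ⊆ bigU l := by
  induction l with
  | nil => simp at hp
  | cons q l ih =>
    rcases List.mem_cons.1 hp with rfl | hp
    · exact Finset.subset_union_left
    · exact (ih hp).trans Finset.subset_union_right

lemma card_bigU_le {l : List (Finset V × Finset V)} {c : ℕ}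
    (h : ∀ p ∈ l, (p.1 ∪ p.2).card ≤ c) : (bigU l).card ≤ l.length * c := by
  induction l with
  | nil => simp [bigU]
  | cons q l ih =>
    have h1 : (bigU (q :: l)).card ≤ (q.1 ∪ q.2).card + (bigU l).card :=
      Finset.card_union_le _ _
    have h2 := ih (fun p hp => h p (List.mem_cons_of_mem q hp))
    have h3 := h q (List.mem_cons_self)
    simp only [List.length_cons]
    calc (bigU (q :: l)).card ≤ (q.1 ∪ q.2).card + (bigU l).card := h1
      _ ≤ c + l.length * c := Nat.add_le_add h3 h2
      _ = (l.length + 1) * c := by ring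

lemma card_inter_bigU {l : List (Finset V × Finset V)} {X : Finset V}
    (h : ∀ p ∈ l, (X ∩ (p.1 ∪ p.2)).card ≤ 1) : (X ∩ bigU l).card ≤ l.length := by
  induction l with
  | nil => simp [bigU]
  | cons q l ih =>
    have e : X ∩ bigU (q :: l) = (X ∩ (q.1 ∪ q.2)) ∪ (X ∩ bigU l) := by
      show X ∩ ((q.1 ∪ q.2) ∪ bigU l) = _
      rw [Finset.inter_union_distrib_left]
    rw [e]
    calc ((X ∩ (q.1 ∪ q.2)) ∪ (X ∩ bigU l)).card
        ≤ (X ∩ (q.1 ∪ q.2)).card + (X ∩ bigU l).card := Finset.card_union_le _ _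
      _ ≤ 1 + l.length := Nat.add_le_add (h q (List.mem_cons_self))
          (ih (fun p hp => h p (List.mem_cons_of_mem q hp)))
      _ = (q :: l).length := by simp [List.length_cons]; ring

end Lists

lemma cliqueCountOn_eq_atF {V : Type} [Fintype V] [DecidableEq V] (G : SimpleGraph V)
    [DecidableRel G.Adj] (r : ℕ) (v : V) :
    cliqueCountOn G r v = (atF G r v).card := by
  rw [cliqueCountOn, atF, Nat.card_eq_fintype_card]
  exact Fintype.card_subtype _

end Stmt10Aux

open Stmt10Aux in
/-- `t+1` vertices in many `K_r`'s give `t+1` disjoint copies of `K_{a,b}`. -/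
theorem stmt10 (t r a b : ℕ) (htr : r ≤ t) (hr : 3 ≤ r) (ha : 2 * (r - 1) ≤ a)
    (hb : Nat.factorial (a - 1) + 1 ≤ b) (β : ℝ)
    (hβ1 : (r : ℝ) - 1 - ((r : ℝ) - 1) * ((r : ℝ) - 2) / (2 * ((a : ℝ) - 1)) < β)
    (hβ2 : β < (r : ℝ) - 1 - ((r : ℝ) - 1) * ((r : ℝ) - 2) / (2 * (a : ℝ))) :
    ∃ N : ℕ, ∀ n : ℕ, N ≤ n → ∀ (V : Type) (_ : Fintype V), ∀ G : SimpleGraph V,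
      Fintype.card V = n →
      ∀ x : Fin (t + 1) → V, Function.Injective x →
      (∀ i, (n : ℝ) ^ β / (2 * ((a : ℝ) + (b : ℝ)) * (t : ℝ)) ≤ (cliqueCountOn G r (x i) : ℝ)) →
      (multiCopies (t + 1) (completeBipartiteGraph (Fin a) (Fin b))).ContainsCopy G := by
  classical
  have ha2 : 2 ≤ a := by omega
  have hra : r ≤ a := by omega
  have hb1 : 1 ≤ b := by have := Nat.factorial_pos (a - 1); omega
  have ht1 : 1 ≤ t := by omega
  set c₀ := t * (a + b) + t with hc₀
  set γ : ℝ := expE (r - 1) (a - 1) with hγ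
  obtain ⟨C, hC1, hbound⟩ := at_bound a b c₀ ha2 (r - 1) (by omega)
  have hrr : r - 1 + 1 = r := by omega
  rw [hrr] at hbound
  have hγeq : γ = (r : ℝ) - 1 - ((r : ℝ) - 1) * ((r : ℝ) - 2) / (2 * ((a : ℝ) - 1)) := by
    rw [hγ]
    unfold expE
    rw [Nat.cast_sub (by omega : 1 ≤ r), Nat.cast_sub (by omega : 1 ≤ a)]
    push_cast
    ring
  have hγβ : γ < β := by rw [hγeq]; exact hβ1
  have hpos : 0 < β - γ := by linarith
  have hD : (0:ℝ) < 2 * ((a : ℝ) + (b : ℝ)) * (t : ℝ) := by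
    have h1 : (1:ℝ) ≤ (t:ℝ) := by exact_mod_cast ht1
    have h2 : (2:ℝ) ≤ (a:ℝ) := by exact_mod_cast ha2
    have h3 : (0:ℝ) ≤ (b:ℝ) := by positivity
    nlinarith
  have htend : Filter.Tendsto (fun n : ℕ => ((n:ℝ)) ^ (β - γ)) Filter.atTop Filter.atTop :=
    (tendsto_rpow_atTop hpos).comp tendsto_natCast_atTop_atTop
  obtain ⟨N₀, hN₀⟩ := Filter.eventually_atTop.1
    (htend.eventually_ge_atTop (C * (2 * ((a : ℝ) + (b : ℝ)) * (t : ℝ)) + 1))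
  refine ⟨max N₀ 1, ?_⟩
  intro n hn V instV G hcard x hxinj hcliq
  letI := instV
  letI : DecidableEq V := Classical.decEq V
  letI : DecidableRel G.Adj := Classical.decRel G.Adj
  have hn1 : 1 ≤ n := le_trans (le_max_right N₀ 1) hn
  have hnn : N₀ ≤ n := le_trans (le_max_left N₀ 1) hn
  have hnR : (1:ℝ) ≤ (n:ℝ) := by exact_mod_cast hn1
  set X := (Finset.univ : Finset (Fin (t+1))).image x with hXdef
  have hX : X.card = t + 1 := by
    rw [hXdef, Finset.card_image_of_injective _ hxinj, Finset.card_univ, Fintype.card_fin]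
  have key : ∀ k : ℕ, k ≤ t + 1 → ∃ L : List (Finset V × Finset V), L.length = k ∧
      (∀ p ∈ L, p.1.card = a ∧ p.2.card = b ∧ (∀ u ∈ p.1, ∀ w ∈ p.2, G.Adj u w) ∧
        (X ∩ (p.1 ∪ p.2)).card ≤ 1) ∧
      List.Pairwise (fun p q => Disjoint (p.1 ∪ p.2) (q.1 ∪ q.2)) L := by
    intro k
    induction k with
    | zero => intro _; exact ⟨[], rfl, by simp, List.Pairwise.nil⟩
    | succ k ih =>
      intro hk
      obtain ⟨L, hlen, hprop, hpair⟩ := ih (by omega)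
      have hUsed : (bigU L).card ≤ k * (a + b) := by
        rw [← hlen]
        apply card_bigU_le
        intro p hp
        exact le_trans (Finset.card_union_le _ _)
          (by rw [(hprop p hp).1, (hprop p hp).2.1])
      have hXU : (X ∩ bigU L).card ≤ k := by
        rw [← hlen]
        exact card_inter_bigU (fun p hp => (hprop p hp).2.2.2)
      have hnonempty : (X \ bigU L).Nonempty := by
        rw [← Finset.card_pos]
        have h1 : (X \ bigU L).card + (X ∩ bigU L).card = X.card :=
          Finset.card_sdiff_add_card_inter _ _
        omega
      obtain ⟨x₀, hx₀⟩ := hnonempty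
      rw [Finset.mem_sdiff] at hx₀
      set U := bigU L ∪ (X.erase x₀) with hU
      have hx₀U : x₀ ∉ U := by
        rw [hU, Finset.mem_union]
        push_neg
        exact ⟨hx₀.2, Finset.notMem_erase _ _⟩
      have hUcard : U.card ≤ c₀ := by
        calc U.card ≤ (bigU L).card + (X.erase x₀).card := Finset.card_union_le _ _
          _ ≤ k * (a + b) + t := by
              have he : (X.erase x₀).card = t := by
                rw [Finset.card_erase_of_mem hx₀.1, hX]
                omega
              omega
          _ ≤ c₀ := by
              rw [hc₀]
              exact Nat.add_le_add (Nat.mul_le_mul_right _ (by omega)) le_rfl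
      set W₀ := G.neighborFinset x₀ \ U with hW₀
      have hW₀x₀ : x₀ ∉ W₀ := by
        rw [hW₀, Finset.mem_sdiff]
        push_neg
        intro hmem
        exact absurd (by simpa using hmem : G.Adj x₀ x₀) (G.irrefl)
      have hW₀nb : W₀ ⊆ G.neighborFinset x₀ := by
        rw [hW₀]; exact Finset.sdiff_subset
      have hW₀U : ∀ y ∈ W₀, y ∉ U := by
        intro y hy
        rw [hW₀, Finset.mem_sdiff] at hy
        exact hy.2
      by_cases hfree : RelFree G (a - 1) b W₀
      · exfalso
        obtain ⟨j, _, hj⟩ := Finset.mem_image.1 hx₀.1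
        have hcount := hcliq j
        rw [hj, cliqueCountOn_eq_atF] at hcount
        have hbnd := hbound V G x₀ U hUcard hx₀U hfree
        rw [hcard] at hbnd
        rw [← hγ] at hbnd
        have hnγ : (0:ℝ) < (n:ℝ) ^ γ := Real.rpow_pos_of_pos (by linarith) γ
        have hge := hN₀ n hnn
        have hsplit : (n:ℝ) ^ β = (n:ℝ) ^ γ * (n:ℝ) ^ (β - γ) := by
          rw [← Real.rpow_add (by linarith : (0:ℝ) < (n:ℝ))]
          ring_nf
        have hchain : (n:ℝ) ^ β / (2 * ((a : ℝ) + (b : ℝ)) * (t : ℝ)) ≤ C * (n:ℝ) ^ γ :=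
          le_trans hcount hbnd
        rw [div_le_iff₀ hD, hsplit] at hchain
        have h2 : (n:ℝ) ^ γ * (C * (2 * ((a : ℝ) + (b : ℝ)) * (t : ℝ)) + 1)
            ≤ (n:ℝ) ^ γ * (n:ℝ) ^ (β - γ) :=
          mul_le_mul_of_nonneg_left hge (le_of_lt hnγ)
        nlinarith
      · unfold RelFree at hfree
        rw [not_not] at hfree
        obtain ⟨A', B, hA'W, hBW, hA'card, hBcard, hadj⟩ := hfree
        have hx₀A' : x₀ ∉ A' := fun h => hW₀x₀ (hA'W h)
        have hx₀B : x₀ ∉ B := fun h => hW₀x₀ (hBW h)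
        refine ⟨(insert x₀ A', B) :: L, by simp [hlen], ?_, ?_⟩
        · intro p hp
          rcases List.mem_cons.1 hp with rfl | hp
          · refine ⟨?_, hBcard, ?_, ?_⟩
            · show (insert x₀ A').card = a
              rw [Finset.card_insert_of_notMem hx₀A', hA'card]
              omega
            · intro u hu w hw
              rcases Finset.mem_insert.1 hu with rfl | hu
              · have : w ∈ G.neighborFinset u := hW₀nb (hBW hw)
                rwa [SimpleGraph.mem_neighborFinset] at this
              · exact hadj u hu w hw
            · show (X ∩ (insert x₀ A' ∪ B)).card ≤ 1
              have hsub : X ∩ (insert x₀ A' ∪ B) ⊆ {x₀} := by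
                intro y hy
                rw [Finset.mem_inter] at hy
                rw [Finset.mem_singleton]
                by_contra hne
                have hyU : y ∈ U := by
                  rw [hU, Finset.mem_union]
                  right
                  exact Finset.mem_erase.2 ⟨hne, hy.1⟩
                rcases Finset.mem_union.1 hy.2 with h | h
                · rcases Finset.mem_insert.1 h with rfl | h
                  · exact hne rfl
                  · exact hW₀U y (hA'W h) hyU
                · exact hW₀U y (hBW h) hyU
              calc (X ∩ (insert x₀ A' ∪ B)).card ≤ ({x₀} : Finset V).card :=
                  Finset.card_le_card hsub
                _ = 1 := Finset.card_singleton _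
          · exact hprop p hp
        · rw [List.pairwise_cons]
          constructor
          · intro q hq
            rw [Finset.disjoint_left]
            intro y hy hyq
            have hyU : y ∈ bigU L := subset_bigU hq hyq
            rcases Finset.mem_union.1 hy with h | h
            · rcases Finset.mem_insert.1 h with rfl | h
              · exact hx₀.2 hyU
              · exact hW₀U y (hA'W h) (by rw [hU]; exact Finset.mem_union_left _ hyU)
            · exact hW₀U y (hBW h) (by rw [hU]; exact Finset.mem_union_left _ hyU)
          · exact hpair
  obtain ⟨L, hlen, hprop, hpair⟩ := key (t + 1) le_rfl
  have hdisjAB : ∀ p ∈ L, Disjoint p.1 p.2 := by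
    intro p hp
    rw [Finset.disjoint_left]
    intro y h1 h2
    exact G.irrefl ((hprop p hp).2.2.1 y h1 y h2)
  let P : Fin (t + 1) → Finset V × Finset V := fun i => L.get (Fin.cast hlen.symm i)
  have hPmem : ∀ i, P i ∈ L := fun i => L.get_mem _
  have hPdisj : ∀ i j : Fin (t + 1), i ≠ j →
      Disjoint ((P i).1 ∪ (P i).2) ((P j).1 ∪ (P j).2) := by
    intro i j hij
    have hg := List.pairwise_iff_get.1 hpair
    rcases lt_or_gt_of_ne hij with h | h
    · exact hg (Fin.cast hlen.symm i) (Fin.cast hlen.symm j) (by rw [Fin.lt_def]; exact h)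
    · exact (hg (Fin.cast hlen.symm j) (Fin.cast hlen.symm i)
        (by rw [Fin.lt_def]; exact h)).symm
  let eA : ∀ i : Fin (t + 1), Fin a ≃ {y // y ∈ (P i).1} := fun i =>
    (Finset.equivFinOfCardEq (hprop _ (hPmem i)).1).symm
  let eB : ∀ i : Fin (t + 1), Fin b ≃ {y // y ∈ (P i).2} := fun i =>
    (Finset.equivFinOfCardEq (hprop _ (hPmem i)).2.1).symm
  let f : Fin (t + 1) × (Fin a ⊕ Fin b) → V := fun z =>
    match z.2 with
    | Sum.inl p => ((eA z.1) p : V)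
    | Sum.inr q => ((eB z.1) q : V)
  have hfA : ∀ i p, f (i, Sum.inl p) ∈ (P i).1 := fun i p => ((eA i) p).2
  have hfB : ∀ i q, f (i, Sum.inr q) ∈ (P i).2 := fun i q => ((eB i) q).2
  refine ⟨⟨f, ?_⟩, ?_⟩
  · rintro ⟨i, u⟩ ⟨i', u'⟩ hzw
    obtain ⟨h1, h2⟩ := hzw
    dsimp only at h1
    subst h1
    cases u with
    | inl p =>
      cases u' with
      | inl p' => simp [completeBipartiteGraph] at h2
      | inr q => exact (hprop _ (hPmem i)).2.2.1 _ (hfA i p) _ (hfB i q)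
    | inr q =>
      cases u' with
      | inl p => exact ((hprop _ (hPmem i)).2.2.1 _ (hfA i p) _ (hfB i q)).symm
      | inr q' => simp [completeBipartiteGraph] at h2
  · rintro ⟨i, u⟩ ⟨i', u'⟩ h
    change f (i, u) = f (i', u') at h
    by_cases hii : i = i'
    · subst hii
      congr 1
      cases u with
      | inl p =>
        cases u' with
        | inl p' =>
          have : ((eA i) p : V) = ((eA i) p' : V) := h
          have := (eA i).injective (Subtype.coe_injective this)
          rw [this]
        | inr q =>
          exfalso
          have h1 : f (i, Sum.inl p) ∈ (P i).1 := hfA i p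
          have h2 : f (i, Sum.inr q) ∈ (P i).2 := hfB i q
          rw [h] at h1
          exact Finset.disjoint_left.1 (hdisjAB _ (hPmem i)) h1 h2
      | inr q =>
        cases u' with
        | inl p =>
          exfalso
          have h1 : f (i, Sum.inl p) ∈ (P i).1 := hfA i p
          have h2 : f (i, Sum.inr q) ∈ (P i).2 := hfB i q
          rw [← h] at h1
          exact Finset.disjoint_left.1 (hdisjAB _ (hPmem i)) h1 h2
        | inr q' =>
          have : ((eB i) q : V) = ((eB i) q' : V) := h
          have := (eB i).injective (Subtype.coe_injective this)
          rw [this]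
    · exfalso
      have hm1 : f (i, u) ∈ (P i).1 ∪ (P i).2 := by
        cases u with
        | inl p => exact Finset.mem_union_left _ (hfA i p)
        | inr q => exact Finset.mem_union_right _ (hfB i q)
      have hm2 : f (i', u') ∈ (P i').1 ∪ (P i').2 := by
        cases u' with
        | inl p => exact Finset.mem_union_left _ (hfA i' p)
        | inr q => exact Finset.mem_union_right _ (hfB i' q)
      rw [h] at hm1
      exact Finset.disjoint_left.1 (hPdisj i i' hii) hm1 hm2
end

section
/- Let t ≥ r ≥ 3 be integers, a ≥ 2(r-1), b ≥ (a-1)! + 1, and let β be a real number with r - 1 - (r-1)(r-2)/(2(a-1)) < β < r - 1 - (r-1)(r-2)/(2a). Then there exists N such that for all n ≥ N the following holds: if G is a graph on n vertices containing t distinct vertices x_1, …, x_t each of which lies in at least n^β/(2(a+b)t) copies of K_r, and the induced subgraph G[V(G) \ {x_1, …, x_t}] contains a copy of K_{a,b}, then G contains t+1 pairwise vertex-disjoint copies of K_{a,b}. -/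
open Finset

open Finset

set_option linter.unusedSectionVars false

namespace Stmt13Aux

noncomputable def gN (m s : ℕ) : ℝ := (m : ℝ) - (m : ℝ) * ((m : ℝ) - 1) / (2 * (s : ℝ))

variable {V : Type} [Fintype V] [DecidableEq V]

open Classical in
noncomputable def nbr (G : SimpleGraph V) (v : V) : Finset V :=
  univ.filter (fun w => G.Adj v w)

lemma mem_nbr {G : SimpleGraph V} {v w : V} : w ∈ nbr G v ↔ G.Adj v w := by
  classical
  simp [nbr]

open Classical in
noncomputable def cIn (G : SimpleGraph V) (m : ℕ) (A : Finset V) : Finset (Finset V) :=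
  (A.powersetCard m).filter (fun S => G.IsClique (S : Set V))

lemma mem_cIn {G : SimpleGraph V} {m : ℕ} {A S : Finset V} :
    S ∈ cIn G m A ↔ S ⊆ A ∧ S.card = m ∧ G.IsClique (S : Set V) := by
  classical
  simp only [cIn, Finset.mem_filter, Finset.mem_powersetCard, and_assoc]

def NoBip (G : SimpleGraph V) (s t : ℕ) (A : Finset V) : Prop :=
  ¬ ∃ S T : Finset V, S ⊆ A ∧ T ⊆ A ∧ S.card = s ∧ T.card = t ∧
      ∀ u ∈ S, ∀ w ∈ T, G.Adj u w

lemma NoBip.mono {G : SimpleGraph V} {s t : ℕ} {A B : Finset V} (h : NoBip G s t A)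
    (hBA : B ⊆ A) : NoBip G s t B := by
  rintro ⟨S, T, hS, hT, h1, h2, h3⟩
  exact h ⟨S, T, hS.trans hBA, hT.trans hBA, h1, h2, h3⟩

lemma codeg {G : SimpleGraph V} {s t : ℕ} {A : Finset V} (h : NoBip G s t A)
    {S : Finset V} (hS : S ⊆ A) (hcard : S.card = s) :
    (A.filter (fun v => S ⊆ nbr G v)).card ≤ t - 1 := by
  classical
  by_contra hc
  push_neg at hc
  have ht : t ≤ (A.filter (fun v => S ⊆ nbr G v)).card := by omega
  obtain ⟨T, hT, hTcard⟩ := Finset.exists_subset_card_eq ht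
  refine h ⟨S, T, hS, hT.trans (Finset.filter_subset _ _), hcard, hTcard, ?_⟩
  intro u hu w hw
  have := (Finset.mem_filter.1 (hT hw)).2 hu
  exact (mem_nbr.1 this).symm

lemma pow_le_desc (d : ℕ) : ∀ s : ℕ, d ^ s ≤ d.descFactorial s + s ^ 2 * d ^ (s - 1) := by
  intro s
  induction s with
  | zero => simp
  | succ s ih =>
    rcases Nat.eq_zero_or_pos s with rfl | hs
    · simp [Nat.descFactorial]
    have hss : s - 1 + 1 = s := by omega
    have h2 : d * d ^ (s - 1) ≤ d ^ s := by
      have : d * d ^ (s - 1) = d ^ s := by rw [mul_comm, ← pow_succ, hss]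
      exact this.le
    have h3 : d * d.descFactorial s ≤ d.descFactorial (s + 1) + s * d ^ s := by
      have hd : d ≤ (d - s) + s := by omega
      calc d * d.descFactorial s ≤ ((d - s) + s) * d.descFactorial s :=
            Nat.mul_le_mul_right _ hd
        _ = (d - s) * d.descFactorial s + s * d.descFactorial s := by ring
        _ ≤ d.descFactorial (s + 1) + s * d ^ s := by
            rw [Nat.descFactorial_succ]
            exact Nat.add_le_add_left (Nat.mul_le_mul_left _ (Nat.descFactorial_le_pow d s)) _
    have hsq : s + s ^ 2 ≤ (s + 1) ^ 2 := by nlinarith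
    calc d ^ (s + 1) = d * d ^ s := by ring
      _ ≤ d * (d.descFactorial s + s ^ 2 * d ^ (s - 1)) := Nat.mul_le_mul_left _ ih
      _ = d * d.descFactorial s + s ^ 2 * (d * d ^ (s - 1)) := by ring
      _ ≤ (d.descFactorial (s + 1) + s * d ^ s) + s ^ 2 * d ^ s :=
          Nat.add_le_add h3 (Nat.mul_le_mul_left _ h2)
      _ = d.descFactorial (s + 1) + (s + s ^ 2) * d ^ s := by ring
      _ ≤ d.descFactorial (s + 1) + (s + 1) ^ 2 * d ^ s :=
          Nat.add_le_add_left (Nat.mul_le_mul_right _ hsq) _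
      _ = d.descFactorial (s + 1) + (s + 1) ^ 2 * d ^ (s + 1 - 1) := by simp

end Stmt13Aux
namespace Stmt13Aux

variable {V : Type} [Fintype V] [DecidableEq V]

lemma sum_choose_le {G : SimpleGraph V} {s t : ℕ} {A : Finset V} (h : NoBip G s t A) :
    ∑ v ∈ A, ((A ∩ nbr G v).card).choose s ≤ A.card.choose s * (t - 1) := by
  classical
  have hps : ∀ v : V, ((A ∩ nbr G v).card).choose s
      = ((A.powersetCard s).filter (fun S => S ⊆ nbr G v)).card := by
    intro v
    rw [← Finset.card_powersetCard]
    congr 1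
    ext S
    simp only [Finset.mem_powersetCard, Finset.mem_filter, Finset.subset_inter_iff]
    tauto
  calc ∑ v ∈ A, ((A ∩ nbr G v).card).choose s
      = ∑ v ∈ A, ∑ S ∈ A.powersetCard s, if S ⊆ nbr G v then 1 else 0 := by
        refine Finset.sum_congr rfl fun v _ => ?_
        rw [hps v, Finset.card_filter]
    _ = ∑ S ∈ A.powersetCard s, ∑ v ∈ A, if S ⊆ nbr G v then 1 else 0 := Finset.sum_comm
    _ = ∑ S ∈ A.powersetCard s, (A.filter (fun v => S ⊆ nbr G v)).card := by
        refine Finset.sum_congr rfl fun S _ => ?_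
        rw [Finset.card_filter]
    _ ≤ ∑ _S ∈ A.powersetCard s, (t - 1) := by
        refine Finset.sum_le_sum fun S hS => ?_
        obtain ⟨hSA, hcard⟩ := Finset.mem_powersetCard.1 hS
        exact codeg h hSA hcard
    _ = A.card.choose s * (t - 1) := by
        rw [Finset.sum_const, Finset.card_powersetCard, smul_eq_mul]

lemma sum_pow_card_le {G : SimpleGraph V} {s t : ℕ} {A : Finset V} (h : NoBip G s t A)
    (hs : 1 ≤ s) :
    ∑ v ∈ A, ((A ∩ nbr G v).card) ^ s ≤ (s.factorial * t + s ^ 2) * A.card ^ s := by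
  classical
  have dle : ∀ v : V, (A ∩ nbr G v).card ≤ A.card :=
    fun v => Finset.card_le_card Finset.inter_subset_left
  calc ∑ v ∈ A, ((A ∩ nbr G v).card) ^ s
      ≤ ∑ v ∈ A, (((A ∩ nbr G v).card).descFactorial s + s ^ 2 * ((A ∩ nbr G v).card) ^ (s - 1)) :=
        Finset.sum_le_sum fun v _ => pow_le_desc _ s
    _ = ∑ v ∈ A, ((A ∩ nbr G v).card).descFactorial s
        + ∑ v ∈ A, s ^ 2 * ((A ∩ nbr G v).card) ^ (s - 1) := Finset.sum_add_distrib
    _ ≤ s.factorial * (A.card.choose s * (t - 1)) + s ^ 2 * (A.card * A.card ^ (s - 1)) := by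
        gcongr
        · calc ∑ v ∈ A, ((A ∩ nbr G v).card).descFactorial s
              = ∑ v ∈ A, s.factorial * ((A ∩ nbr G v).card).choose s := by
                refine Finset.sum_congr rfl fun v _ => ?_
                rw [Nat.descFactorial_eq_factorial_mul_choose]
            _ = s.factorial * ∑ v ∈ A, ((A ∩ nbr G v).card).choose s := by
                rw [Finset.mul_sum]
            _ ≤ s.factorial * (A.card.choose s * (t - 1)) :=
                Nat.mul_le_mul_left _ (sum_choose_le h)
        · calc ∑ v ∈ A, s ^ 2 * ((A ∩ nbr G v).card) ^ (s - 1)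
              ≤ ∑ _v ∈ A, s ^ 2 * A.card ^ (s - 1) :=
                Finset.sum_le_sum fun v _ => Nat.mul_le_mul_left _ (Nat.pow_le_pow_left (dle v) _)
            _ = s ^ 2 * (A.card * A.card ^ (s - 1)) := by
                rw [Finset.sum_const, smul_eq_mul]; ring
    _ ≤ (s.factorial * t + s ^ 2) * A.card ^ s := by
        have h1 : A.card * A.card ^ (s - 1) = A.card ^ s := by
          rw [← pow_succ']
          congr 1
          omega
        have h2 : A.card.choose s * (t - 1) ≤ A.card ^ s * t :=
          Nat.mul_le_mul (Nat.choose_le_pow _ _) (by omega)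
        rw [h1]
        calc s.factorial * (A.card.choose s * (t - 1)) + s ^ 2 * A.card ^ s
            ≤ s.factorial * (A.card ^ s * t) + s ^ 2 * A.card ^ s :=
              Nat.add_le_add_right (Nat.mul_le_mul_left _ h2) _
          _ = (s.factorial * t + s ^ 2) * A.card ^ s := by ring

lemma key1 {G : SimpleGraph V} {m : ℕ} {A : Finset V} :
    (m + 1) * (cIn G (m + 1) A).card ≤ ∑ v ∈ A, (cIn G m (A ∩ nbr G v)).card := by
  classical
  have step1 : ∀ S ∈ cIn G (m + 1) A, m + 1 = (A.filter (fun v => v ∈ S)).card := by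
    intro S hS
    obtain ⟨hSA, hcard, _⟩ := mem_cIn.1 hS
    rw [Finset.filter_mem_eq_inter, Finset.inter_eq_right.2 hSA, hcard]
  calc (m + 1) * (cIn G (m + 1) A).card
      = ∑ _S ∈ cIn G (m + 1) A, (m + 1) := by rw [Finset.sum_const, smul_eq_mul, mul_comm]
    _ = ∑ S ∈ cIn G (m + 1) A, (A.filter (fun v => v ∈ S)).card :=
        Finset.sum_congr rfl step1
    _ = ∑ S ∈ cIn G (m + 1) A, ∑ v ∈ A, if v ∈ S then 1 else 0 := by
        refine Finset.sum_congr rfl fun S _ => ?_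
        rw [Finset.card_filter]
    _ = ∑ v ∈ A, ∑ S ∈ cIn G (m + 1) A, if v ∈ S then 1 else 0 := Finset.sum_comm
    _ = ∑ v ∈ A, ((cIn G (m + 1) A).filter (fun S => v ∈ S)).card := by
        refine Finset.sum_congr rfl fun v _ => ?_
        rw [Finset.card_filter]
    _ ≤ ∑ v ∈ A, (cIn G m (A ∩ nbr G v)).card := by
        refine Finset.sum_le_sum fun v _ => ?_
        refine Finset.card_le_card_of_injOn (fun S => S.erase v) ?_ ?_
        · intro S hS
          obtain ⟨hS', hvS⟩ := Finset.mem_filter.1 hS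
          obtain ⟨hSA, hcard, hclique⟩ := mem_cIn.1 hS'
          refine mem_cIn.2 ⟨?_, ?_, ?_⟩
          · intro w hw
            obtain ⟨hwv, hwS⟩ := Finset.mem_erase.1 hw
            refine Finset.mem_inter.2 ⟨hSA hwS, mem_nbr.2 ?_⟩
            exact hclique (by exact_mod_cast hvS) (by exact_mod_cast hwS) (Ne.symm hwv)
          · rw [Finset.card_erase_of_mem hvS, hcard]; omega
          · exact hclique.subset (by exact_mod_cast Finset.erase_subset v S)
        · intro S1 h1 S2 h2 heq
          have hv1 := (Finset.mem_filter.1 h1).2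
          have hv2 := (Finset.mem_filter.1 h2).2
          have heq' : S1.erase v = S2.erase v := heq
          rw [← Finset.insert_erase hv1, ← Finset.insert_erase hv2, heq']

lemma nbip_inter {G : SimpleGraph V} {s t : ℕ} {A : Finset V} {v : V} (hv : v ∈ A)
    (h : NoBip G (s + 1) t A) : NoBip G s t (A ∩ nbr G v) := by
  rintro ⟨S, T, hS, hT, hcS, hcT, hadj⟩
  have hvS : v ∉ S := by
    intro hvS
    exact G.loopless.irrefl v (mem_nbr.1 (Finset.mem_inter.1 (hS hvS)).2)
  refine h ⟨insert v S, T, ?_, hT.trans Finset.inter_subset_left, ?_, hcT, ?_⟩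
  · exact Finset.insert_subset hv (hS.trans Finset.inter_subset_left)
  · rw [Finset.card_insert_of_notMem hvS, hcS]
  · intro u hu w hw
    rcases Finset.mem_insert.1 hu with rfl | hu'
    · exact mem_nbr.1 (Finset.mem_inter.1 (hT hw)).2
    · exact hadj u hu' w hw

end Stmt13Aux
namespace Stmt13Aux

lemma gN_nonneg {m s : ℕ} (hm : m ≤ s) : 0 ≤ gN m s := by
  rcases Nat.eq_zero_or_pos m with rfl | hm1
  · simp [gN]
  have hs1 : (1:ℝ) ≤ (s:ℝ) := by exact_mod_cast le_trans hm1 hm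
  have hms : (m:ℝ) ≤ (s:ℝ) := by exact_mod_cast hm
  have hm1' : (1:ℝ) ≤ (m:ℝ) := by exact_mod_cast hm1
  rw [gN, sub_nonneg, div_le_iff₀ (by positivity)]
  nlinarith

lemma gN_mono {j m s : ℕ} (hj : j ≤ m) (hm : m ≤ s) : gN j s ≤ gN m s := by
  rcases Nat.eq_zero_or_pos s with rfl | hs1
  · interval_cases m <;> interval_cases j <;> simp
  have hs : (0:ℝ) < 2 * (s:ℝ) := by positivity
  have hjm : (j:ℝ) ≤ (m:ℝ) := by exact_mod_cast hj
  have hms : (m:ℝ) ≤ (s:ℝ) := by exact_mod_cast hm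
  rw [← sub_nonneg]
  have hdiff : gN m s - gN j s
      = ((m:ℝ) - (j:ℝ)) - ((m:ℝ) * ((m:ℝ) - 1) - (j:ℝ) * ((j:ℝ) - 1)) / (2 * (s:ℝ)) := by
    rw [gN, gN]; ring
  rw [hdiff, sub_nonneg, div_le_iff₀ hs]
  nlinarith

lemma AS (t₀ : ℕ) : ∀ m s : ℕ, m ≤ s → ∃ C : ℝ, 1 ≤ C ∧
    ∀ (V : Type) (_ : Fintype V) (_ : DecidableEq V) (G : SimpleGraph V) (A : Finset V),
      NoBip G s t₀ A → ((cIn G m A).card : ℝ) ≤ C * (A.card : ℝ) ^ (gN m s) := by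
  intro m
  induction m with
  | zero =>
    intro s _
    refine ⟨1, le_refl 1, fun V _ _ G A _ => ?_⟩
    have h1 : (cIn G 0 A).card ≤ 1 := by
      classical
      calc (cIn G 0 A).card ≤ (A.powersetCard 0).card :=
            Finset.card_le_card (Finset.filter_subset _ _)
        _ = 1 := by rw [Finset.card_powersetCard, Nat.choose_zero_right]
    have h2 : gN 0 s = 0 := by simp [gN]
    rw [h2, Real.rpow_zero, one_mul]
    exact_mod_cast h1
  | succ m ih =>
    intro s hms
    rcases Nat.eq_zero_or_pos m with rfl | hm1
    · refine ⟨1, le_refl 1, fun V _ _ G A _ => ?_⟩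
      have h1 : (cIn G 1 A).card ≤ A.card := by
        classical
        calc (cIn G 1 A).card ≤ (A.powersetCard 1).card :=
              Finset.card_le_card (Finset.filter_subset _ _)
          _ = A.card := by rw [Finset.card_powersetCard, Nat.choose_one_right]
      have h2 : gN 1 s = 1 := by simp [gN]
      rw [h2, Real.rpow_one, one_mul]
      exact_mod_cast h1
    · obtain ⟨C, hC1, hC⟩ := ih (s - 1) (by omega)
      have hs2 : 2 ≤ s := by omega
      set K : ℝ := ((s.factorial * t₀ + s ^ 2 : ℕ) : ℝ) with hKdef
      have hK1 : (1:ℝ) ≤ K := by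
        have hss : 1 ≤ s ^ 2 := Nat.one_le_pow _ _ (by omega)
        have h' : (1:ℕ) ≤ s.factorial * t₀ + s ^ 2 := le_trans hss (Nat.le_add_left _ _)
        rw [hKdef]; exact_mod_cast h'
      refine ⟨C * K, by nlinarith, ?_⟩
      intro V instV instD G A hfree
      classical
      set γ := gN m (s - 1) with hγdef
      have hcast : ((s - 1 : ℕ) : ℝ) = (s : ℝ) - 1 := by
        rw [Nat.cast_sub (by omega)]; norm_num
      have hs0 : (0:ℝ) < (s:ℝ) := by exact_mod_cast lt_of_lt_of_le two_pos hs2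
      -- core
      have hs2' : (2:ℝ) ≤ (s:ℝ) := by exact_mod_cast hs2
      have hγm : γ ≤ (m:ℝ) := by
        rw [hγdef, gN, sub_le_self_iff]
        have h1 : (0:ℝ) ≤ (m:ℝ) * ((m:ℝ) - 1) := by
          have : (1:ℝ) ≤ (m:ℝ) := by exact_mod_cast hm1
          nlinarith
        positivity
      have hγpos : 0 < γ := by
        rw [hγdef, gN, hcast, sub_pos, div_lt_iff₀ (by nlinarith : (0:ℝ) < 2 * ((s:ℝ) - 1))]
        have h1 : (1:ℝ) ≤ (m:ℝ) := by exact_mod_cast hm1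
        have h2 : (m:ℝ) + 1 ≤ (s:ℝ) := by exact_mod_cast hms
        nlinarith
      have hγs : γ < (s:ℝ) := lt_of_le_of_lt hγm (by exact_mod_cast Nat.lt_of_succ_le hms)
      rcases Nat.eq_zero_or_pos A.card with hA0 | hA1
      · have hc0 : (cIn G (m + 1) A).card = 0 := by
          classical
          have hsub : cIn G (m+1) A ⊆ A.powersetCard (m+1) := by
            intro S hS
            obtain ⟨h1, h2, _⟩ := mem_cIn.1 hS
            exact Finset.mem_powersetCard.2 ⟨h1, h2⟩
          have h2 := Finset.card_le_card hsub
          rw [Finset.card_powersetCard, hA0, Nat.choose_eq_zero_of_lt (by omega)] at h2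
          omega
        have : ((cIn G (m + 1) A).card : ℝ) = 0 := by exact_mod_cast hc0
        rw [this]
        positivity
      -- notation
      set nA : ℝ := (A.card : ℝ) with hnAdef
      have hnA1 : (1:ℝ) ≤ nA := by rw [hnAdef]; exact_mod_cast hA1
      have hnA0 : (0:ℝ) < nA := lt_of_lt_of_le one_pos hnA1
      set d : V → ℝ := fun v => ((A ∩ nbr G v).card : ℝ) with hddef
      have hd0 : ∀ v, 0 ≤ d v := fun v => by rw [hddef]; positivity
      -- step 1 : key1 + IH
      have h1 : ((m+1:ℕ):ℝ) * ((cIn G (m+1) A).card : ℝ) ≤ C * ∑ v ∈ A, d v ^ γ := by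
        calc ((m+1:ℕ):ℝ) * ((cIn G (m+1) A).card : ℝ)
            ≤ ∑ v ∈ A, ((cIn G m (A ∩ nbr G v)).card : ℝ) := by exact_mod_cast key1
          _ ≤ ∑ v ∈ A, C * d v ^ γ := by
              refine Finset.sum_le_sum fun v hv => ?_
              have hfree' : NoBip G (s-1) t₀ (A ∩ nbr G v) := by
                refine nbip_inter hv ?_
                rwa [Nat.sub_add_cancel (by omega)]
              exact hC V instV instD G _ hfree'
          _ = C * ∑ v ∈ A, d v ^ γ := by rw [Finset.mul_sum]
      -- step 2 : Hölder
      have hp : Real.HolderConjugate ((s:ℝ)/γ) ((s:ℝ)/((s:ℝ)-γ)) := by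
        refine Real.holderConjugate_iff.2 ⟨?_, ?_⟩
        · rw [lt_div_iff₀ hγpos]; linarith
        · rw [inv_div, inv_div]
          field_simp
          ring
      have hHolder : ∑ v ∈ A, d v ^ γ ≤ (∑ v ∈ A, d v ^ (s:ℝ)) ^ (γ/(s:ℝ)) * nA ^ (1 - γ/(s:ℝ)) := by
        have hh := Real.inner_le_Lp_mul_Lq A (fun v => d v ^ γ) (fun _ => (1:ℝ)) hp
        simp only [mul_one] at hh
        have e1 : ∀ v, |d v ^ γ| ^ ((s:ℝ)/γ) = d v ^ (s:ℝ) := by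
          intro v
          rw [abs_of_nonneg (Real.rpow_nonneg (hd0 v) _), ← Real.rpow_mul (hd0 v)]
          congr 1
          field_simp
        have e2 : (1:ℝ) / ((s:ℝ)/γ) = γ / (s:ℝ) := by rw [one_div_div]
        have e3 : (1:ℝ) / ((s:ℝ)/((s:ℝ)-γ)) = 1 - γ/(s:ℝ) := by
          rw [one_div_div]
          field_simp
        have e4 : ∑ v ∈ A, |(1:ℝ)| ^ ((s:ℝ)/((s:ℝ)-γ)) = nA := by
          simp [hnAdef]
        rw [e2, e3, e4] at hh
        calc ∑ v ∈ A, d v ^ γ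
            ≤ (∑ v ∈ A, |d v ^ γ| ^ ((s:ℝ)/γ)) ^ (γ/(s:ℝ)) * nA ^ (1 - γ/(s:ℝ)) := hh
          _ = (∑ v ∈ A, d v ^ (s:ℝ)) ^ (γ/(s:ℝ)) * nA ^ (1 - γ/(s:ℝ)) := by
              congr 2
              exact Finset.sum_congr rfl fun v _ => e1 v
      -- step 3 : moment bound
      have hmom : ∑ v ∈ A, d v ^ (s:ℝ) ≤ K * nA ^ (s:ℝ) := by
        have hNat := sum_pow_card_le hfree (by omega : 1 ≤ s)
        have hcast2 : ∑ v ∈ A, d v ^ (s:ℝ) = ((∑ v ∈ A, ((A ∩ nbr G v).card) ^ s : ℕ) : ℝ) := by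
          push_cast
          refine Finset.sum_congr rfl fun v _ => ?_
          rw [hddef, Real.rpow_natCast]
        rw [hcast2, Real.rpow_natCast nA s, hKdef, hnAdef]
        exact_mod_cast hNat
      -- step 4 : combine
      have hcomb : (∑ v ∈ A, d v ^ (s:ℝ)) ^ (γ/(s:ℝ)) ≤ K * nA ^ γ := by
        have hsum0 : 0 ≤ ∑ v ∈ A, d v ^ (s:ℝ) :=
          Finset.sum_nonneg fun v _ => Real.rpow_nonneg (hd0 v) _
        have hexp0 : 0 ≤ γ/(s:ℝ) := le_of_lt (div_pos hγpos hs0)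
        calc (∑ v ∈ A, d v ^ (s:ℝ)) ^ (γ/(s:ℝ))
            ≤ (K * nA ^ (s:ℝ)) ^ (γ/(s:ℝ)) := Real.rpow_le_rpow hsum0 hmom hexp0
          _ = K ^ (γ/(s:ℝ)) * (nA ^ (s:ℝ)) ^ (γ/(s:ℝ)) :=
              Real.mul_rpow (by linarith) (Real.rpow_nonneg (le_of_lt hnA0) _)
          _ ≤ K * nA ^ γ := by
              have hKle : K ^ (γ/(s:ℝ)) ≤ K := by
                nth_rewrite 2 [show K = K ^ (1:ℝ) by rw [Real.rpow_one]]
                exact Real.rpow_le_rpow_of_exponent_le hK1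
                  (by rw [div_le_one hs0]; exact le_of_lt hγs)
              have hnAe : (nA ^ (s:ℝ)) ^ (γ/(s:ℝ)) = nA ^ γ := by
                rw [← Real.rpow_mul (le_of_lt hnA0)]
                congr 1
                field_simp
              rw [hnAe]
              exact mul_le_mul_of_nonneg_right hKle (Real.rpow_nonneg (le_of_lt hnA0) _)
      -- exponent identity
      have hid : γ + (1 - γ/(s:ℝ)) = gN (m+1) s := by
        have hsne : (s:ℝ) ≠ 0 := ne_of_gt hs0
        have hs1ne : (s:ℝ) - 1 ≠ 0 := by
          have : (2:ℝ) ≤ (s:ℝ) := by exact_mod_cast hs2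
          linarith
        rw [hγdef, gN, gN, hcast]
        push_cast
        field_simp
        ring
      -- final chain
      have hfinal : ((m+1:ℕ):ℝ) * ((cIn G (m+1) A).card : ℝ) ≤ C * K * nA ^ (gN (m+1) s) := by
        calc ((m+1:ℕ):ℝ) * ((cIn G (m+1) A).card : ℝ)
            ≤ C * ∑ v ∈ A, d v ^ γ := h1
          _ ≤ C * ((∑ v ∈ A, d v ^ (s:ℝ)) ^ (γ/(s:ℝ)) * nA ^ (1 - γ/(s:ℝ))) :=
              mul_le_mul_of_nonneg_left hHolder (by linarith)
          _ ≤ C * (K * nA ^ γ * nA ^ (1 - γ/(s:ℝ))) := by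
              refine mul_le_mul_of_nonneg_left ?_ (by linarith)
              exact mul_le_mul_of_nonneg_right hcomb (Real.rpow_nonneg (le_of_lt hnA0) _)
          _ = C * K * (nA ^ γ * nA ^ (1 - γ/(s:ℝ))) := by ring
          _ = C * K * nA ^ (gN (m+1) s) := by
              rw [← Real.rpow_add hnA0, hid]
      have hself : ((cIn G (m+1) A).card : ℝ) ≤ ((m+1:ℕ):ℝ) * ((cIn G (m+1) A).card : ℝ) := by
        have hm1' : (1:ℝ) ≤ ((m+1:ℕ):ℝ) := by exact_mod_cast Nat.succ_le_succ (Nat.zero_le m)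
        nlinarith [Nat.cast_nonneg (α := ℝ) (cIn G (m+1) A).card]
      exact le_trans hself hfinal


end Stmt13Aux
namespace Stmt13Aux

lemma count_le_cIn {V : Type} [Fintype V] [DecidableEq V] (G : SimpleGraph V) (r : ℕ)
    (hr : 1 ≤ r) (v : V) :
    cliqueCountOn G r v ≤ (cIn G (r - 1) (nbr G v)).card := by
  classical
  have h1 : cliqueCountOn G r v
      = (univ.filter (fun S : Finset V => G.IsNClique r S ∧ v ∈ S)).card := by
    rw [cliqueCountOn, Nat.card_eq_fintype_card, Fintype.card_subtype]
  rw [h1]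
  refine Finset.card_le_card_of_injOn (fun S => S.erase v) ?_ ?_
  · intro S hS
    obtain ⟨hclique, hv⟩ := (Finset.mem_filter.1 hS).2
    refine mem_cIn.2 ⟨?_, ?_, ?_⟩
    · intro w hw
      obtain ⟨hwv, hwS⟩ := Finset.mem_erase.1 hw
      exact mem_nbr.2 (hclique.1 (by exact_mod_cast hv) (by exact_mod_cast hwS) (Ne.symm hwv))
    · rw [Finset.card_erase_of_mem hv, hclique.2]
    · exact hclique.1.subset (by exact_mod_cast Finset.erase_subset v S)
  · intro S1 h1 S2 h2 heq
    have hv1 := (Finset.mem_filter.1 h1).2.2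
    have hv2 := (Finset.mem_filter.1 h2).2.2
    have heq' : S1.erase v = S2.erase v := heq
    rw [← Finset.insert_erase hv1, ← Finset.insert_erase hv2, heq']

lemma cIn_split {V : Type} [Fintype V] [DecidableEq V] (G : SimpleGraph V) (m : ℕ)
    (B U : Finset V) :
    (cIn G m B).card ≤ ∑ W ∈ U.powerset, (cIn G (m - W.card) (B \ U)).card := by
  classical
  rw [← Finset.card_sigma]
  refine Finset.card_le_card_of_injOn (fun S => ⟨S ∩ U, S \ U⟩) ?_ ?_
  · intro S hS
    obtain ⟨hSB, hcard, hclique⟩ := mem_cIn.1 hS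
    refine Finset.mem_sigma.2 ⟨Finset.mem_powerset.2 Finset.inter_subset_right, ?_⟩
    refine mem_cIn.2 ⟨Finset.sdiff_subset_sdiff hSB (Finset.Subset.refl U), ?_, ?_⟩
    · have hsum := Finset.card_inter_add_card_sdiff S U
      show (S \ U).card = m - (S ∩ U).card
      omega
    · exact hclique.subset (by exact_mod_cast Finset.sdiff_subset)
  · intro S1 h1 S2 h2 heq
    simp only [Sigma.mk.inj_iff] at heq
    obtain ⟨heq1, heq2⟩ := heq
    have heq2' : S1 \ U = S2 \ U := eq_of_heq heq2
    rw [← Finset.sdiff_union_inter S1 U, ← Finset.sdiff_union_inter S2 U, heq1, heq2']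

set_option maxHeartbeats 1000000 in
lemma extend (r a b t u0 : ℕ) (hr : 3 ≤ r) (hra : r - 1 ≤ a - 1) (ha : 1 ≤ a)
    (hb : 1 ≤ b) (ht : 1 ≤ t) (β : ℝ) (hβ : gN (r - 1) (a - 1) < β) :
    ∃ N : ℕ, 1 ≤ N ∧ ∀ n : ℕ, N ≤ n →
      ∀ (V : Type) (_ : Fintype V) (_ : DecidableEq V) (G : SimpleGraph V),
      Fintype.card V = n → ∀ (v : V) (U : Finset V), U.card ≤ u0 →
      ((n : ℝ) ^ β / (2 * ((a : ℝ) + (b : ℝ)) * (t : ℝ)) ≤ (cliqueCountOn G r v : ℝ)) →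
      ∃ S T : Finset V, S ⊆ nbr G v \ U ∧ T ⊆ nbr G v \ U ∧ S.card = a - 1 ∧ T.card = b ∧
        ∀ u ∈ S, ∀ w ∈ T, G.Adj u w := by
  classical
  -- constants from the AS lemma
  have hAS : ∀ m : ℕ, ∃ C : ℝ, 1 ≤ C ∧ (m ≤ a - 1 →
      ∀ (V : Type) (_ : Fintype V) (_ : DecidableEq V) (G : SimpleGraph V) (A : Finset V),
        NoBip G (a - 1) b A → ((cIn G m A).card : ℝ) ≤ C * (A.card : ℝ) ^ (gN m (a - 1))) := by
    intro m
    by_cases hm : m ≤ a - 1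
    · obtain ⟨C, h1, h2⟩ := AS b m (a - 1) hm
      exact ⟨C, h1, fun _ => h2⟩
    · exact ⟨1, le_refl 1, fun h => absurd h hm⟩
  choose Cf hCf1 hCf2 using hAS
  set Cstar : ℝ := ∑ m ∈ Finset.range r, Cf m with hCstardef
  have hCf0 : ∀ m ∈ Finset.range r, (0:ℝ) ≤ Cf m := fun m _ => le_trans zero_le_one (hCf1 m)
  have hCstar1 : (1:ℝ) ≤ Cstar := by
    calc (1:ℝ) ≤ Cf 0 := hCf1 0
      _ ≤ Cstar := Finset.single_le_sum hCf0 (Finset.mem_range.2 (by omega))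
  have hCfle : ∀ m, m < r → Cf m ≤ Cstar :=
    fun m hm => Finset.single_le_sum hCf0 (Finset.mem_range.2 hm)
  set gs : ℝ := gN (r - 1) (a - 1) with hgsdef
  have hgs0 : 0 ≤ gs := gN_nonneg hra
  set D : ℝ := 2 * ((a : ℝ) + (b : ℝ)) * (t : ℝ) with hDdef
  have hD0 : (0:ℝ) < D := by
    have h1 : (1:ℝ) ≤ (a:ℝ) := by exact_mod_cast ha
    have h2 : (1:ℝ) ≤ (b:ℝ) := by exact_mod_cast hb
    have h3 : (1:ℝ) ≤ (t:ℝ) := by exact_mod_cast ht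
    rw [hDdef]; nlinarith
  set M : ℝ := D * 2 ^ u0 * Cstar with hMdef
  have hM0 : 0 < M := by
    rw [hMdef]
    exact mul_pos (mul_pos hD0 (by positivity)) (lt_of_lt_of_le one_pos hCstar1)
  -- choose N
  have htend : Filter.Tendsto (fun n : ℕ => (n : ℝ) ^ (β - gs)) Filter.atTop Filter.atTop :=
    (tendsto_rpow_atTop (by linarith)).comp tendsto_natCast_atTop_atTop
  obtain ⟨N0, hN0⟩ := Filter.eventually_atTop.1 (Filter.tendsto_atTop.1 htend (M + 1))
  refine ⟨max N0 1, le_max_right _ _, ?_⟩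
  intro n hn V instV instD G hcardV v U hU hcount
  have hn1 : 1 ≤ n := le_trans (le_max_right N0 1) hn
  have hnR1 : (1:ℝ) ≤ (n:ℝ) := by exact_mod_cast hn1
  have hnR0 : (0:ℝ) < (n:ℝ) := lt_of_lt_of_le one_pos hnR1
  by_contra hno
  have hfree : NoBip G (a - 1) b (nbr G v \ U) := hno
  set A : Finset V := nbr G v \ U with hAdef
  -- counting chain
  have hstep1 : cliqueCountOn G r v ≤ (cIn G (r - 1) (nbr G v)).card :=
    count_le_cIn G r (by omega) v
  have hstep2 : (cIn G (r - 1) (nbr G v)).card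
      ≤ ∑ W ∈ U.powerset, (cIn G (r - 1 - W.card) A).card := cIn_split G (r - 1) (nbr G v) U
  have hstep3 : ((cIn G (r - 1) (nbr G v)).card : ℝ) ≤ 2 ^ u0 * Cstar * (n:ℝ) ^ gs := by
    have hterm : ∀ W ∈ U.powerset,
        ((cIn G (r - 1 - W.card) A).card : ℝ) ≤ Cstar * (n:ℝ) ^ gs := by
      intro W _
      set m' := r - 1 - W.card with hm'def
      have hm'a : m' ≤ a - 1 := le_trans (by omega) hra
      have hAcard : (A.card : ℝ) ≤ (n : ℝ) := by
        have := Finset.card_le_univ A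
        rw [← hcardV]
        exact_mod_cast this
      calc ((cIn G m' A).card : ℝ)
          ≤ Cf m' * (A.card : ℝ) ^ (gN m' (a - 1)) :=
            hCf2 m' hm'a V instV instD G A hfree
        _ ≤ Cstar * (n : ℝ) ^ gs := by
            have h1 : (A.card : ℝ) ^ (gN m' (a - 1)) ≤ (n : ℝ) ^ (gN m' (a - 1)) :=
              Real.rpow_le_rpow (by positivity) hAcard (gN_nonneg hm'a)
            have h2 : (n : ℝ) ^ (gN m' (a - 1)) ≤ (n : ℝ) ^ gs :=
              Real.rpow_le_rpow_of_exponent_le hnR1 (gN_mono (by omega) hra)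
            have h3 : Cf m' ≤ Cstar := hCfle m' (by omega)
            have h4 : (0:ℝ) ≤ Cf m' := le_trans zero_le_one (hCf1 m')
            have h5 : (0:ℝ) ≤ (A.card : ℝ) ^ (gN m' (a - 1)) := Real.rpow_nonneg (by positivity) _
            nlinarith [Real.rpow_nonneg (le_of_lt hnR0) gs]
    calc ((cIn G (r - 1) (nbr G v)).card : ℝ)
        ≤ ∑ W ∈ U.powerset, ((cIn G (r - 1 - W.card) A).card : ℝ) := by
          exact_mod_cast hstep2
      _ ≤ ∑ _W ∈ U.powerset, Cstar * (n:ℝ) ^ gs := Finset.sum_le_sum hterm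
      _ = (2 ^ U.card : ℕ) * (Cstar * (n:ℝ) ^ gs) := by
          rw [Finset.sum_const, Finset.card_powerset, nsmul_eq_mul]
      _ ≤ 2 ^ u0 * Cstar * (n:ℝ) ^ gs := by
          have h6 : ((2 ^ U.card : ℕ) : ℝ) ≤ (2:ℝ) ^ u0 := by
            rw [Nat.cast_pow]
            exact pow_le_pow_right₀ one_le_two hU
          have h7 : (0:ℝ) ≤ Cstar * (n:ℝ) ^ gs := by
            have := Real.rpow_nonneg (le_of_lt hnR0) gs
            nlinarith
          nlinarith [Real.rpow_nonneg (le_of_lt hnR0) gs]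
  -- contradiction
  have hchain : (n:ℝ) ^ β / D ≤ 2 ^ u0 * Cstar * (n:ℝ) ^ gs := by
    calc (n:ℝ) ^ β / D ≤ (cliqueCountOn G r v : ℝ) := hcount
      _ ≤ ((cIn G (r - 1) (nbr G v)).card : ℝ) := by exact_mod_cast hstep1
      _ ≤ 2 ^ u0 * Cstar * (n:ℝ) ^ gs := hstep3
  have hup : (n:ℝ) ^ β ≤ M * (n:ℝ) ^ gs := by
    rw [div_le_iff₀ hD0] at hchain
    calc (n:ℝ) ^ β ≤ 2 ^ u0 * Cstar * (n:ℝ) ^ gs * D := hchain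
      _ = M * (n:ℝ) ^ gs := by rw [hMdef]; ring
  have hlow : (M + 1) * (n:ℝ) ^ gs ≤ (n:ℝ) ^ β := by
    have h8 : M + 1 ≤ (n:ℝ) ^ (β - gs) := hN0 n (le_trans (le_max_left N0 1) hn)
    have h9 : (n:ℝ) ^ β = (n:ℝ) ^ (β - gs) * (n:ℝ) ^ gs := by
      rw [← Real.rpow_add hnR0]; congr 1; ring
    rw [h9]
    exact mul_le_mul_of_nonneg_right h8 (Real.rpow_nonneg (le_of_lt hnR0) _)
  have hpos : (0:ℝ) < (n:ℝ) ^ gs := Real.rpow_pos_of_pos hnR0 _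
  nlinarith

end Stmt13Aux
set_option maxHeartbeats 2000000 in
/-- `t` heavy vertices plus a `K_{a,b}` outside them give `t+1` disjoint
copies of `K_{a,b}`. -/
theorem stmt13 (t r a b : ℕ) (htr : r ≤ t) (hr : 3 ≤ r) (ha : 2 * (r - 1) ≤ a)
    (hb : Nat.factorial (a - 1) + 1 ≤ b) (β : ℝ)
    (hβ1 : (r : ℝ) - 1 - ((r : ℝ) - 1) * ((r : ℝ) - 2) / (2 * ((a : ℝ) - 1)) < β)
    (hβ2 : β < (r : ℝ) - 1 - ((r : ℝ) - 1) * ((r : ℝ) - 2) / (2 * (a : ℝ))) :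
    ∃ N : ℕ, ∀ n : ℕ, N ≤ n → ∀ (V : Type) (_ : Fintype V), ∀ G : SimpleGraph V,
      Fintype.card V = n →
      ∀ x : Fin t → V, Function.Injective x →
      (∀ i, (n : ℝ) ^ β / (2 * ((a : ℝ) + (b : ℝ)) * (t : ℝ)) ≤ (cliqueCountOn G r (x i) : ℝ)) →
      (completeBipartiteGraph (Fin a) (Fin b)).ContainsCopy (G.induce ((Set.range x)ᶜ)) →
      (multiCopies (t + 1) (completeBipartiteGraph (Fin a) (Fin b))).ContainsCopy G := by
  classical
  -- numeric facts
  have ha4 : 4 ≤ a := by omega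
  have ha1 : 1 ≤ a := by omega
  have hra : r - 1 ≤ a - 1 := by omega
  have hb1 : 1 ≤ b := by have := Nat.factorial_pos (a - 1); omega
  have ht1 : 1 ≤ t := by omega
  have hβ : Stmt13Aux.gN (r - 1) (a - 1) < β := by
    have hcast1 : ((r - 1 : ℕ) : ℝ) = (r : ℝ) - 1 := by rw [Nat.cast_sub (by omega)]; norm_num
    have hcast2 : ((a - 1 : ℕ) : ℝ) = (a : ℝ) - 1 := by rw [Nat.cast_sub (by omega)]; norm_num
    rw [Stmt13Aux.gN, hcast1, hcast2]
    have he : (r:ℝ) - 1 - 1 = (r:ℝ) - 2 := by ring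
    rw [he]
    exact hβ1
  obtain ⟨N, hN1, hNmain⟩ :=
    Stmt13Aux.extend r a b t ((a + b) + t + t * (a + b)) hr hra ha1 hb1 ht1 β hβ
  refine ⟨N, ?_⟩
  intro n hn V instV G hcardV x hxinj hcount hcopy
  haveI instD : DecidableEq V := Classical.decEq V
  -- extract the base copy
  obtain ⟨f0, hf0⟩ := hcopy
  set emb0A : Fin a → V := fun p => ((f0 (Sum.inl p)) : V) with hemb0A
  set emb0B : Fin b → V := fun q => ((f0 (Sum.inr q)) : V) with hemb0B
  have hinj0A : Function.Injective emb0A :=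
    fun p p' h => Sum.inl_injective (hf0 (Subtype.coe_injective h))
  have hinj0B : Function.Injective emb0B :=
    fun p p' h => Sum.inr_injective (hf0 (Subtype.coe_injective h))
  set S0 : Finset V := Finset.image emb0A Finset.univ with hS0def
  set T0 : Finset V := Finset.image emb0B Finset.univ with hT0def
  have hS0card : S0.card = a := by
    rw [hS0def, Finset.card_image_of_injective _ hinj0A, Finset.card_univ, Fintype.card_fin]
  have hT0card : T0.card = b := by
    rw [hT0def, Finset.card_image_of_injective _ hinj0B, Finset.card_univ, Fintype.card_fin]
  have hST0adj : ∀ u ∈ S0, ∀ w ∈ T0, G.Adj u w := by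
    intro u hu w hw
    obtain ⟨p, _, rfl⟩ := Finset.mem_image.1 hu
    obtain ⟨q, _, rfl⟩ := Finset.mem_image.1 hw
    have hadj : (completeBipartiteGraph (Fin a) (Fin b)).Adj (Sum.inl p) (Sum.inr q) := by simp
    exact f0.map_rel hadj
  have hST0x : ∀ w ∈ S0 ∪ T0, ∀ j : Fin t, w ≠ x j := by
    intro w hw j hweq
    rcases Finset.mem_union.1 hw with hw' | hw'
    · obtain ⟨p, _, rfl⟩ := Finset.mem_image.1 hw'
      exact (f0 (Sum.inl p)).2 ⟨j, hweq.symm⟩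
    · obtain ⟨q, _, rfl⟩ := Finset.mem_image.1 hw'
      exact (f0 (Sum.inr q)).2 ⟨j, hweq.symm⟩
  set base : Finset V := (S0 ∪ T0) ∪ Finset.image x Finset.univ with hbasedef
  have hbasecard : base.card ≤ (a + b) + t := by
    calc base.card ≤ (S0 ∪ T0).card + (Finset.image x Finset.univ).card :=
          Finset.card_union_le _ _
      _ ≤ (S0.card + T0.card) + (Finset.image x Finset.univ).card :=
          Nat.add_le_add_right (Finset.card_union_le _ _) _
      _ ≤ (a + b) + t := by
          rw [hS0card, hT0card]
          have := Finset.card_image_le (f := x) (s := Finset.univ)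
          rw [Finset.card_univ, Fintype.card_fin] at this
          omega
  have hxbase : ∀ j : Fin t, x j ∈ base := by
    intro j
    exact Finset.mem_union_right _ (Finset.mem_image.2 ⟨j, Finset.mem_univ j, rfl⟩)
  -- greedy construction
  have hrec : ∀ k : ℕ, ∀ hk : k ≤ t, ∃ PQ : Fin k → Finset V × Finset V,
      ∀ j : Fin k, ((PQ j).1.card = a - 1) ∧ ((PQ j).2.card = b) ∧
        ((PQ j).1 ∪ (PQ j).2 ⊆ Stmt13Aux.nbr G (x (Fin.castLE hk j)) \ base) ∧
        (∀ u ∈ (PQ j).1, ∀ w ∈ (PQ j).2, G.Adj u w) ∧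
        (∀ j' : Fin k, j' < j →
          Disjoint ((PQ j).1 ∪ (PQ j).2) ((PQ j').1 ∪ (PQ j').2)) := by
    intro k
    induction k with
    | zero => exact fun hk => ⟨fun j => (∅, ∅), fun j => j.elim0⟩
    | succ k ih =>
      intro hk
      obtain ⟨PQ, hPQ⟩ := ih (by omega)
      set U : Finset V :=
        base ∪ Finset.biUnion Finset.univ (fun j : Fin k => (PQ j).1 ∪ (PQ j).2) with hUdef
      have hUcard : U.card ≤ (a + b) + t + t * (a + b) := by
        have h1 : (Finset.biUnion Finset.univ (fun j : Fin k => (PQ j).1 ∪ (PQ j).2)).card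
            ≤ t * (a + b) := by
          calc (Finset.biUnion Finset.univ (fun j : Fin k => (PQ j).1 ∪ (PQ j).2)).card
              ≤ ∑ j : Fin k, ((PQ j).1 ∪ (PQ j).2).card := Finset.card_biUnion_le
            _ ≤ ∑ _j : Fin k, (a + b) := by
                refine Finset.sum_le_sum fun j _ => ?_
                have h2 := Finset.card_union_le (PQ j).1 (PQ j).2
                have h3 := (hPQ j).1
                have h4 := (hPQ j).2.1
                omega
            _ = k * (a + b) := by
                rw [Finset.sum_const, Finset.card_univ, Fintype.card_fin, smul_eq_mul]
            _ ≤ t * (a + b) := Nat.mul_le_mul_right _ (by omega)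
        calc U.card ≤ base.card
              + (Finset.biUnion Finset.univ (fun j : Fin k => (PQ j).1 ∪ (PQ j).2)).card :=
            Finset.card_union_le _ _
          _ ≤ ((a + b) + t) + t * (a + b) := Nat.add_le_add hbasecard h1
      set idx : Fin t := Fin.castLE hk (Fin.last k) with hidxdef
      obtain ⟨S, T, hS, hT, hScard, hTcard, hadjST⟩ :=
        hNmain n hn V instV instD G hcardV (x idx) U hUcard (hcount idx)
      refine ⟨Fin.snoc PQ (S, T), ?_⟩
      intro j
      refine Fin.lastCases ?_ ?_ j
      · rw [Fin.snoc_last]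
        refine ⟨hScard, hTcard, ?_, hadjST, ?_⟩
        · intro w hw
          have hw' : w ∈ Stmt13Aux.nbr G (x idx) \ U := by
            rcases Finset.mem_union.1 hw with h | h
            · exact hS h
            · exact hT h
          obtain ⟨hw1, hw2⟩ := Finset.mem_sdiff.1 hw'
          exact Finset.mem_sdiff.2 ⟨hw1, fun hwb => hw2 (Finset.mem_union_left _ hwb)⟩
        · intro j' hj'
          have hj'ne : j' ≠ Fin.last k := Fin.ne_of_lt hj'
          obtain ⟨i', rfl⟩ := Fin.exists_castSucc_eq.mpr hj'ne
          rw [Fin.snoc_castSucc]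
          refine Finset.disjoint_left.2 fun {w} hw hw' => ?_
          have hw1 : w ∈ Stmt13Aux.nbr G (x idx) \ U := by
            rcases Finset.mem_union.1 hw with h | h
            · exact hS h
            · exact hT h
          have hw2 : w ∈ U := Finset.mem_union_right _
            (Finset.mem_biUnion.2 ⟨i', Finset.mem_univ _, hw'⟩)
          exact (Finset.mem_sdiff.1 hw1).2 hw2
      · intro i
        rw [Fin.snoc_castSucc]
        obtain ⟨h1, h2, h3, h4, h5⟩ := hPQ i
        have hidx2 : Fin.castLE hk i.castSucc = Fin.castLE (by omega : k ≤ t) i := by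
          apply Fin.ext; simp
        refine ⟨h1, h2, ?_, h4, ?_⟩
        · rw [hidx2]; exact h3
        · intro j' hj'
          have hj'ne : j' ≠ Fin.last k := by
            intro heq
            rw [heq] at hj'
            exact absurd hj' (not_lt.2 (Fin.le_last _))
          obtain ⟨i', rfl⟩ := Fin.exists_castSucc_eq.mpr hj'ne
          rw [Fin.snoc_castSucc]
          exact h5 i' (by exact_mod_cast hj')
  obtain ⟨PQ, hPQ⟩ := hrec t (le_refl t)
  have hPQ' : ∀ j : Fin t, ((PQ j).1.card = a - 1) ∧ ((PQ j).2.card = b) ∧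
      ((PQ j).1 ∪ (PQ j).2 ⊆ Stmt13Aux.nbr G (x j) \ base) ∧
      (∀ u ∈ (PQ j).1, ∀ w ∈ (PQ j).2, G.Adj u w) ∧
      (∀ j' : Fin t, j' < j →
        Disjoint ((PQ j).1 ∪ (PQ j).2) ((PQ j').1 ∪ (PQ j').2)) := by
    intro j
    have := hPQ j
    have hcast : Fin.castLE (le_refl t) j = j := Fin.ext rfl
    rwa [hcast] at this
  clear hPQ
  -- the t+1 copies
  set PA : Fin (t + 1) → Finset V :=
    Fin.cases S0 (fun j => insert (x j) (PQ j).1) with hPAdef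
  set PB : Fin (t + 1) → Finset V := Fin.cases T0 (fun j => (PQ j).2) with hPBdef
  have hxnotin : ∀ j : Fin t, x j ∉ (PQ j).1 ∪ (PQ j).2 := by
    intro j hmem
    have := (hPQ' j).2.2.1 hmem
    have h2 := (Finset.mem_sdiff.1 this).1
    exact G.loopless.irrefl _ (Stmt13Aux.mem_nbr.1 h2)
  have hPQbase : ∀ j : Fin t, ∀ w ∈ (PQ j).1 ∪ (PQ j).2, w ∉ base := by
    intro j w hw
    exact (Finset.mem_sdiff.1 ((hPQ' j).2.2.1 hw)).2
  have hPAcard : ∀ i, (PA i).card = a := by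
    intro i
    refine Fin.cases ?_ ?_ i
    · rw [hPAdef]; simp only [Fin.cases_zero]; exact hS0card
    · intro j
      rw [hPAdef]; simp only [Fin.cases_succ]
      rw [Finset.card_insert_of_notMem
        (fun h => hxnotin j (Finset.mem_union_left _ h)), (hPQ' j).1]
      omega
  have hPBcard : ∀ i, (PB i).card = b := by
    intro i
    refine Fin.cases ?_ ?_ i
    · rw [hPBdef]; simp only [Fin.cases_zero]; exact hT0card
    · intro j
      rw [hPBdef]; simp only [Fin.cases_succ]; exact (hPQ' j).2.1
  have hadjPAB : ∀ i, ∀ u ∈ PA i, ∀ w ∈ PB i, G.Adj u w := by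
    intro i
    refine Fin.cases ?_ ?_ i
    · rw [hPAdef, hPBdef]; simp only [Fin.cases_zero]; exact hST0adj
    · intro j
      rw [hPAdef, hPBdef]; simp only [Fin.cases_succ]
      intro u hu w hw
      rcases Finset.mem_insert.1 hu with rfl | hu'
      · have := (hPQ' j).2.2.1 (Finset.mem_union_right _ hw)
        exact Stmt13Aux.mem_nbr.1 (Finset.mem_sdiff.1 this).1
      · exact (hPQ' j).2.2.2.1 u hu' w hw
  -- pairwise disjointness of blocks
  have hblk0 : PA 0 ∪ PB 0 = S0 ∪ T0 := by
    rw [hPAdef, hPBdef]; simp only [Fin.cases_zero]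
  have hblksucc : ∀ j : Fin t, PA j.succ ∪ PB j.succ = insert (x j) ((PQ j).1 ∪ (PQ j).2) := by
    intro j
    rw [hPAdef, hPBdef]; simp only [Fin.cases_succ]
    rw [Finset.insert_union]
  have hdisj : ∀ i i' : Fin (t + 1), i ≠ i' →
      Disjoint (PA i ∪ PB i) (PA i' ∪ PB i') := by
    have hd0 : ∀ j : Fin t, Disjoint (PA 0 ∪ PB 0) (PA j.succ ∪ PB j.succ) := by
      intro j
      rw [hblk0, hblksucc]
      refine Finset.disjoint_left.2 fun {w} hw hw' => ?_
      rcases Finset.mem_insert.1 hw' with rfl | hw''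
      · exact hST0x _ hw j rfl
      · refine hPQbase j w hw'' (Finset.mem_union_left _ hw)
    have hds : ∀ j j' : Fin t, j ≠ j' →
        Disjoint (PA j.succ ∪ PB j.succ) (PA j'.succ ∪ PB j'.succ) := by
      intro j j' hne
      rw [hblksucc, hblksucc]
      refine Finset.disjoint_left.2 fun {w} hw hw' => ?_
      rcases Finset.mem_insert.1 hw with rfl | hw1
      · rcases Finset.mem_insert.1 hw' with heq | hw2
        · exact hne (hxinj heq)
        · exact hPQbase j' _ hw2 (hxbase j)
      · rcases Finset.mem_insert.1 hw' with heq | hw2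
        · exact hPQbase j _ hw1 (heq ▸ hxbase j')
        · rcases lt_trichotomy j j' with hlt | heq | hgt
          · exact Finset.disjoint_left.1 ((hPQ' j').2.2.2.2 j hlt) hw2 hw1
          · exact hne heq
          · exact Finset.disjoint_left.1 ((hPQ' j).2.2.2.2 j' hgt) hw1 hw2
    intro i i' hne
    rcases Fin.eq_zero_or_eq_succ i with rfl | ⟨j, rfl⟩ <;>
      rcases Fin.eq_zero_or_eq_succ i' with rfl | ⟨j', rfl⟩
    · exact absurd rfl hne
    · exact hd0 j'
    · exact (hd0 j).symm
    · exact hds j j' (fun h => hne (by rw [h]))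
  -- build the homomorphism
  have hdisjAB : ∀ i, Disjoint (PA i) (PB i) := by
    intro i
    refine Finset.disjoint_left.2 fun {u} hu hu' => ?_
    exact G.loopless.irrefl u (hadjPAB i u hu u hu')
  set eA : ∀ i : Fin (t + 1), {y // y ∈ PA i} ≃ Fin a :=
    fun i => Finset.equivFinOfCardEq (hPAcard i) with heAdef
  set eB : ∀ i : Fin (t + 1), {y // y ∈ PB i} ≃ Fin b :=
    fun i => Finset.equivFinOfCardEq (hPBcard i) with heBdef
  set F : Fin (t + 1) × (Fin a ⊕ Fin b) → V :=
    fun z => Sum.elim (fun p => (((eA z.1).symm p : {y // y ∈ PA z.1}) : V))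
      (fun q => (((eB z.1).symm q : {y // y ∈ PB z.1}) : V)) z.2 with hFdef
  have hmemA : ∀ i p, F (i, Sum.inl p) ∈ PA i := fun i p => ((eA i).symm p).2
  have hmemB : ∀ i q, F (i, Sum.inr q) ∈ PB i := fun i q => ((eB i).symm q).2
  have hmemblk : ∀ z : Fin (t + 1) × (Fin a ⊕ Fin b), F z ∈ PA z.1 ∪ PB z.1 := by
    rintro ⟨i, p | q⟩
    · exact Finset.mem_union_left _ (hmemA i p)
    · exact Finset.mem_union_right _ (hmemB i q)
  refine ⟨⟨F, ?_⟩, ?_⟩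
  · rintro ⟨i, w⟩ ⟨i', w'⟩ h
    obtain ⟨h1, h2⟩ := h
    dsimp only at h1
    subst h1
    rcases w with p | q <;> rcases w' with p' | q'
    · rw [completeBipartiteGraph_adj] at h2; simp at h2
    · exact hadjPAB i _ (hmemA i p) _ (hmemB i q')
    · exact (hadjPAB i _ (hmemA i p') _ (hmemB i q)).symm
    · rw [completeBipartiteGraph_adj] at h2; simp at h2
  · rintro ⟨i, w⟩ ⟨i', w'⟩ h
    have h' : F (i, w) = F (i', w') := h
    clear h
    by_cases hii : i = i'
    · subst hii
      rcases w with p | q <;> rcases w' with p' | q'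
      · have h3 : ((eA i).symm p) = ((eA i).symm p') := Subtype.coe_injective h'
        have h4 := (eA i).symm.injective h3
        rw [h4]
      · exact absurd (hmemB i q')
          (Finset.disjoint_left.1 (hdisjAB i) (h' ▸ hmemA i p))
      · exact absurd (hmemA i p')
          (Finset.disjoint_right.1 (hdisjAB i) (h' ▸ hmemB i q))
      · have h3 : ((eB i).symm q) = ((eB i).symm q') := Subtype.coe_injective h'
        have h4 := (eB i).symm.injective h3
        rw [h4]
    · exact absurd (hmemblk (i', w'))
        (Finset.disjoint_left.1 (hdisj i i' hii) (h' ▸ hmemblk (i, w)))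
end
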